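/- arXiv:1701.03614 — 13 statements merged into one kernel-verified Lean document; each statement's English description precedes it below -/
import Mathlib

section
/- Let L ∈ ℝ^{n×n} satisfy L_{ij} ≤ 0 for all i ≠ j and Σ_j L_{ij} ≥ 0 for every i (i.e., −L is a compartmental matrix). Then for every y ∈ ℝⁿ, yᵀ L sgn(y) ≥ 0, where sgn(y) ∈ {−1,0,1}ⁿ is the entrywise sign vector of y (with sgn(0) = 0). -/
open Matrix

lemma mul_sign_self (x : ℝ) : x * Real.sign x = |x| := by
  rcases lt_trichotomy x 0 with h | rfl | h
  · rw [Real.sign_of_neg h, abs_of_neg h]; ring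
  · simp
  · rw [Real.sign_of_pos h, abs_of_pos h]; ring

lemma abs_sign_le (x : ℝ) : |Real.sign x| ≤ 1 := by
  rcases Real.sign_apply_eq x with h | h | h <;> rw [h] <;> norm_num

/-- If `-L` is a compartmental matrix (off-diagonal entries of `L` nonpositive,
row sums of `L` nonnegative), then `yᵀ L sgn(y) ≥ 0` for every `y`. -/
theorem compartmental_sign_quadratic_nonneg {n : ℕ} (L : Matrix (Fin n) (Fin n) ℝ)
    (hoff : ∀ i j, i ≠ j → L i j ≤ 0)
    (hrow : ∀ i, 0 ≤ ∑ j, L i j)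
    (y : Fin n → ℝ) :
    0 ≤ ∑ i, ∑ j, y i * L i j * Real.sign (y j) := by
  have key : ∀ i j, |y i| * L i j ≤ y i * L i j * Real.sign (y j) := by
    intro i j
    rcases eq_or_ne i j with rfl | h
    · rw [mul_comm (y i) (L i i), mul_assoc, mul_sign_self, mul_comm]
    · have h1 : y i * Real.sign (y j) ≤ |y i| := by
        calc y i * Real.sign (y j) ≤ |y i * Real.sign (y j)| := le_abs_self _
        _ = |y i| * |Real.sign (y j)| := abs_mul _ _
        _ ≤ |y i| * 1 :=
            mul_le_mul_of_nonneg_left (abs_sign_le (y j)) (abs_nonneg _)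
        _ = |y i| := mul_one _
      have := mul_le_mul_of_nonpos_right h1 (hoff i j h)
      calc |y i| * L i j ≤ y i * Real.sign (y j) * L i j := this
        _ = y i * L i j * Real.sign (y j) := by ring
  calc (0:ℝ) ≤ ∑ i, |y i| * ∑ j, L i j :=
        Finset.sum_nonneg fun i _ => mul_nonneg (abs_nonneg _) (hrow i)
    _ = ∑ i, ∑ j, |y i| * L i j := by
        simp [Finset.mul_sum]
    _ ≤ ∑ i, ∑ j, y i * L i j * Real.sign (y j) :=
        Finset.sum_le_sum fun i _ => Finset.sum_le_sum fun j _ => key i j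
end

section
/- Let L ∈ ℝ^{n×n} satisfy L_{ij} ≤ 0 for all i ≠ j and Σ_j L_{ij} ≥ 0 for every i (i.e., −L is a compartmental matrix), and let u : [0,∞) → ℝⁿ be any function. If x, x̃ : [0,∞) → ℝⁿ are differentiable and satisfy ẋ(t) = u(t) − Lᵀ x(t) and ẋ̃(t) = u(t) − Lᵀ x̃(t) for all t ≥ 0, then the l1-distance t ↦ Σ_{i=1}^n |x_i(t) − x̃_i(t)| is non-increasing on [0,∞). -/
open Matrix

open NormedSpace Set

attribute [local instance] Matrix.linftyOpNormedRing Matrix.linftyOpNormedAlgebra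

variable {n : ℕ}

lemma pow_entry_nonneg {M : Matrix (Fin n) (Fin n) ℝ} (h : ∀ i j, 0 ≤ M i j) (k : ℕ) :
    ∀ i j, 0 ≤ (M ^ k) i j := by
  induction k with
  | zero => intro i j; rw [pow_zero]; simp [Matrix.one_apply]; split <;> norm_num
  | succ k ih =>
    intro i j
    rw [pow_succ, Matrix.mul_apply]
    exact Finset.sum_nonneg fun l _ => mul_nonneg (ih i l) (h l j)

lemma exp_entry_nonneg_of_nonneg {M : Matrix (Fin n) (Fin n) ℝ} (h : ∀ i j, 0 ≤ M i j)
    (i j : Fin n) : 0 ≤ exp M i j := by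
  rw [exp_eq_tsum ℝ]
  have hs : Summable fun k : ℕ => (((Nat.factorial k) : ℝ)⁻¹ • M ^ k) := expSeries_summable' M
  have h1 : (∑' k : ℕ, (((Nat.factorial k) : ℝ)⁻¹ • M ^ k)) i j
      = ∑' k : ℕ, ((((Nat.factorial k) : ℝ)⁻¹ • M ^ k) i j) := by
    exact (congrFun (tsum_apply (x := i) hs) j).trans (tsum_apply (x := j) ((Pi.summable).mp hs i))
  show 0 ≤ (∑' k : ℕ, (((Nat.factorial k) : ℝ)⁻¹ • M ^ k)) i j
  rw [h1]
  exact tsum_nonneg fun k => by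
    have := pow_entry_nonneg h k i j
    simp only [Matrix.smul_apply, smul_eq_mul]
    positivity

lemma exp_entry_nonneg_of_offdiag {M : Matrix (Fin n) (Fin n) ℝ}
    (h : ∀ i j, i ≠ j → 0 ≤ M i j) (i j : Fin n) : 0 ≤ exp M i j := by
  classical
  set c : ℝ := ∑ k, |M k k| with hc
  have habs : ∀ k, |M k k| ≤ c := fun k =>
    Finset.single_le_sum (f := fun k => |M k k|) (fun l _ => abs_nonneg _) (Finset.mem_univ k)
  have hpos : ∀ i j, 0 ≤ (M + c • (1 : Matrix (Fin n) (Fin n) ℝ)) i j := by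
    intro a b
    rcases eq_or_ne a b with rfl | hab
    · simp only [Matrix.add_apply, Matrix.smul_apply, Matrix.one_apply_eq, smul_eq_mul, mul_one]
      have := habs a
      have := neg_abs_le (M a a)
      linarith
    · simp only [Matrix.add_apply, Matrix.smul_apply, Matrix.one_apply_ne hab, smul_eq_mul,
        mul_zero, add_zero]
      exact h a b hab
  have hcomm : Commute (M + c • (1 : Matrix (Fin n) (Fin n) ℝ))
      ((-c) • (1 : Matrix (Fin n) (Fin n) ℝ)) := by
    exact (Commute.one_right _).smul_right (-c)
  have hM : M = (M + c • (1 : Matrix (Fin n) (Fin n) ℝ)) + (-c) • 1 := by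
    rw [neg_smul]; abel
  rw [hM, Matrix.exp_add_of_commute _ _ hcomm]
  have hdiag : ((-c) • (1 : Matrix (Fin n) (Fin n) ℝ)) = Matrix.diagonal (fun _ => -c) := by
    rw [Matrix.smul_one_eq_diagonal]
  rw [hdiag, Matrix.exp_diagonal, Matrix.mul_apply]
  refine Finset.sum_nonneg fun l _ => ?_
  rw [Matrix.diagonal_apply]
  split
  · refine mul_nonneg (exp_entry_nonneg_of_nonneg hpos i l) ?_
    rw [Pi.exp_def]
    exact (Real.exp_eq_exp_ℝ ▸ Real.exp_nonneg _ : (0:ℝ) ≤ exp (-c))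
  · simp

noncomputable def rowSumCLM (i : Fin n) : Matrix (Fin n) (Fin n) ℝ →L[ℝ] ℝ :=
  LinearMap.toContinuousLinearMap
    { toFun := fun M => ∑ j, M i j
      map_add' := by intros a b; simp [Matrix.add_apply, Finset.sum_add_distrib]
      map_smul' := by intros c a; simp [Matrix.smul_apply, Finset.mul_sum] }

lemma hasDerivAt_rowSum_exp (B : Matrix (Fin n) (Fin n) ℝ) (i : Fin n) (t : ℝ) :
    HasDerivAt (fun t : ℝ => ∑ j, exp (t • B) i j)
      (∑ j, (exp (t • B) * B) i j) t := by
  have h1 : HasDerivAt (fun u : ℝ => exp (u • B)) (exp (t • B) * B) t :=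
    hasDerivAt_exp_smul_const B t
  have h2 := ((rowSumCLM i).hasFDerivAt (x := exp (t • B))).comp_hasDerivAt t h1
  exact h2

lemma exp_row_sum_le_one {B : Matrix (Fin n) (Fin n) ℝ}
    (hoff : ∀ i j, i ≠ j → 0 ≤ B i j) (hrow : ∀ i, ∑ j, B i j ≤ 0)
    {τ : ℝ} (hτ : 0 ≤ τ) (i : Fin n) : ∑ j, exp (τ • B) i j ≤ 1 := by
  have hoff' : ∀ s : ℝ, 0 ≤ s → ∀ a b, a ≠ b → 0 ≤ (s • B) a b := by
    intro s hs a b hab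
    simpa using mul_nonneg hs (hoff a b hab)
  have key : AntitoneOn (fun t => ∑ j, exp (t • B) i j) (Ici (0:ℝ)) := by
    have hdiff : Differentiable ℝ (fun t => ∑ j, exp (t • B) i j) :=
      fun t => (hasDerivAt_rowSum_exp B i t).differentiableAt
    apply antitoneOn_of_deriv_nonpos (convex_Ici 0) hdiff.continuous.continuousOn
      hdiff.differentiableOn
    intro s hs
    rw [interior_Ici] at hs
    rw [(hasDerivAt_rowSum_exp B i s).deriv]
    have hE : ∀ a b, 0 ≤ exp (s • B) a b :=
      exp_entry_nonneg_of_offdiag (hoff' s (le_of_lt hs))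
    have : ∑ j, (exp (s • B) * B) i j = ∑ l, exp (s • B) i l * ∑ j, B l j := by
      simp_rw [Matrix.mul_apply, Finset.mul_sum]
      rw [Finset.sum_comm]
    rw [this]
    exact Finset.sum_nonpos fun l _ => mul_nonpos_of_nonneg_of_nonpos (hE i l) (hrow l)
  have h0 : (fun t => ∑ j, exp (t • B) i j) 0 = 1 := by
    simp [Matrix.one_apply]
  calc ∑ j, exp (τ • B) i j ≤ ∑ j, exp ((0:ℝ) • B) i j :=
        key (self_mem_Ici) hτ hτ
    _ = 1 := by simpa using h0

noncomputable def mulVecCLM (c : Fin n → ℝ) : Matrix (Fin n) (Fin n) ℝ →L[ℝ] (Fin n → ℝ) :=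
  LinearMap.toContinuousLinearMap
    { toFun := fun M => M.mulVec c
      map_add' := fun a b => Matrix.add_mulVec a b c
      map_smul' := fun r a => Matrix.smul_mulVec r a c }

/-- If `-L` is a compartmental matrix, then the `l1`-distance between any two
solutions of the affine dynamical flow network `ẋ = u(t) − Lᵀ x` is non-increasing on `[0,∞)`. -/
theorem affine_flow_network_l1_nonexpansive {n : ℕ} (L : Matrix (Fin n) (Fin n) ℝ)
    (hoff : ∀ i j, i ≠ j → L i j ≤ 0)
    (hrow : ∀ i, 0 ≤ ∑ j, L i j)
    (u x y : ℝ → Fin n → ℝ)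
    (hx : ∀ t ≥ (0 : ℝ), HasDerivAt x (u t - Lᵀ.mulVec (x t)) t)
    (hy : ∀ t ≥ (0 : ℝ), HasDerivAt y (u t - Lᵀ.mulVec (y t)) t) :
    AntitoneOn (fun t => ∑ i, |x t i - y t i|) (Set.Ici 0) := by
  intro s hs t ht hst
  simp only [Set.mem_Ici] at hs ht
  set A : Matrix (Fin n) (Fin n) ℝ := -Lᵀ with hA
  set z : ℝ → Fin n → ℝ := fun r => x r - y r with hzdef
  have hz' : ∀ r, 0 ≤ r → HasDerivAt z (A.mulVec (z r)) r := by
    intro r hr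
    have h := (hx r hr).sub (hy r hr)
    refine h.congr_deriv ?_
    simp only [hA, hzdef, Matrix.neg_mulVec, Matrix.mulVec_sub]
    abel
  set c : Fin n → ℝ := z s with hcdef
  set w : ℝ → Fin n → ℝ := fun r => (exp ((r - s) • A)).mulVec c with hwdef
  have hw' : ∀ r : ℝ, HasDerivAt w (A.mulVec (w r)) r := by
    intro r
    have h1 : HasDerivAt (fun v : ℝ => exp (v • A)) (exp ((r - s) • A) * A) (r - s) :=
      hasDerivAt_exp_smul_const A (r - s)
    have h2 : HasDerivAt (fun v : ℝ => v - s) 1 r := (hasDerivAt_id r).sub_const s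
    have h3 : HasDerivAt (fun v : ℝ => exp ((v - s) • A))
        ((1:ℝ) • (exp ((r - s) • A) * A)) r := by have := h1.scomp r h2; exact this
    rw [one_smul] at h3
    have h4 := ((mulVecCLM c).hasFDerivAt
      (x := exp ((r - s) • A))).comp_hasDerivAt r h3
    have hcomm : exp ((r - s) • A) * A = A * exp ((r - s) • A) :=
      (((Commute.refl A).smul_left (r - s)).exp_left).eq
    have h5 : (mulVecCLM c) (exp ((r - s) • A) * A) = A.mulVec (w r) := by
      show (exp ((r - s) • A) * A).mulVec c = _
      rw [hcomm, ← Matrix.mulVec_mulVec]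
    exact h4.congr_deriv h5
  have heqon : Set.EqOn z w (Set.Icc s t) := by
    set f := LinearMap.toContinuousLinearMap A.mulVecLin with hfdef
    have hfap : ∀ p : Fin n → ℝ, f p = A.mulVec p := fun p => Matrix.mulVecLin_apply A p
    apply ODE_solution_unique (v := fun _ p => f p) (K := ‖f‖₊) (fun _ => f.lipschitz)
    · intro r hr
      exact (hz' r (le_trans hs hr.1)).continuousAt.continuousWithinAt
    · intro r hr
      rw [hfap]
      exact (hz' r (le_trans hs hr.1)).hasDerivWithinAt
    · intro r hr
      exact (hw' r).continuousAt.continuousWithinAt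
    · intro r hr
      rw [hfap]
      exact (hw' r).hasDerivWithinAt
    · show z s = (exp ((s - s) • A)).mulVec c
      rw [sub_self, zero_smul, exp_zero, Matrix.one_mulVec]
  have heqt : z t = (exp ((t - s) • A)).mulVec c := heqon ⟨hst, le_refl t⟩
  set E := exp ((t - s) • A) with hEdef
  have hτ : (0:ℝ) ≤ t - s := sub_nonneg.mpr hst
  have hEnn : ∀ i j, 0 ≤ E i j := by
    apply exp_entry_nonneg_of_offdiag
    intro i j hij
    simp only [hA, Matrix.smul_apply, Matrix.neg_apply, Matrix.transpose_apply, smul_eq_mul]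
    exact mul_nonneg hτ (by linarith [hoff j i (Ne.symm hij)])
  have hcol : ∀ j, ∑ i, E i j ≤ 1 := by
    intro j
    have htrans : E = (exp ((t - s) • (-L)))ᵀ := by
      rw [hEdef, hA]
      rw [← Matrix.exp_transpose]
      congr 1
    have : ∀ i, E i j = exp ((t - s) • (-L)) j i := by
      intro i; rw [htrans]; rfl
    simp_rw [this]
    apply exp_row_sum_le_one (B := -L) _ _ hτ
    · intro a b hab
      simp only [Matrix.neg_apply]
      linarith [hoff a b hab]
    · intro a
      simp only [Matrix.neg_apply, Finset.sum_neg_distrib]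
      linarith [hrow a]
  show ∑ i, |x t i - y t i| ≤ ∑ i, |x s i - y s i|
  have hzc : ∀ i, x t i - y t i = ∑ j, E i j * c j := by
    intro i
    have : z t i = E.mulVec c i := by rw [heqt]
    simpa [hzdef, Matrix.mulVec, dotProduct] using this
  have hcs : ∀ j, x s j - y s j = c j := fun j => rfl
  calc ∑ i, |x t i - y t i| = ∑ i, |∑ j, E i j * c j| := by simp_rw [hzc]
    _ ≤ ∑ i, ∑ j, |E i j * c j| :=
        Finset.sum_le_sum fun i _ => Finset.abs_sum_le_sum_abs _ _
    _ = ∑ i, ∑ j, E i j * |c j| := by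
        simp_rw [abs_mul]
        exact Finset.sum_congr rfl fun i _ => Finset.sum_congr rfl fun j _ => by
          rw [abs_of_nonneg (hEnn i j)]
    _ = ∑ j, (∑ i, E i j) * |c j| := by
        rw [Finset.sum_comm]
        simp_rw [Finset.sum_mul]
    _ ≤ ∑ j, |c j| := Finset.sum_le_sum fun j _ =>
        mul_le_of_le_one_left (abs_nonneg _) (hcol j)
    _ = ∑ j, |x s j - y s j| := by simp_rw [hcs]
end

section
/- Let L ∈ ℝ^{n×n} satisfy L_{ij} ≤ 0 for all i ≠ j and Σ_j L_{ij} ≥ 0 for every i (i.e., −L is a compartmental matrix). Consider the digraph on nodes {1,…,n} with an edge (i,j) whenever i ≠ j and L_{ij} < 0, and let S = {i : Σ_j L_{ij} > 0}. If every node i either belongs to S or has a directed path to some node of S (i.e., −L is outflow-connected), then every complex eigenvalue of −L has strictly negative real part (−L is Hurwitz). -/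
open Matrix

/-- If `-L` is a compartmental matrix (off-diagonal entries of `L` nonpositive,
row sums of `L` nonnegative) that is outflow-connected (every node has a directed path, in the
digraph with an edge `(i,j)` whenever `i ≠ j` and `L i j < 0`, to a node with strictly positive
row sum of `L`), then every complex eigenvalue of `-L` has strictly negative real part. -/
theorem compartmental_outflow_connected_hurwitz {n : ℕ} (L : Matrix (Fin n) (Fin n) ℝ)
    (hoff : ∀ i j, i ≠ j → L i j ≤ 0)
    (hrow : ∀ i, 0 ≤ ∑ j, L i j)
    (hout : ∀ i : Fin n, ∃ j : Fin n,
      Relation.ReflTransGen (fun a b => a ≠ b ∧ L a b < 0) i j ∧ 0 < ∑ k, L j k)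
    (μ : ℂ) (v : Fin n → ℂ) (hv : v ≠ 0)
    (heig : ((-L).map Complex.ofReal).mulVec v = μ • v) :
    μ.re < 0 := by
  by_contra hμ
  push_neg at hμ
  obtain ⟨i₁, hi₁⟩ := Function.ne_iff.mp hv
  have hne : Nonempty (Fin n) := ⟨i₁⟩
  obtain ⟨i₀, hi₀⟩ := Finite.exists_max (fun i => ‖v i‖)
  set M := ‖v i₀‖ with hM
  have hMpos : 0 < M := lt_of_lt_of_le (by simpa using norm_pos_iff.mpr hi₁) (hi₀ i₁)
  have heq : ∀ i, ∑ j, (-(L i j : ℂ)) * v j = μ * v i := by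
    intro i
    have := congrFun heig i
    simpa [Matrix.mulVec, dotProduct, Matrix.map_apply, Pi.smul_apply, smul_eq_mul] using this
  have key : ∀ i, ‖v i‖ = M →
      (∑ k, L i k = 0) ∧ ∀ j, j ≠ i → L i j < 0 → ‖v j‖ = M := by
    intro i hiM
    have hsplit := Finset.add_sum_erase Finset.univ (fun j => (-(L i j : ℂ)) * v j)
      (Finset.mem_univ i)
    have h1 : ∑ j ∈ Finset.univ.erase i, (-(L i j : ℂ)) * v j = (μ + (L i i : ℂ)) * v i := by
      have h := heq i
      rw [← hsplit] at h
      linear_combination h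
    have haii : (0:ℝ) ≤ L i i := by
      have hsum := hrow i
      have hsplit2 := Finset.add_sum_erase Finset.univ (fun j => L i j) (Finset.mem_univ i)
      have hrest : ∑ j ∈ Finset.univ.erase i, L i j ≤ 0 :=
        Finset.sum_nonpos (fun j hj => hoff i j (Ne.symm (Finset.ne_of_mem_erase hj)))
      nlinarith [hsum, hsplit2]
    -- s := sum of -L i j over j ≠ i
    set s : ℝ := ∑ j ∈ Finset.univ.erase i, (-(L i j)) with hs
    have hsle : s ≤ L i i := by
      have hsum := hrow i
      have hsplit2 := Finset.add_sum_erase Finset.univ (fun j => L i j) (Finset.mem_univ i)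
      have : s = - ∑ j ∈ Finset.univ.erase i, L i j := by
        rw [hs, Finset.sum_neg_distrib]
      nlinarith [hsum, hsplit2]
    have hchain1 : L i i * M ≤ ‖(μ + (L i i : ℂ)) * v i‖ := by
      rw [norm_mul, hiM]
      have h2 : L i i ≤ ‖μ + (L i i : ℂ)‖ := by
        have := Complex.re_le_norm (μ + (L i i : ℂ))
        simp only [Complex.add_re, Complex.ofReal_re] at this
        linarith
      nlinarith
    have hchain2 : ‖(μ + (L i i : ℂ)) * v i‖
        ≤ ∑ j ∈ Finset.univ.erase i, (-(L i j)) * ‖v j‖ := by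
      rw [← h1]
      refine le_trans (norm_sum_le _ _) (le_of_eq ?_)
      refine Finset.sum_congr rfl (fun j hj => ?_)
      rw [norm_mul]
      congr 1
      rw [← Complex.ofReal_neg, Complex.norm_real, Real.norm_eq_abs, abs_of_nonneg]
      exact neg_nonneg.mpr (hoff i j (Ne.symm (Finset.ne_of_mem_erase hj)))
    have hchain3 : ∑ j ∈ Finset.univ.erase i, (-(L i j)) * ‖v j‖ ≤ s * M := by
      rw [hs, Finset.sum_mul]
      refine Finset.sum_le_sum (fun j hj => ?_)
      have h1 : (0:ℝ) ≤ -(L i j) := neg_nonneg.mpr (hoff i j (Ne.symm (Finset.ne_of_mem_erase hj)))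
      exact mul_le_mul_of_nonneg_left (hi₀ j) h1
    have hchain4 : s * M ≤ L i i * M := mul_le_mul_of_nonneg_right hsle (le_of_lt hMpos)
    have heq34 : ∑ j ∈ Finset.univ.erase i, (-(L i j)) * ‖v j‖ = s * M := by
      linarith
    have heq45 : s = L i i := by
      have : s * M = L i i * M := by linarith
      exact mul_right_cancel₀ (ne_of_gt hMpos) this
    constructor
    · have hsplit2 := Finset.add_sum_erase Finset.univ (fun j => L i j) (Finset.mem_univ i)
      have : ∑ j ∈ Finset.univ.erase i, L i j = -s := by
        rw [hs, Finset.sum_neg_distrib]; ring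
      rw [← hsplit2, this, heq45]; ring
    · intro j hji hLij
      have hzero : ∀ j ∈ Finset.univ.erase i, (-(L i j)) * (M - ‖v j‖) = 0 := by
        have hsum0 : ∑ j ∈ Finset.univ.erase i, (-(L i j)) * (M - ‖v j‖) = 0 := by
          have expand : ∑ j ∈ Finset.univ.erase i, (-(L i j)) * (M - ‖v j‖)
              = s * M - ∑ j ∈ Finset.univ.erase i, (-(L i j)) * ‖v j‖ := by
            rw [hs, Finset.sum_mul, ← Finset.sum_sub_distrib]
            exact Finset.sum_congr rfl (fun j _ => by ring)
          rw [expand, heq34]; ring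
        intro j hj
        have hnn : ∀ j ∈ Finset.univ.erase i, (0:ℝ) ≤ (-(L i j)) * (M - ‖v j‖) := by
          intro j hj
          have h1 : (0:ℝ) ≤ -(L i j) :=
            neg_nonneg.mpr (hoff i j (Ne.symm (Finset.ne_of_mem_erase hj)))
          have h2 : (0:ℝ) ≤ M - ‖v j‖ := by linarith [hi₀ j]
          positivity
        exact (Finset.sum_eq_zero_iff_of_nonneg hnn).mp hsum0 j hj
      have hj : j ∈ Finset.univ.erase i := Finset.mem_erase.mpr ⟨hji, Finset.mem_univ j⟩
      have := hzero j hj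
      have hpos : (0:ℝ) < -(L i j) := neg_pos.mpr hLij
      have : M - ‖v j‖ = 0 := by
        rcases mul_eq_zero.mp this with h | h
        · linarith
        · exact h
      linarith
  obtain ⟨j, hpath, hjpos⟩ := hout i₀
  have hmax : ∀ j, Relation.ReflTransGen (fun a b => a ≠ b ∧ L a b < 0) i₀ j →
      ‖v j‖ = M := by
    intro j hpath
    induction hpath with
    | refl => rfl
    | tail hp hstep ih => exact (key _ ih).2 _ (Ne.symm hstep.1) hstep.2
  have := (key j (hmax j hpath)).1
  linarith
end

section
/- Let L ∈ ℝ^{n×n} satisfy L_{ij} ≤ 0 for all i ≠ j and Σ_j L_{ij} ≥ 0 for every i (i.e., −L is a compartmental matrix). Consider the digraph on nodes {1,…,n} with an edge (i,j) whenever i ≠ j and L_{ij} < 0, and let S = {i : Σ_j L_{ij} > 0}. If there exists a node i that neither belongs to S nor has a directed path to any node of S (i.e., −L is not outflow-connected), then L is singular, i.e., 0 is an eigenvalue of −L, so −L is not Hurwitz. -/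
open Matrix

/-- If `-L` is a compartmental matrix (off-diagonal entries of `L` nonpositive,
row sums of `L` nonnegative) that is NOT outflow-connected, i.e. there is a node from which no
directed path (in the digraph with an edge `(i,j)` whenever `i ≠ j` and `L i j < 0`) reaches a
node with strictly positive row sum of `L`, then `L` is singular, i.e. `0` is an eigenvalue of
`-L`, so `-L` is not Hurwitz. -/
theorem compartmental_not_outflow_connected_singular {n : ℕ} (L : Matrix (Fin n) (Fin n) ℝ)
    (hoff : ∀ i j, i ≠ j → L i j ≤ 0)
    (hrow : ∀ i, 0 ≤ ∑ j, L i j)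
    (hnot : ∃ i : Fin n, ∀ j : Fin n,
      Relation.ReflTransGen (fun a b => a ≠ b ∧ L a b < 0) i j → ¬ (0 < ∑ k, L j k)) :
    L.det = 0 := by
  classical
  obtain ⟨i, hi⟩ := hnot
  set p : Fin n → Prop := fun j => Relation.ReflTransGen (fun a b => a ≠ b ∧ L a b < 0) i j
    with hp
  -- entries from reachable to non-reachable vanish
  have hzero : ∀ j k, p j → ¬ p k → L j k = 0 := by
    intro j k hj hk
    have hne : j ≠ k := by rintro rfl; exact hk hj
    rcases lt_or_eq_of_le (hoff j k hne) with hlt | heq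
    · exact absurd (hj.tail ⟨hne, hlt⟩) hk
    · exact heq
  -- row sums are zero on reachable nodes
  have hrs : ∀ j, p j → ∑ k, L j k = 0 :=
    fun j hj => le_antisymm (not_lt.mp (hi j hj)) (hrow j)
  -- the submatrix on reachable nodes
  set A : Matrix {j // p j} {j // p j} ℝ := fun a b => L a.1 b.1 with hA
  have hsum : ∀ a : {j // p j}, ∑ b : {j // p j}, A a b = ∑ k, L a.1 k := by
    intro a
    rw [← Finset.sum_subtype (Finset.univ.filter p) (fun k => by simp) (fun k => L a.1 k)]
    apply Finset.sum_subset (Finset.filter_subset _ _)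
    intro k _ hk
    simp only [Finset.mem_filter, Finset.mem_univ, true_and] at hk
    exact hzero a.1 k a.2 hk
  have hdetA : A.det = 0 := by
    rw [← Matrix.exists_mulVec_eq_zero_iff]
    refine ⟨fun _ => 1, ?_, ?_⟩
    · intro h
      have := congrFun h ⟨i, Relation.ReflTransGen.refl⟩
      simp at this
    · funext a
      simp [Matrix.mulVec, dotProduct, hsum a, hrs a.1 a.2]
  rw [← Matrix.exists_vecMul_eq_zero_iff] at hdetA
  obtain ⟨u, hu, huA⟩ := hdetA
  rw [← Matrix.exists_vecMul_eq_zero_iff]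
  refine ⟨fun j => if h : p j then u ⟨j, h⟩ else 0, ?_, ?_⟩
  · intro h
    apply hu
    funext a
    have := congrFun h a.1
    simpa [a.2] using this
  · funext k
    have key : ∀ k, (Matrix.vecMul (fun j => if h : p j then u ⟨j, h⟩ else 0) L) k
        = ∑ a : {j // p j}, u a * L a.1 k := by
      intro k
      simp only [Matrix.vecMul, dotProduct]
      calc ∑ x : Fin n, (if h : p x then u ⟨x, h⟩ else 0) * L x k
          = ∑ x ∈ Finset.univ.filter p, (if h : p x then u ⟨x, h⟩ else 0) * L x k := by
            refine (Finset.sum_subset (Finset.filter_subset _ _) ?_).symm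
            intro j _ hj
            simp only [Finset.mem_filter, Finset.mem_univ, true_and] at hj
            simp [hj]
        _ = ∑ a : {j // p j}, (if h : p a.1 then u ⟨a.1, h⟩ else 0) * L a.1 k :=
            Finset.sum_subtype _ (fun j => by simp) _
        _ = ∑ a : {j // p j}, u a * L a.1 k := by
            refine Finset.sum_congr rfl fun a _ => ?_
            rw [dif_pos a.2]
    rw [key]
    by_cases hk : p k
    · have := congrFun huA ⟨k, hk⟩
      simpa [Matrix.vecMul, dotProduct, hA] using this
    · simp only [Pi.zero_apply]
      apply Finset.sum_eq_zero
      intro a _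
      rw [hzero a.1 k a.2 hk, mul_zero]
end

section
/- Let L ∈ ℝ^{n×n} be such that −L is a compartmental and outflow-connected matrix (L_{ij} ≤ 0 for i ≠ j, Σ_j L_{ij} ≥ 0 for all i, and in the digraph with edges (i,j) whenever i ≠ j and L_{ij} < 0 every node either has strictly positive row sum of L or a directed path to such a node). Then Lᵀ is invertible and, for every constant u ∈ ℝⁿ, the point x* = (Lᵀ)⁻¹u is a globally exponentially stable equilibrium of ẋ = u − Lᵀx: there exist constants K ≥ 1 and λ > 0, depending only on L, such that every differentiable solution x : [0,∞) → ℝⁿ of ẋ(t) = u − Lᵀx(t) satisfies ‖x(t) − x*‖ ≤ K e^{−λt} ‖x(0) − x*‖ for all t ≥ 0. -/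
open Finset

open Matrix



private def Reach' {n : ℕ} (L : Matrix (Fin n) (Fin n) ℝ) : ℕ → Fin n → Prop
  | 0, i => 0 < ∑ k, L i k
  | (k+1), i => Reach' L k i ∨ ∃ j, i ≠ j ∧ L i j < 0 ∧ Reach' L k j

private lemma exists_good_w {n : ℕ} (L : Matrix (Fin n) (Fin n) ℝ)
    (hoff : ∀ i j, i ≠ j → L i j ≤ 0)
    (hrow : ∀ i, 0 ≤ ∑ j, L i j)
    (hout : ∀ i : Fin n, ∃ j : Fin n,
      Relation.ReflTransGen (fun a b => a ≠ b ∧ L a b < 0) i j ∧ 0 < ∑ k, L j k) :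
    ∃ w : Fin n → ℝ, (∀ i, 0 < w i) ∧ ∀ i, 0 < L.mulVec w i := by
  have hreach : ∀ i, ∃ k, Reach' L k i := by
    intro i
    obtain ⟨j, hpath, hpos⟩ := hout i
    induction hpath using Relation.ReflTransGen.head_induction_on with
    | refl => exact ⟨0, hpos⟩
    | head hr _ ih =>
      obtain ⟨k, hk⟩ := ih
      exact ⟨k + 1, Or.inr ⟨_, hr.1, hr.2, hk⟩⟩
  classical
  set d : Fin n → ℕ := fun i => Nat.find (hreach i) with hd
  -- the candidate weight family
  set wf : ℝ → Fin n → ℝ := fun ε i => 1 - ε ^ (d i + 1) with hwf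
  have hsum : ∀ ε i, L.mulVec (wf ε) i = (∑ j, L i j) - ∑ j, L i j * ε ^ (d j + 1) := by
    intro ε i
    simp only [mulVec, dotProduct, hwf, mul_sub, mul_one, Finset.sum_sub_distrib]
  have hc : ∀ i, ∃ ε₀, 0 < ε₀ ∧ ∀ ε : ℝ, 0 < ε → ε ≤ ε₀ → ε ≤ 1/2 → 0 < L.mulVec (wf ε) i := by
    intro i
    rcases Nat.eq_zero_or_pos (d i) with h0 | hpos'
    · -- positive row sum
      have hP : 0 < ∑ k, L i k := by
        have hspec : Reach' L (d i) i := Nat.find_spec (hreach i)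
        rw [h0] at hspec
        exact hspec
      refine ⟨(∑ k, L i k) / ((∑ j, |L i j|) + 1), by positivity, fun ε hε hε₀ hε1 => ?_⟩
      rw [hsum]
      have hB : ∑ j, L i j * ε ^ (d j + 1) ≤ ε * ∑ j, |L i j| := by
        calc ∑ j, L i j * ε ^ (d j + 1) ≤ ∑ j, |L i j| * ε := by
              refine Finset.sum_le_sum fun j _ => ?_
              calc L i j * ε ^ (d j + 1) ≤ |L i j| * ε ^ (d j + 1) := by
                    apply mul_le_mul_of_nonneg_right (le_abs_self _) (by positivity)
                _ ≤ |L i j| * ε := by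
                    apply mul_le_mul_of_nonneg_left ?_ (abs_nonneg _)
                    calc ε ^ (d j + 1) = ε * ε ^ (d j) := by ring
                      _ ≤ ε * 1 := by
                          apply mul_le_mul_of_nonneg_left ?_ hε.le
                          exact pow_le_one₀ hε.le (by linarith)
                      _ = ε := mul_one ε
          _ = ε * ∑ j, |L i j| := by rw [← Finset.sum_mul]; ring
      have : ε * ∑ j, |L i j| < ∑ k, L i k := by
        have h1 : ε * ((∑ j, |L i j|) + 1) ≤ ∑ k, L i k := by
          calc ε * ((∑ j, |L i j|) + 1) ≤ ((∑ k, L i k) / ((∑ j, |L i j|) + 1)) * ((∑ j, |L i j|) + 1) := by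
                apply mul_le_mul_of_nonneg_right hε₀ (by positivity)
            _ = ∑ k, L i k := by field_simp
        nlinarith
      linarith
    · -- there is an edge to a closer node
      obtain ⟨k, hk⟩ : ∃ k, d i = k + 1 := ⟨d i - 1, (Nat.succ_pred_eq_of_pos hpos').symm⟩
      have hstep : Reach' L (k+1) i := by
        have hspec : Reach' L (d i) i := Nat.find_spec (hreach i)
        rwa [hk] at hspec
      have hklt : k < d i := by omega
      have hnot : ¬ Reach' L k i := Nat.find_min (hreach i) hklt
      obtain ⟨j₀, hij, hneg, hrj⟩ : ∃ j, i ≠ j ∧ L i j < 0 ∧ Reach' L k j := by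
        cases hstep with
        | inl h => exact absurd h hnot
        | inr h => exact h
      have hdj : d j₀ ≤ k := Nat.find_min' (hreach j₀) hrj
      refine ⟨(-L i j₀) / (|L i i| + 1), div_pos (by linarith) (by positivity), fun ε hε hε₀ hε1 => ?_⟩
      rw [hsum]
      have hT : ∑ j, L i j * ε ^ (d j + 1) < 0 := by
        have hsplit : ∑ j, L i j * ε ^ (d j + 1)
            = L i i * ε ^ (d i + 1) + (L i j₀ * ε ^ (d j₀ + 1)
              + ∑ j ∈ (univ.erase i).erase j₀, L i j * ε ^ (d j + 1)) := by
          rw [← Finset.add_sum_erase _ _ (Finset.mem_univ i),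
            ← Finset.add_sum_erase _ _ (Finset.mem_erase.2 ⟨hij.symm, Finset.mem_univ j₀⟩)]
        have hrest : ∑ j ∈ (univ.erase i).erase j₀, L i j * ε ^ (d j + 1) ≤ 0 := by
          refine Finset.sum_nonpos fun j hj => ?_
          have hji : j ≠ i := (Finset.mem_erase.1 (Finset.mem_erase.1 hj).2).1
          exact mul_nonpos_of_nonpos_of_nonneg (hoff i j (Ne.symm hji)) (by positivity)
        have h1 : L i j₀ * ε ^ (d j₀ + 1) ≤ L i j₀ * ε ^ (d i) := by
          apply mul_le_mul_of_nonpos_left ?_ hneg.le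
          apply pow_le_pow_of_le_one hε.le (by linarith) (by omega)
        have h2 : L i i * ε ^ (d i + 1) ≤ |L i i| * (ε ^ (d i) * ε) := by
          calc L i i * ε ^ (d i + 1) ≤ |L i i| * ε ^ (d i + 1) :=
                mul_le_mul_of_nonneg_right (le_abs_self _) (by positivity)
            _ = |L i i| * (ε ^ (d i) * ε) := by ring
        have h3 : |L i i| * (ε ^ (d i) * ε) + L i j₀ * ε ^ (d i) < 0 := by
          have hεb : ε * (|L i i| + 1) ≤ -L i j₀ := by
            calc ε * (|L i i| + 1) ≤ ((-L i j₀) / (|L i i| + 1)) * (|L i i| + 1) :=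
                  mul_le_mul_of_nonneg_right hε₀ (by positivity)
              _ = -L i j₀ := by field_simp
          have hp : (0:ℝ) < ε ^ (d i) := by positivity
          calc |L i i| * (ε ^ (d i) * ε) + L i j₀ * ε ^ (d i)
              = ε ^ (d i) * (|L i i| * ε + L i j₀) := by ring
            _ < 0 := by
                apply mul_neg_of_pos_of_neg hp
                nlinarith [abs_nonneg (L i i)]
        linarith
      have := hrow i
      linarith
  choose c hc1 hc2 using hc
  set F : Finset ℝ := insert (1/2) (Finset.univ.image c) with hF
  have hFne : F.Nonempty := ⟨1/2, Finset.mem_insert_self _ _⟩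
  set ε : ℝ := F.min' hFne with hε
  have hεpos : 0 < ε := by
    have := Finset.min'_mem F hFne
    rw [← hε] at this
    rcases Finset.mem_insert.1 this with h | h
    · rw [h]; norm_num
    · obtain ⟨i, _, hi⟩ := Finset.mem_image.1 h
      rw [← hi]; exact hc1 i
  have hεhalf : ε ≤ 1/2 := Finset.min'_le _ _ (Finset.mem_insert_self _ _)
  have hεc : ∀ i, ε ≤ c i := fun i =>
    Finset.min'_le _ _ (Finset.mem_insert_of_mem (Finset.mem_image_of_mem c (Finset.mem_univ i)))
  refine ⟨wf ε, fun i => ?_, fun i => hc2 i ε hεpos (hεc i) hεhalf⟩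
  simp only [hwf]
  have : ε ^ (d i + 1) < 1 := pow_lt_one₀ hεpos.le (by linarith) (by omega)
  linarith


private lemma key_ineq {n : ℕ} (L : Matrix (Fin n) (Fin n) ℝ)
    (hoff : ∀ i j, i ≠ j → L i j ≤ 0)
    (w : Fin n → ℝ) (hw : ∀ i, 0 ≤ w i) (h : ℝ) (hh : 0 ≤ h)
    (hdiag : ∀ j, h * L j j ≤ 1) (z : Fin n → ℝ) :
    ∑ i, w i * |z i - h * Lᵀ.mulVec z i| ≤ ∑ j, (w j - h * L.mulVec w j) * |z j| := by
  classical
  set A : Fin n → Fin n → ℝ := fun i j => if j = i then 1 - h * L i i else -(h * L j i) with hA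
  have hAnn : ∀ i j, 0 ≤ A i j := by
    intro i j
    simp only [hA]
    split
    · linarith [hdiag i]
    · rename_i hne
      have := hoff j i hne
      nlinarith
  have hrepr : ∀ i, z i - h * Lᵀ.mulVec z i = ∑ j, A i j * z j := by
    intro i
    rw [← Finset.add_sum_erase _ (fun j => A i j * z j) (Finset.mem_univ i)]
    have h1 : ∀ j ∈ univ.erase i, A i j * z j = -(h * (L j i * z j)) := by
      intro j hj
      have : j ≠ i := (Finset.mem_erase.1 hj).1
      simp only [hA, if_neg this]; ring
    rw [Finset.sum_congr rfl h1]
    simp only [hA, if_pos rfl, mulVec, dotProduct, transpose_apply]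
    rw [← Finset.add_sum_erase _ (fun j => L j i * z j) (Finset.mem_univ i)]
    rw [Finset.sum_neg_distrib, ← Finset.mul_sum]
    ring
  calc ∑ i, w i * |z i - h * Lᵀ.mulVec z i|
      ≤ ∑ i, ∑ j, w i * (A i j * |z j|) := by
        refine Finset.sum_le_sum fun i _ => ?_
        rw [← Finset.mul_sum]
        apply mul_le_mul_of_nonneg_left ?_ (hw i)
        rw [hrepr i]
        calc |∑ j, A i j * z j| ≤ ∑ j, |A i j * z j| := Finset.abs_sum_le_sum_abs _ _
          _ = ∑ j, A i j * |z j| := by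
              refine Finset.sum_congr rfl fun j _ => ?_
              rw [abs_mul, abs_of_nonneg (hAnn i j)]
    _ = ∑ j, (∑ i, w i * A i j) * |z j| := by
        rw [Finset.sum_comm]
        refine Finset.sum_congr rfl fun j _ => ?_
        rw [Finset.sum_mul]
        exact Finset.sum_congr rfl fun i _ => by ring
    _ = ∑ j, (w j - h * L.mulVec w j) * |z j| := by
        refine Finset.sum_congr rfl fun j _ => ?_
        congr 1
        rw [← Finset.add_sum_erase _ (fun i => w i * A i j) (Finset.mem_univ j)]
        have h1 : ∀ i ∈ univ.erase j, w i * A i j = -(h * (L j i * w i)) := by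
          intro i hi
          have : i ≠ j := (Finset.mem_erase.1 hi).1
          simp only [hA, if_neg (Ne.symm this)]; ring
        rw [Finset.sum_congr rfl h1]
        simp only [hA, if_pos rfl, mulVec, dotProduct]
        rw [← Finset.add_sum_erase _ (fun i => L j i * w i) (Finset.mem_univ j)]
        rw [Finset.sum_neg_distrib, ← Finset.mul_sum]
        ring



/-- If `-L` is a compartmental, outflow-connected matrix, then `Lᵀ` is invertible
and for every constant inflow `u` the point `x* = (Lᵀ)⁻¹ u` is a globally exponentially stable
equilibrium of `ẋ = u − Lᵀ x`: there are `K ≥ 1` and `λ > 0`, depending only on `L`, such that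
every solution satisfies `‖x(t) − x*‖ ≤ K e^{−λt} ‖x(0) − x*‖` for all `t ≥ 0`. -/
theorem affine_flow_network_global_exponential_stability {n : ℕ}
    (L : Matrix (Fin n) (Fin n) ℝ)
    (hoff : ∀ i j, i ≠ j → L i j ≤ 0)
    (hrow : ∀ i, 0 ≤ ∑ j, L i j)
    (hout : ∀ i : Fin n, ∃ j : Fin n,
      Relation.ReflTransGen (fun a b => a ≠ b ∧ L a b < 0) i j ∧ 0 < ∑ k, L j k) :
    IsUnit Lᵀ ∧
    ∃ K ≥ (1 : ℝ), ∃ lam > (0 : ℝ), ∀ (u : Fin n → ℝ) (x : ℝ → Fin n → ℝ),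
      (∀ t ≥ (0 : ℝ), HasDerivAt x (u - Lᵀ.mulVec (x t)) t) →
      ∀ t ≥ (0 : ℝ),
        ‖x t - Lᵀ⁻¹.mulVec u‖ ≤ K * Real.exp (-lam * t) * ‖x 0 - Lᵀ⁻¹.mulVec u‖ := by
  classical
  rcases Nat.eq_zero_or_pos n with hn | hn
  · -- trivial case `n = 0`
    subst hn
    have hL1 : Lᵀ = 1 := by
      funext i j; exact i.elim0
    refine ⟨hL1 ▸ isUnit_one, 1, le_refl 1, 1, one_pos, ?_⟩
    intro u x hx t ht
    have h1 : x t - Lᵀ⁻¹.mulVec u = 0 := funext fun i => i.elim0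
    have h2 : x 0 - Lᵀ⁻¹.mulVec u = 0 := funext fun i => i.elim0
    rw [h1, h2, norm_zero]
    positivity
  · obtain ⟨w, hwpos, hLw⟩ := exists_good_w L hoff hrow hout
    have key := key_ineq L hoff w (fun i => (hwpos i).le)
    -- diagonal bound constant
    haveI : Nonempty (Fin n) := Fin.pos_iff_nonempty.1 hn
    have hne : (Finset.univ : Finset (Fin n)).Nonempty := Finset.univ_nonempty
    set S : ℝ := Finset.univ.sup' hne (fun j => |L j j|) with hS
    obtain ⟨i₀⟩ := ‹Nonempty (Fin n)›
    have hS0 : 0 ≤ S := by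
      rw [hS]; exact le_trans (abs_nonneg (L i₀ i₀)) (Finset.le_sup' (f := fun j => |L j j|) (Finset.mem_univ i₀))
    set h₀ : ℝ := (S + 1)⁻¹ with hh₀
    have h₀pos : 0 < h₀ := by positivity
    have hstep : ∀ h' : ℝ, 0 ≤ h' → h' ≤ h₀ → ∀ j, h' * L j j ≤ 1 := by
      intro h' h1 h2 j
      have hLj : L j j ≤ S + 1 := by
        have h3 : |L j j| ≤ S := by rw [hS]; exact Finset.le_sup' (f := fun j => |L j j|) (Finset.mem_univ j)
        have := le_abs_self (L j j); linarith
      calc h' * L j j ≤ h' * (S + 1) := by nlinarith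
        _ ≤ h₀ * (S + 1) := by nlinarith
        _ = 1 := by rw [hh₀]; field_simp
    have hunit : IsUnit Lᵀ := by
      have hinj : ∀ z : Fin n → ℝ, Lᵀ.mulVec z = 0 → z = 0 := by
        intro z hz
        have hk := key h₀ h₀pos.le (hstep h₀ h₀pos.le le_rfl) z
        simp only [hz, Pi.zero_apply, mul_zero, sub_zero] at hk
        have hk2 : ∑ j, (w j - h₀ * L.mulVec w j) * |z j|
            = ∑ j, w j * |z j| - h₀ * ∑ j, L.mulVec w j * |z j| := by
          rw [Finset.mul_sum, ← Finset.sum_sub_distrib]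
          exact Finset.sum_congr rfl fun j _ => by ring
        rw [hk2] at hk
        have hsum0 : ∑ j, L.mulVec w j * |z j| ≤ 0 := by nlinarith
        have hnn : ∀ j ∈ Finset.univ, 0 ≤ L.mulVec w j * |z j| :=
          fun j _ => mul_nonneg (hLw j).le (abs_nonneg _)
        have hterm := (Finset.sum_eq_zero_iff_of_nonneg hnn).1
          (le_antisymm hsum0 (Finset.sum_nonneg hnn))
        funext j
        have := hterm j (Finset.mem_univ j)
        have habs : |z j| = 0 := by
          rcases mul_eq_zero.1 this with h | h
          · exact absurd h (ne_of_gt (hLw j))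
          · exact h
        simpa [abs_eq_zero] using habs
      have hdetne : Lᵀ.det ≠ 0 := by
        intro hdet
        obtain ⟨v, hv0, hv⟩ := (Matrix.exists_mulVec_eq_zero_iff.2 hdet)
        exact hv0 (hinj v hv)
      exact (Matrix.isUnit_iff_isUnit_det _).2 (isUnit_iff_ne_zero.2 hdetne)
    refine ⟨hunit, ?_⟩
    classical
    haveI : Nonempty (Fin n) := Fin.pos_iff_nonempty.1 hn
    have hne : (Finset.univ : Finset (Fin n)).Nonempty := Finset.univ_nonempty
    set wmin : ℝ := Finset.univ.inf' hne w with hwmin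
    set Wsum : ℝ := ∑ i, w i with hWsum
    set lam : ℝ := Finset.univ.inf' hne (fun j => L.mulVec w j / w j) with hlamdef
    have hwminpos : 0 < wmin := by
      obtain ⟨i, _, hi⟩ := Finset.exists_mem_eq_inf' hne w
      rw [hwmin, hi]; exact hwpos i
    have hwminle : ∀ i, wmin ≤ w i := fun i => Finset.inf'_le _ (Finset.mem_univ i)
    have hWpos : 0 < Wsum := Finset.sum_pos (fun i _ => hwpos i) hne
    have hlampos : 0 < lam := by
      obtain ⟨i, _, hi⟩ := Finset.exists_mem_eq_inf' hne (fun j => L.mulVec w j / w j)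
      rw [hlamdef, hi]; exact div_pos (hLw i) (hwpos i)
    have hlamw : ∀ j, lam * w j ≤ L.mulVec w j := by
      intro j
      have h1 : lam ≤ L.mulVec w j / w j :=
        Finset.inf'_le (fun j => L.mulVec w j / w j) (Finset.mem_univ j)
      rw [le_div_iff₀ (hwpos j)] at h1
      linarith [h1]
    have hK1 : (1 : ℝ) ≤ Wsum / wmin := by
      rw [le_div_iff₀ hwminpos, one_mul]
      obtain ⟨i, _, hi⟩ := Finset.exists_mem_eq_inf' hne w
      calc wmin = w i := by rw [hwmin, hi]
        _ ≤ Wsum := Finset.single_le_sum (fun j _ => (hwpos j).le) (Finset.mem_univ i)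
    refine ⟨Wsum / wmin, hK1, lam, hlampos, ?_⟩
    intro u x hx t ht
    have hdetu : IsUnit Lᵀ.det := (Matrix.isUnit_iff_isUnit_det _).1 hunit
    have hu : Lᵀ.mulVec (Lᵀ⁻¹.mulVec u) = u := by
      rw [Matrix.mulVec_mulVec, Matrix.mul_nonsing_inv _ hdetu, Matrix.one_mulVec]
    set xs : Fin n → ℝ := Lᵀ⁻¹.mulVec u with hxs
    set y : ℝ → Fin n → ℝ := fun s => x s - xs with hy
    have hdy : ∀ s ≥ (0:ℝ), HasDerivAt y (-(Lᵀ.mulVec (y s))) s := by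
      intro s hs
      have h1 := (hx s hs).sub_const xs
      have h2 : -(Lᵀ.mulVec (y s)) = u - Lᵀ.mulVec (x s) := by
        rw [hy]
        show -(Lᵀ.mulVec (x s - xs)) = u - Lᵀ.mulVec (x s)
        rw [Matrix.mulVec_sub, hu, neg_sub]
      rw [h2]
      exact h1
    set f : ℝ → ℝ := fun s => ∑ i, w i * |y s i| with hf
    have hfnonneg : ∀ s, 0 ≤ f s :=
      fun s => Finset.sum_nonneg fun i _ => mul_nonneg (hwpos i).le (abs_nonneg _)
    have hfc : ContinuousOn f (Set.Icc 0 t) := by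
      apply continuousOn_finset_sum
      intro i _
      apply ContinuousOn.mul continuousOn_const
      apply ContinuousOn.abs
      have hyc : ContinuousOn y (Set.Icc 0 t) :=
        fun s hs => ((hdy s hs.1).continuousAt).continuousWithinAt
      exact (continuous_apply i).comp_continuousOn hyc
    have hgron : ∀ s ∈ Set.Icc (0:ℝ) t, f s ≤ gronwallBound (f 0) (-lam) 0 (s - 0) := by
      apply le_gronwallBound_of_liminf_deriv_right_le (f' := fun s => -lam * f s) hfc
      · -- liminf condition
        intro s hs r hr
        apply Filter.Eventually.frequently
        set v : Fin n → ℝ := -(Lᵀ.mulVec (y s)) with hv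
        set c : ℝ := (r + lam * f s) / (2 * Wsum) with hc
        have hcpos : 0 < c := by
          apply div_pos ?_ (by linarith)
          nlinarith [hr]
        have ev1 : ∀ᶠ z in nhdsWithin s (Set.Ioi s),
            ‖y z - y s - (z - s) • v‖ ≤ c * ‖z - s‖ := by
          have h1 := (hasDerivAt_iff_isLittleO.1 (hdy s hs.1)).def hcpos
          exact nhdsWithin_le_nhds h1
        have ev2 : ∀ᶠ z in nhdsWithin s (Set.Ioi s), z - s ≤ h₀ := by
          have : Set.Ioo s (s + h₀) ∈ nhdsWithin s (Set.Ioi s) :=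
            Ioo_mem_nhdsGT_of_mem ⟨le_refl s, by linarith⟩
          filter_upwards [this] with z hz
          linarith [hz.2]
        have ev3 : ∀ᶠ z in nhdsWithin s (Set.Ioi s), s < z := self_mem_nhdsWithin
        filter_upwards [ev1, ev2, ev3] with z hz1 hz2 hz3
        set h' : ℝ := z - s with hh'
        have hp : 0 < h' := by rw [hh']; linarith
        -- triangle inequality componentwise
        have tri : f z ≤ ∑ i, w i * |y s i - h' * Lᵀ.mulVec (y s) i|
            + ∑ i, w i * |(y z - y s - h' • v) i| := by
          rw [← Finset.sum_add_distrib]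
          refine Finset.sum_le_sum fun i _ => ?_
          rw [← mul_add]
          apply mul_le_mul_of_nonneg_left ?_ (hwpos i).le
          have hexp : y z i = (y s i - h' * Lᵀ.mulVec (y s) i) + (y z - y s - h' • v) i := by
            simp only [hv, Pi.sub_apply, Pi.smul_apply, Pi.neg_apply, smul_eq_mul]
            ring
          calc |y z i| = |(y s i - h' * Lᵀ.mulVec (y s) i) + (y z - y s - h' • v) i| := by
                rw [← hexp]
            _ ≤ _ := abs_add_le _ _
        have part1 : ∑ i, w i * |y s i - h' * Lᵀ.mulVec (y s) i| ≤ f s - h' * (lam * f s) := by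
          calc ∑ i, w i * |y s i - h' * Lᵀ.mulVec (y s) i|
              ≤ ∑ j, (w j - h' * L.mulVec w j) * |y s j| :=
                key h' hp.le (hstep h' hp.le hz2) (y s)
            _ = ∑ j, w j * |y s j| - h' * ∑ j, L.mulVec w j * |y s j| := by
                rw [Finset.mul_sum, ← Finset.sum_sub_distrib]
                exact Finset.sum_congr rfl fun j _ => by ring
            _ ≤ f s - h' * (lam * f s) := by
                have hlow : lam * f s ≤ ∑ j, L.mulVec w j * |y s j| := by
                  rw [hf, Finset.mul_sum]
                  refine Finset.sum_le_sum fun j _ => ?_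
                  rw [← mul_assoc]
                  exact mul_le_mul_of_nonneg_right (hlamw j) (abs_nonneg _)
                have : h' * (lam * f s) ≤ h' * ∑ j, L.mulVec w j * |y s j| :=
                  mul_le_mul_of_nonneg_left hlow hp.le
                rw [hf]
                linarith
        have part2 : ∑ i, w i * |(y z - y s - h' • v) i| ≤ Wsum * (c * h') := by
          have hb : ∀ i, |(y z - y s - h' • v) i| ≤ c * h' := by
            intro i
            calc |(y z - y s - h' • v) i| = ‖(y z - y s - h' • v) i‖ := rfl
              _ ≤ ‖y z - y s - h' • v‖ := norm_le_pi_norm _ i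
              _ ≤ c * ‖z - s‖ := hz1
              _ = c * h' := by rw [Real.norm_eq_abs, abs_of_pos hp]
          calc ∑ i, w i * |(y z - y s - h' • v) i| ≤ ∑ i, w i * (c * h') :=
                Finset.sum_le_sum fun i _ => mul_le_mul_of_nonneg_left (hb i) (hwpos i).le
            _ = Wsum * (c * h') := by rw [hWsum, Finset.sum_mul]
        have hWc : Wsum * c = (r + lam * f s) / 2 := by
          rw [hc]; field_simp
        have hfz : f z - f s ≤ h' * ((r + (-lam * f s)) / 2) := by
          have hWc2 : Wsum * (c * h') = ((r + lam * f s) / 2) * h' := by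
            rw [← mul_assoc, hWc]
          have e1 : h' * ((r + (-lam * f s)) / 2)
              = ((r + lam * f s) / 2) * h' - h' * (lam * f s) := by ring
          clear_value f lam Wsum c h' wmin
          linarith [tri, part1, part2]
        calc (z - s)⁻¹ * (f z - f s) ≤ (z - s)⁻¹ * (h' * ((r + (-lam * f s)) / 2)) := by
              apply mul_le_mul_of_nonneg_left hfz (inv_nonneg.2 hp.le)
          _ = (r + (-lam * f s)) / 2 := by
              rw [← hh', ← mul_assoc, inv_mul_cancel₀ hp.ne', one_mul]
          _ < r := by linarith
      · exact le_refl (f 0)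
      · intro s _
        linarith
    have hft : f t ≤ f 0 * Real.exp (-lam * t) := by
      have := hgron t ⟨ht, le_refl t⟩
      rwa [sub_zero, gronwallBound_ε0] at this
    show ‖y t‖ ≤ Wsum / wmin * Real.exp (-lam * t) * ‖y 0‖
    have h1 : ‖y t‖ ≤ f t / wmin := by
      rw [pi_norm_le_iff_of_nonneg (div_nonneg (hfnonneg t) hwminpos.le)]
      intro i
      rw [Real.norm_eq_abs, le_div_iff₀ hwminpos]
      calc |y t i| * wmin ≤ w i * |y t i| := by
            nlinarith [hwminle i, abs_nonneg (y t i)]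
        _ ≤ f t := Finset.single_le_sum
            (f := fun i => w i * |y t i|)
            (fun j _ => mul_nonneg (hwpos j).le (abs_nonneg _)) (Finset.mem_univ i)
    have h2 : f 0 ≤ Wsum * ‖y 0‖ := by
      rw [hWsum, Finset.sum_mul]
      refine Finset.sum_le_sum fun i _ => ?_
      apply mul_le_mul_of_nonneg_left ?_ (hwpos i).le
      rw [← Real.norm_eq_abs]
      exact norm_le_pi_norm _ i
    have hexp : (0:ℝ) < Real.exp (-lam * t) := Real.exp_pos _
    calc ‖y t‖ ≤ f t / wmin := h1
      _ ≤ f 0 * Real.exp (-lam * t) / wmin := by gcongr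
      _ ≤ Wsum * ‖y 0‖ * Real.exp (-lam * t) / wmin := by
          gcongr
      _ = Wsum / wmin * Real.exp (-lam * t) * ‖y 0‖ := by
          field_simp
end

section
/- Let R ∈ ℝ^{n×n} be substochastic (R_{ij} ≥ 0 for all i,j and Σ_j R_{ij} ≤ 1 for all i) and outflow-connected: in the digraph with an edge (i,j) whenever R_{ij} > 0, every node i either satisfies Σ_j R_{ij} < 1 or has a directed path to some node j with Σ_k R_{jk} < 1. Then every complex eigenvalue of R has modulus strictly less than 1; consequently I − R is invertible and (I − R)⁻¹ = Σ_{k=0}^∞ R^k, a matrix with nonnegative entries. -/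
open Matrix

namespace SOCaux

variable {n : ℕ}

/-- Row sums of powers of `R`. -/
noncomputable def rs (R : Matrix (Fin n) (Fin n) ℝ) (t : ℕ) (i : Fin n) : ℝ :=
  ∑ j, (R ^ t) i j

lemma pow_entry_nonneg (R : Matrix (Fin n) (Fin n) ℝ) (hnn : ∀ i j, 0 ≤ R i j) :
    ∀ t i j, 0 ≤ (R ^ t) i j := by
  intro t
  induction t with
  | zero =>
    intro i j
    rw [pow_zero, Matrix.one_apply]
    split_ifs <;> norm_num
  | succ t ih =>
    intro i j
    rw [pow_succ, Matrix.mul_apply]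
    exact Finset.sum_nonneg fun k _ => mul_nonneg (ih i k) (hnn k j)

lemma rs_zero (R : Matrix (Fin n) (Fin n) ℝ) (i : Fin n) : rs R 0 i = 1 := by
  simp [rs, Matrix.one_apply]

lemma rs_nonneg (R : Matrix (Fin n) (Fin n) ℝ) (hnn : ∀ i j, 0 ≤ R i j) (t : ℕ) (i : Fin n) :
    0 ≤ rs R t i :=
  Finset.sum_nonneg fun j _ => pow_entry_nonneg R hnn t i j

lemma rs_add (R : Matrix (Fin n) (Fin n) ℝ) (a b : ℕ) (i : Fin n) :
    rs R (a + b) i = ∑ k, (R ^ a) i k * rs R b k := by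
  unfold rs
  rw [pow_add]
  simp_rw [Matrix.mul_apply]
  rw [Finset.sum_comm]
  simp_rw [← Finset.mul_sum]

lemma rs_one_le (R : Matrix (Fin n) (Fin n) ℝ) (hsub : ∀ i, ∑ j, R i j ≤ 1) (i : Fin n) :
    rs R 1 i ≤ 1 := by
  simpa [rs, pow_one] using hsub i

lemma rs_succ_le (R : Matrix (Fin n) (Fin n) ℝ) (hnn : ∀ i j, 0 ≤ R i j)
    (hsub : ∀ i, ∑ j, R i j ≤ 1) (t : ℕ) (i : Fin n) :
    rs R (t + 1) i ≤ rs R t i := by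
  rw [rs_add R t 1 i]
  calc ∑ k, (R ^ t) i k * rs R 1 k
      ≤ ∑ k, (R ^ t) i k := by
        refine Finset.sum_le_sum fun k _ => ?_
        exact mul_le_of_le_one_right (pow_entry_nonneg R hnn t i k) (rs_one_le R hsub k)
    _ = rs R t i := rfl

lemma rs_anti (R : Matrix (Fin n) (Fin n) ℝ) (hnn : ∀ i j, 0 ≤ R i j)
    (hsub : ∀ i, ∑ j, R i j ≤ 1) (i : Fin n) {s t : ℕ} (hst : s ≤ t) :
    rs R t i ≤ rs R s i :=
  antitone_nat_of_succ_le (f := fun m => rs R m i) (fun m => rs_succ_le R hnn hsub m i) hst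

lemma rs_le_one (R : Matrix (Fin n) (Fin n) ℝ) (hnn : ∀ i j, 0 ≤ R i j)
    (hsub : ∀ i, ∑ j, R i j ≤ 1) (t : ℕ) (i : Fin n) :
    rs R t i ≤ 1 := by
  have := rs_anti R hnn hsub i (Nat.zero_le t)
  rwa [rs_zero] at this

lemma map_pow_ofReal (R : Matrix (Fin n) (Fin n) ℝ) (t : ℕ) :
    (R.map Complex.ofReal) ^ t = (R ^ t).map Complex.ofReal := by
  induction t with
  | zero =>
    ext i j
    simp [pow_zero, Matrix.one_apply, Matrix.map_apply]
    split_ifs <;> simp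
  | succ t ih =>
    rw [pow_succ, pow_succ, ih]
    ext i j
    simp [Matrix.mul_apply, Matrix.map_apply]

end SOCaux

/-- A substochastic, outflow-connected matrix `R` has all its complex eigenvalues
of modulus strictly less than `1`; consequently `I − R` is invertible and
`(I − R)⁻¹ = Σ_{k=0}^∞ R^k`, a matrix with nonnegative entries. -/
theorem substochastic_outflow_connected_spectral_radius_lt_one {n : ℕ}
    (R : Matrix (Fin n) (Fin n) ℝ)
    (hnn : ∀ i j, 0 ≤ R i j)
    (hsub : ∀ i, ∑ j, R i j ≤ 1)
    (hout : ∀ i : Fin n, ∃ j : Fin n,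
      Relation.ReflTransGen (fun a b => 0 < R a b) i j ∧ ∑ k, R j k < 1) :
    (∀ (μ : ℂ) (v : Fin n → ℂ), v ≠ 0 →
        (R.map Complex.ofReal).mulVec v = μ • v → ‖μ‖ < 1) ∧
    IsUnit (1 - R) ∧
    (∀ i j, HasSum (fun k : ℕ => (R ^ k) i j) ((1 - R)⁻¹ i j)) ∧
    (∀ i j, 0 ≤ (1 - R)⁻¹ i j) := by
  rcases Nat.eq_zero_or_pos n with hn | hn
  · subst hn
    refine ⟨?_, ?_, fun i _ => i.elim0, fun i _ => i.elim0⟩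
    · intro μ v hv _
      exact absurd (funext fun i => i.elim0) hv
    · have h1 : (1 - R) = 1 := Subsingleton.elim _ _
      rw [h1]; exact isUnit_one
  · haveI : Nonempty (Fin n) := ⟨⟨0, hn⟩⟩
    -- every node eventually has row sum < 1 in some power
    have hC : ∀ i : Fin n, ∃ m, SOCaux.rs R m i < 1 := by
      intro i
      obtain ⟨j, hpath, hj⟩ := hout i
      induction hpath using Relation.ReflTransGen.head_induction_on with
      | refl => exact ⟨1, by simpa [SOCaux.rs, pow_one] using hj⟩
      | @head a b hab hbj ih =>
        obtain ⟨m, hm⟩ := ih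
        refine ⟨m + 1, ?_⟩
        have h1 : SOCaux.rs R (m + 1) a = ∑ k, R a k * SOCaux.rs R m k := by
          have := SOCaux.rs_add R 1 m a
          rw [Nat.add_comm 1 m] at this
          simpa [pow_one] using this
        rw [h1]
        have hlt : ∑ k, R a k * SOCaux.rs R m k < ∑ k, R a k := by
          refine Finset.sum_lt_sum
            (fun k _ => mul_le_of_le_one_right (hnn a k) (SOCaux.rs_le_one R hnn hsub m k))
            ⟨b, Finset.mem_univ b, ?_⟩
          exact mul_lt_of_lt_one_right hab hm
        exact lt_of_lt_of_le hlt (hsub a)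
    choose f hf using hC
    set M : ℕ := Finset.univ.sup f + 1 with hMdef
    have hM0 : 0 < M := Nat.succ_pos _
    have hMi : ∀ i, SOCaux.rs R M i < 1 := by
      intro i
      refine lt_of_le_of_lt (SOCaux.rs_anti R hnn hsub i ?_) (hf i)
      exact le_trans (Finset.le_sup (Finset.mem_univ i)) (Nat.le_succ _)
    set c : ℝ := Finset.univ.sup' Finset.univ_nonempty (fun i => SOCaux.rs R M i) with hcdef
    have hcle : ∀ i, SOCaux.rs R M i ≤ c := fun i =>
      Finset.le_sup' (fun i => SOCaux.rs R M i) (Finset.mem_univ i)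
    have hc1 : c < 1 := (Finset.sup'_lt_iff _).mpr fun i _ => hMi i
    have hc0 : 0 ≤ c :=
      le_trans (SOCaux.rs_nonneg R hnn M (Classical.arbitrary _)) (hcle _)
    -- geometric decay of row sums
    have hck : ∀ k i, SOCaux.rs R (M * k) i ≤ c ^ k := by
      intro k
      induction k with
      | zero => intro i; simp [SOCaux.rs_zero]
      | succ k ih =>
        intro i
        have hEq : M * (k + 1) = M + M * k := by ring
        rw [hEq, SOCaux.rs_add]
        calc ∑ j, (R ^ M) i j * SOCaux.rs R (M * k) j
            ≤ ∑ j, (R ^ M) i j * c ^ k :=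
              Finset.sum_le_sum fun j _ =>
                mul_le_mul_of_nonneg_left (ih j) (SOCaux.pow_entry_nonneg R hnn M i j)
          _ = SOCaux.rs R M i * c ^ k := by rw [← Finset.sum_mul]; rfl
          _ ≤ c * c ^ k :=
              mul_le_mul_of_nonneg_right (hcle i) (pow_nonneg hc0 k)
          _ = c ^ (k + 1) := (pow_succ' c k).symm
    have hct : ∀ t i, SOCaux.rs R t i ≤ c ^ (t / M) := by
      intro t i
      refine le_trans (SOCaux.rs_anti R hnn hsub i ?_) (hck (t / M) i)
      calc M * (t / M) = t / M * M := Nat.mul_comm _ _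
        _ ≤ t := Nat.div_mul_le_self t M
    have hE : ∀ (t : ℕ) i j, (R ^ t) i j ≤ c ^ (t / M) := by
      intro t i j
      refine le_trans ?_ (hct t i)
      exact Finset.single_le_sum (fun k _ => SOCaux.pow_entry_nonneg R hnn t i k)
        (Finset.mem_univ j)
    -- summability
    haveI : NeZero M := ⟨Nat.succ_ne_zero _⟩
    have hgeo : Summable fun k : ℕ => c ^ k := summable_geometric_of_lt_one hc0 hc1
    have hprod : Summable fun p : ℕ × Fin M => c ^ p.1 := by
      refine (summable_prod_of_nonneg ?_).mpr ⟨?_, ?_⟩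
      · intro p; exact pow_nonneg hc0 _
      · intro k; exact Summable.of_finite
      · simp only [tsum_fintype, Finset.sum_const, Finset.card_univ, Fintype.card_fin,
          nsmul_eq_mul]
        exact hgeo.mul_left _
    have hg : Summable fun t : ℕ => c ^ (t / M) := by
      rw [← (Nat.divModEquiv M).symm.summable_iff]
      have heq : ((fun t : ℕ => c ^ (t / M)) ∘ (Nat.divModEquiv M).symm)
          = fun p : ℕ × Fin M => c ^ p.1 := by
        funext p
        have h1 : ((Nat.divModEquiv M).symm p : ℕ) = p.1 * M + (p.2 : ℕ) := rfl
        have h2 : (p.1 * M + (p.2 : ℕ)) / M = p.1 := by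
          rw [Nat.mul_comm p.1 M, Nat.mul_add_div hM0, Nat.div_eq_of_lt p.2.is_lt, Nat.add_zero]
        simp only [Function.comp_apply, h1, h2]
      rw [heq]
      exact hprod
    have hb : ∀ i j, Summable fun t : ℕ => (R ^ t) i j := fun i j =>
      Summable.of_nonneg_of_le (fun t => SOCaux.pow_entry_nonneg R hnn t i j)
        (fun t => hE t i j) hg
    -- the Neumann sum
    set S : Matrix (Fin n) (Fin n) ℝ := Matrix.of (fun i j => ∑' t : ℕ, (R ^ t) i j)
      with hSdef
    have hSapp : ∀ i j, S i j = ∑' t : ℕ, (R ^ t) i j := fun i j => rfl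
    have hkey : ∀ i j, ∑ k, R i k * S k j = ∑' t : ℕ, (R ^ (t + 1)) i j := by
      intro i j
      have h1 : ∀ k, R i k * S k j = ∑' t : ℕ, R i k * (R ^ t) k j := by
        intro k; rw [hSapp, tsum_mul_left]
      calc ∑ k, R i k * S k j = ∑ k, ∑' t : ℕ, R i k * (R ^ t) k j :=
            Finset.sum_congr rfl fun k _ => h1 k
        _ = ∑' t : ℕ, ∑ k, R i k * (R ^ t) k j :=
            (Summable.tsum_finsetSum fun k _ => (hb k j).mul_left (R i k)).symm
        _ = ∑' t : ℕ, (R ^ (t + 1)) i j := by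
            refine tsum_congr fun t => ?_
            rw [pow_succ', Matrix.mul_apply]
    have hmulS : (1 - R) * S = 1 := by
      ext i j
      rw [Matrix.mul_apply]
      have : ∀ k, (1 - R) i k * S k j = (1 : Matrix (Fin n) (Fin n) ℝ) i k * S k j
          - R i k * S k j := by
        intro k; rw [Matrix.sub_apply, sub_mul]
      rw [Finset.sum_congr rfl fun k _ => this k, Finset.sum_sub_distrib]
      have h1 : ∑ k, (1 : Matrix (Fin n) (Fin n) ℝ) i k * S k j = S i j := by
        simp [Matrix.one_apply]
      rw [h1, hkey]
      have h2 : S i j = (R ^ 0) i j + ∑' t : ℕ, (R ^ (t + 1)) i j := by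
        rw [hSapp]; exact Summable.tsum_eq_zero_add (hb i j)
      rw [h2]
      simp [Matrix.one_apply]
    have hSmul : S * (1 - R) = 1 := mul_eq_one_comm.mp hmulS
    have hUnit : IsUnit (1 - R) := ⟨⟨1 - R, S, hmulS, hSmul⟩, rfl⟩
    have hinv : (1 - R)⁻¹ = S := Matrix.inv_eq_right_inv hmulS
    refine ⟨?_, hUnit, ?_, ?_⟩
    · -- eigenvalue bound
      intro μ v hv hev
      have hAt : ∀ t : ℕ, ((R.map Complex.ofReal) ^ t).mulVec v = (μ ^ t) • v := by
        intro t
        induction t with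
        | zero => simp
        | succ t ih =>
          rw [pow_succ', ← Matrix.mulVec_mulVec, ih, Matrix.mulVec_smul, hev, smul_smul,
            ← pow_succ]
      obtain ⟨i0, -, hmax⟩ := Finset.exists_max_image Finset.univ
        (fun i => ‖v i‖) ⟨Classical.arbitrary _, Finset.mem_univ _⟩
      have hvi0 : 0 < ‖v i0‖ := by
        obtain ⟨k, hk⟩ := Function.ne_iff.mp hv
        have : 0 < ‖v k‖ := by
          exact norm_pos_iff.mpr hk
        exact lt_of_lt_of_le this (hmax k (Finset.mem_univ k))
      have hcomp := congrFun (hAt M) i0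
      have hlhs : ((μ ^ M) • v) i0 = μ ^ M * v i0 := rfl
      rw [hlhs, SOCaux.map_pow_ofReal] at hcomp
      have habs : ‖μ ^ M‖ * ‖v i0‖ ≤ c * ‖v i0‖ := by
        calc ‖μ ^ M‖ * ‖v i0‖
            = ‖μ ^ M * v i0‖ := (norm_mul _ _).symm
          _ = ‖∑ j, ((R ^ M) i0 j : ℂ) * v j‖ := by
              rw [← hcomp]
              rfl
          _ ≤ ∑ j, ‖((R ^ M) i0 j : ℂ) * v j‖ :=
              norm_sum_le _ _
          _ = ∑ j, (R ^ M) i0 j * ‖v j‖ := by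
              refine Finset.sum_congr rfl fun j _ => ?_
              rw [norm_mul, Complex.norm_of_nonneg (SOCaux.pow_entry_nonneg R hnn M i0 j)]
          _ ≤ ∑ j, (R ^ M) i0 j * ‖v i0‖ :=
              Finset.sum_le_sum fun j _ =>
                mul_le_mul_of_nonneg_left (hmax j (Finset.mem_univ j))
                  (SOCaux.pow_entry_nonneg R hnn M i0 j)
          _ = SOCaux.rs R M i0 * ‖v i0‖ := by rw [← Finset.sum_mul]; rfl
          _ ≤ c * ‖v i0‖ :=
              mul_le_mul_of_nonneg_right (hcle i0) (norm_nonneg _)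
      have hpowle : ‖μ‖ ^ M ≤ c := by
        rw [norm_pow] at habs
        exact le_of_mul_le_mul_right habs hvi0
      by_contra hcon
      push_neg at hcon
      have h1 : (1 : ℝ) ≤ ‖μ‖ ^ M := one_le_pow₀ hcon
      linarith
    · intro i j
      rw [hinv]
      exact (hb i j).hasSum
    · intro i j
      rw [hinv]
      exact tsum_nonneg fun t => SOCaux.pow_entry_nonneg R hnn t i j
end

section
/- Let R ∈ ℝ^{n×n} be substochastic (R_{ij} ≥ 0 for all i,j and Σ_j R_{ij} ≤ 1 for all i) and outflow-connected (in the digraph with an edge (i,j) whenever R_{ij} > 0, every node i either satisfies Σ_j R_{ij} < 1 or has a directed path to some node j with Σ_k R_{jk} < 1), and let u ∈ ℝⁿ be entrywise nonnegative. If an index i is such that either u_i > 0 or there exist an index h with u_h > 0 and a directed path from h to i in the digraph with edges {(j,k) : R_{jk} > 0}, then the i-th entry of z* = (I − Rᵀ)⁻¹ u is strictly positive. -/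
open Matrix

/-- Auxiliary: minimum-principle. If `c = v + R c` with `v ≥ 0` and `R` substochastic
outflow-connected, then `c ≥ 0`. -/
lemma substoch_nonneg_sol {n : ℕ} (R : Matrix (Fin n) (Fin n) ℝ)
    (hnn : ∀ i j, 0 ≤ R i j)
    (hsub : ∀ i, ∑ j, R i j ≤ 1)
    (hout : ∀ i : Fin n, ∃ j : Fin n,
      Relation.ReflTransGen (fun a b => 0 < R a b) i j ∧ ∑ k, R j k < 1)
    (v c : Fin n → ℝ) (hv : ∀ i, 0 ≤ v i)
    (hc : ∀ i, c i = v i + ∑ j, R i j * c j) :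
    ∀ i, 0 ≤ c i := by
  by_contra hcon
  push_neg at hcon
  obtain ⟨i0, hi0⟩ := hcon
  have hne : (Finset.univ : Finset (Fin n)).Nonempty := ⟨i0, Finset.mem_univ i0⟩
  set m : ℝ := Finset.univ.inf' hne c with hm
  have hmle : ∀ j, m ≤ c j := fun j => Finset.inf'_le c (Finset.mem_univ j)
  have hmneg : m < 0 := lt_of_le_of_lt (hmle i0) hi0
  have key : ∀ a, c a = m → (¬ (∑ k, R a k < 1)) ∧ ∀ j, 0 < R a j → c j = m := by
    intro a ha
    have hsum0 : ∀ j ∈ Finset.univ, 0 ≤ R a j * (c j - m) := by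
      intro j _
      exact mul_nonneg (hnn a j) (sub_nonneg.2 (hmle j))
    have hval : ∑ j, R a j * (c j - m) = m - v a - (∑ j, R a j) * m := by
      simp only [mul_sub]
      rw [Finset.sum_sub_distrib, ← Finset.sum_mul]
      have h1 : ∑ j, R a j * c j = c a - v a := by linarith [hc a]
      rw [h1, ha]
      try ring
    have hle0 : ∑ j, R a j * (c j - m) ≤ 0 := by
      rw [hval]
      have h1 : m * (1 - ∑ j, R a j) ≤ 0 :=
        mul_nonpos_of_nonpos_of_nonneg (le_of_lt hmneg) (by linarith [hsub a])
      have h2 : 0 ≤ v a := hv a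
      nlinarith
    have heq0 : ∑ j, R a j * (c j - m) = 0 :=
      le_antisymm hle0 (Finset.sum_nonneg hsum0)
    have hterm : ∀ j ∈ Finset.univ, R a j * (c j - m) = 0 :=
      (Finset.sum_eq_zero_iff_of_nonneg hsum0).1 heq0
    constructor
    · intro hlt
      have hvnn : 0 ≤ v a := hv a
      have h0 : m - v a - (∑ j, R a j) * m = 0 := by rw [← hval, heq0]
      nlinarith
    · intro j hj
      have h1 := hterm j (Finset.mem_univ j)
      have h2 : c j - m = 0 := by
        rcases mul_eq_zero.1 h1 with h | h
        · exact absurd h (ne_of_gt hj)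
        · exact h
      linarith
  obtain ⟨a0, ha0⟩ := Finset.exists_mem_eq_inf' hne c
  obtain ⟨j, hpath, hdef⟩ := hout a0
  have hcj : c j = m := by
    clear hdef
    induction hpath with
    | refl => exact ha0.2.symm
    | tail hp he ih => exact (key _ ih).2 _ he
  exact (key j hcj).1 hdef

/-- For a substochastic, outflow-connected matrix `R` and a nonnegative vector `u`,
if an index `i` satisfies `u i > 0` or is reachable by a directed path (in the digraph with an
edge `(j,k)` whenever `R j k > 0`) from some index `h` with `u h > 0`, then the `i`-th entry of
`z* = (I − Rᵀ)⁻¹ u` is strictly positive. -/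
theorem inflow_connected_equilibrium_entry_pos {n : ℕ}
    (R : Matrix (Fin n) (Fin n) ℝ)
    (hnn : ∀ i j, 0 ≤ R i j)
    (hsub : ∀ i, ∑ j, R i j ≤ 1)
    (hout : ∀ i : Fin n, ∃ j : Fin n,
      Relation.ReflTransGen (fun a b => 0 < R a b) i j ∧ ∑ k, R j k < 1)
    (u : Fin n → ℝ) (hu : ∀ i, 0 ≤ u i)
    (i : Fin n)
    (hi : 0 < u i ∨ ∃ h : Fin n, 0 < u h ∧
      Relation.TransGen (fun a b => 0 < R a b) h i) :
    0 < (1 - Rᵀ)⁻¹.mulVec u i := by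
  -- invertibility of 1 - R via injectivity of mulVec
  have hker : ∀ x : Fin n → ℝ, (1 - R).mulVec x = 0 → x = 0 := by
    intro x hx
    have hrec : ∀ a, x a = (0 : Fin n → ℝ) a + ∑ j, R a j * x j := by
      intro a
      have h0 := congrFun hx a
      simp only [Matrix.mulVec, dotProduct, Matrix.sub_apply, Matrix.one_apply,
        sub_mul, ite_mul, one_mul, zero_mul, Finset.sum_sub_distrib, Finset.sum_ite_eq,
        Finset.mem_univ, if_true, Pi.zero_apply] at h0
      simp only [Pi.zero_apply, zero_add]
      linarith [h0]
    have h1 := substoch_nonneg_sol R hnn hsub hout 0 x (fun _ => le_refl 0) hrec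
    have h2 := substoch_nonneg_sol R hnn hsub hout 0 (-x) (fun _ => le_refl 0) ?_
    · funext a
      exact le_antisymm (by simpa using h2 a) (h1 a)
    · intro a
      have h0 := hrec a
      simp only [Pi.neg_apply, Pi.zero_apply, zero_add] at h0 ⊢
      have hneg : ∑ j, R a j * -x j = -∑ j, R a j * x j := by
        simp [mul_neg]
      rw [hneg]
      linarith [h0]
  have hinj : Function.Injective (1 - R).mulVec := by
    intro x y hxy
    have : (1 - R).mulVec (x - y) = 0 := by
      rw [Matrix.mulVec_sub, hxy, sub_self]
    have := hker _ this
    exact sub_eq_zero.1 (by simpa using this)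
  have hUnit : IsUnit (1 - R) := Matrix.mulVec_injective_iff_isUnit.1 hinj
  set B : Matrix (Fin n) (Fin n) ℝ := (1 - R)⁻¹ with hBdef
  have hB : (1 - R) * B = 1 :=
    Matrix.mul_nonsing_inv _ ((Matrix.isUnit_iff_isUnit_det _).1 hUnit)
  -- the column i of B
  set c : Fin n → ℝ := fun h => B h i with hcdef
  set v : Fin n → ℝ := fun a => if a = i then 1 else 0 with hvdef
  have hvnn : ∀ a, 0 ≤ v a := by intro a; simp [hvdef]; split <;> norm_num
  have hrec : ∀ a, c a = v a + ∑ j, R a j * c j := by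
    intro a
    have := congrFun (congrFun hB a) i
    simp only [Matrix.mul_apply, Matrix.sub_apply, Matrix.one_apply, sub_mul] at this
    rw [Finset.sum_sub_distrib] at this
    have hL : ∑ k, (if a = k then (1:ℝ) else 0) * B k i = c a := by
      simp [hcdef]
    rw [hL] at this
    have h2 : ∑ x, R a x * B x i = ∑ x, R a x * c x := rfl
    rw [h2] at this
    have h3 : v a = if a = i then 1 else 0 := rfl
    rw [h3]
    linarith [this]
  have hcnn : ∀ a, 0 ≤ c a := substoch_nonneg_sol R hnn hsub hout v c hvnn hrec
  have hci : 1 ≤ c i := by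
    have := hrec i
    have hs : 0 ≤ ∑ j, R i j * c j :=
      Finset.sum_nonneg fun j _ => mul_nonneg (hnn i j) (hcnn j)
    simp [hvdef] at this
    linarith
  have hprop : ∀ a b, 0 < R a b → 0 < c b → 0 < c a := by
    intro a b hab hb
    have hs : R a b * c b ≤ ∑ j, R a j * c j :=
      Finset.single_le_sum (fun j _ => mul_nonneg (hnn a j) (hcnn j)) (Finset.mem_univ b)
    have := hrec a
    have := hvnn a
    nlinarith
  -- rewrite the goal
  have hT : (1 - Rᵀ)⁻¹ = Bᵀ := by
    rw [hBdef, Matrix.transpose_nonsing_inv]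
    congr 1
    simp [Matrix.transpose_sub]
  rw [hT]
  have hgoal : Bᵀ.mulVec u i = ∑ h, B h i * u h := by
    simp [Matrix.mulVec, dotProduct, Matrix.transpose_apply]
  rw [hgoal]
  have hterms : ∀ h ∈ Finset.univ, 0 ≤ B h i * u h :=
    fun h _ => mul_nonneg (hcnn h) (hu h)
  rcases hi with hui | ⟨h, huh, hpath⟩
  · exact Finset.sum_pos' hterms ⟨i, Finset.mem_univ i,
      mul_pos (lt_of_lt_of_le one_pos hci) hui⟩
  · have hcipos : 0 < c i := lt_of_lt_of_le one_pos hci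
    have hreach : ∀ a, Relation.TransGen (fun a b => 0 < R a b) a i → 0 < c a := by
      intro a hp
      induction hp using Relation.TransGen.head_induction_on with
      | single hab => exact hprop _ _ hab hcipos
      | head hab _ ihh => exact hprop _ _ hab ihh
    exact Finset.sum_pos' hterms ⟨h, Finset.mem_univ h, mul_pos (hreach h hpath) huh⟩
end

section
/- Let D ⊆ ℝⁿ be open and convex, and let f : D → ℝⁿ be continuously differentiable such that for every x ∈ D the transpose of the Jacobian of f at x is a compartmental matrix, i.e., ∂f_i/∂x_j(x) ≥ 0 for all i ≠ j and Σ_{i=1}^n ∂f_i/∂x_j(x) ≤ 0 for all j. Let u : [0,∞) → ℝⁿ be any function and let x, x̃ : [0,∞) → D be differentiable with ẋ(t) = u(t) + f(x(t)) and ẋ̃(t) = u(t) + f(x̃(t)) for all t ≥ 0. Then the l1-distance t ↦ Σ_{i=1}^n |x_i(t) − x̃_i(t)| is non-increasing on [0,∞). -/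
set_option maxHeartbeats 1000000

open Matrix

private lemma sign_mul_self_eq_abs {r : ℝ} (hr : r ≠ 0) : Real.sign r * r = |r| := by
  rcases lt_or_gt_of_ne hr with h | h
  · rw [Real.sign_of_neg h, abs_of_neg h]; ring
  · rw [Real.sign_of_pos h, abs_of_pos h]; ring

/-- Pure algebra: compartmental transposed matrix gives nonpositive "sign pairing". -/
private lemma key_alg {n : ℕ} (A : Fin n → Fin n → ℝ) (e : Fin n → ℝ)
    (hM : ∀ i j, i ≠ j → 0 ≤ A i j) (hc : ∀ j, ∑ i, A i j ≤ 0) :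
    ∑ i, (if e i = 0 then |∑ j, e j * A i j| else Real.sign (e i) * ∑ j, e j * A i j) ≤ 0 := by
  have step1 : ∀ i, (if e i = 0 then |∑ j, e j * A i j| else Real.sign (e i) * ∑ j, e j * A i j)
      ≤ ∑ j, (if e i = 0 then (if i = j then 0 else A i j * |e j|)
              else Real.sign (e i) * (e j * A i j)) := by
    intro i
    by_cases hei : e i = 0
    · simp only [hei, if_true]
      have h1 : (∑ j, e j * A i j) = ∑ j, (if i = j then 0 else e j * A i j) := by
        refine Finset.sum_congr rfl fun j _ => ?_
        by_cases hij : i = j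
        · subst hij; simp [hei]
        · simp [hij]
      rw [h1]
      refine (Finset.abs_sum_le_sum_abs _ _).trans (Finset.sum_le_sum fun j _ => ?_)
      by_cases hij : i = j
      · simp [hij]
      · simp only [if_neg hij]
        rw [abs_mul, abs_of_nonneg (hM i j hij), mul_comm]
    · simp only [if_neg hei, Finset.mul_sum]
      exact le_of_eq rfl
  refine (Finset.sum_le_sum fun i _ => step1 i).trans ?_
  rw [Finset.sum_comm]
  have step2 : ∀ j, (∑ i, (if e i = 0 then (if i = j then 0 else A i j * |e j|)
      else Real.sign (e i) * (e j * A i j))) ≤ ∑ i, |e j| * A i j := by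
    intro j
    refine Finset.sum_le_sum fun i _ => ?_
    by_cases hei : e i = 0
    · by_cases hij : i = j
      · subst hij; simp [hei]
      · simp [hei, hij, mul_comm]
    · by_cases hij : i = j
      · subst hij
        simp only [if_neg hei]
        rw [show Real.sign (e i) * (e i * A i i) = (Real.sign (e i) * e i) * A i i by ring,
          sign_mul_self_eq_abs hei]
      · simp only [if_neg hei]
        have hA := hM i j hij
        rcases lt_or_gt_of_ne hei with h | h
        · rw [Real.sign_of_neg h]
          nlinarith [neg_abs_le (e j), le_abs_self (e j)]
        · rw [Real.sign_of_pos h]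
          nlinarith [neg_abs_le (e j), le_abs_self (e j)]
  refine (Finset.sum_le_sum fun j _ => step2 j).trans ?_
  refine Finset.sum_nonpos fun j _ => ?_
  rw [← Finset.mul_sum]
  have := hc j
  nlinarith [abs_nonneg (e j)]

/-- Right derivative of the absolute value of a differentiable function. -/
private lemma abs_right_deriv {w : ℝ → ℝ} {d t : ℝ} (h : HasDerivAt w d t) :
    HasDerivWithinAt (fun s => |w s|)
      (if w t = 0 then |d| else Real.sign (w t) * d) (Set.Ici t) t := by
  by_cases hwt : w t = 0
  · simp only [hwt, if_true]
    rw [hasDerivWithinAt_iff_tendsto_slope, Set.Ici_sdiff_left]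
    have hslope : Filter.Tendsto (slope w t) (nhdsWithin t (Set.Ioi t)) (nhds d) := by
      rw [hasDerivAt_iff_tendsto_slope] at h
      exact h.mono_left (nhdsWithin_mono t fun s hs => ne_of_gt hs)
    have habs : Filter.Tendsto (fun s => |slope w t s|) (nhdsWithin t (Set.Ioi t)) (nhds |d|) :=
      (continuous_abs.continuousAt.tendsto.comp hslope)
    refine habs.congr' ?_
    filter_upwards [self_mem_nhdsWithin] with s hs
    have hst : (0:ℝ) < s - t := sub_pos.2 hs
    simp only [slope_def_field, hwt, sub_zero, abs_zero]
    rw [abs_div, abs_of_pos hst]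
  · have hsgn : Real.sign (w t) * d = (if w t = 0 then |d| else Real.sign (w t) * d) := by
      rw [if_neg hwt]
    rcases lt_or_gt_of_ne hwt with hneg | hpos
    · have hev : ∀ᶠ s in nhds t, w s < 0 :=
        h.continuousAt.eventually_mem (isOpen_Iio.mem_nhds hneg)
      have heq : (fun s => |w s|) =ᶠ[nhds t] fun s => -w s := by
        filter_upwards [hev] with s hs using abs_of_neg hs
      have : HasDerivAt (fun s => |w s|) (-d) t := h.neg.congr_of_eventuallyEq heq
      rw [if_neg hwt, Real.sign_of_neg hneg]
      simpa using this.hasDerivWithinAt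
    · have hev : ∀ᶠ s in nhds t, 0 < w s :=
        h.continuousAt.eventually_mem (isOpen_Ioi.mem_nhds hpos)
      have heq : (fun s => |w s|) =ᶠ[nhds t] w := by
        filter_upwards [hev] with s hs using abs_of_pos hs
      have : HasDerivAt (fun s => |w s|) d t := h.congr_of_eventuallyEq heq
      rw [if_neg hwt, Real.sign_of_pos hpos]
      simpa using this.hasDerivWithinAt

private lemma clm_apply_eq_sum {n : ℕ} (L : (Fin n → ℝ) →L[ℝ] (Fin n → ℝ))
    (w : Fin n → ℝ) (i : Fin n) : L w i = ∑ j, w j * L (Pi.single j 1) i := by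
  have hw : w = ∑ j, w j • (Pi.single j 1 : Fin n → ℝ) := by
    funext k
    simp [Finset.sum_apply, Pi.single_apply]
  conv_lhs => rw [hw]
  rw [map_sum]
  simp [Finset.sum_apply]

/-- The key inequality along a segment. -/
private lemma key_ineq_s8 {n : ℕ}
    (D : Set (Fin n → ℝ)) (hDopen : IsOpen D) (hDconv : Convex ℝ D)
    (f : (Fin n → ℝ) → (Fin n → ℝ))
    (hf : ContDiffOn ℝ 1 f D)
    (hMetzler : ∀ x ∈ D, ∀ i j, i ≠ j → 0 ≤ fderiv ℝ f x (Pi.single j 1) i)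
    (hcol : ∀ x ∈ D, ∀ j, ∑ i, fderiv ℝ f x (Pi.single j 1) i ≤ 0)
    (a b : Fin n → ℝ) (ha : a ∈ D) (hb : b ∈ D) :
    ∑ i, (if a i - b i = 0 then |f a i - f b i|
          else Real.sign (a i - b i) * (f a i - f b i)) ≤ 0 := by
  set v : Fin n → ℝ := a - b with hv
  set γ : ℝ → (Fin n → ℝ) := fun s => b + s • v with hγ
  have hγD : ∀ s ∈ Set.Icc (0:ℝ) 1, γ s ∈ D := fun s hs =>
    hDconv.add_smul_sub_mem hb ha hs
  have hγ0 : γ 0 = b := by simp [hγ]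
  have hγ1 : γ 1 = a := by simp [hγ, hv]
  have hγcont : Continuous γ := continuous_const.add (continuous_id.smul continuous_const)
  have hfd : ∀ s ∈ Set.Icc (0:ℝ) 1, HasDerivAt (fun s => f (γ s)) (fderiv ℝ f (γ s) v) s := by
    intro s hs
    have hDf : DifferentiableAt ℝ f (γ s) :=
      (hf.contDiffAt (hDopen.mem_nhds (hγD s hs))).differentiableAt one_ne_zero
    have hγ' : HasDerivAt γ v s := by
      simpa [hγ] using ((hasDerivAt_id s).smul_const v).const_add b
    exact hDf.hasFDerivAt.comp_hasDerivAt s hγ'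
  have hcontA : ContinuousOn (fun s => fderiv ℝ f (γ s)) (Set.Icc (0:ℝ) 1) :=
    (hf.continuousOn_fderiv_of_isOpen hDopen le_rfl).comp hγcont.continuousOn hγD
  have hcontF : ∀ i, ContinuousOn (fun s => fderiv ℝ f (γ s) v i) (Set.Icc (0:ℝ) 1) := by
    intro i
    exact (continuous_apply i).comp_continuousOn (hcontA.clm_apply continuousOn_const)
  have hintF : ∀ i, IntervalIntegrable (fun s => fderiv ℝ f (γ s) v i) MeasureTheory.volume 0 1 :=
    fun i => ((hcontF i).mono (by rw [Set.uIcc_of_le zero_le_one])).intervalIntegrable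
  have hFTC : ∀ i, f a i - f b i = ∫ s in (0:ℝ)..1, fderiv ℝ f (γ s) v i := by
    intro i
    have := intervalIntegral.integral_eq_sub_of_hasDerivAt (f := fun s => f (γ s) i)
      (f' := fun s => fderiv ℝ f (γ s) v i)
      (fun s hs => by
        rw [Set.uIcc_of_le zero_le_one] at hs
        exact hasDerivAt_pi.1 (hfd s hs) i) (hintF i)
    rw [this]; simp [hγ0, hγ1]
  -- per-index bound by an integral
  have hχint : ∀ i, IntervalIntegrable
      (fun s => if a i - b i = 0 then |fderiv ℝ f (γ s) v i|
        else Real.sign (a i - b i) * fderiv ℝ f (γ s) v i) MeasureTheory.volume 0 1 := by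
    intro i
    by_cases hei : a i - b i = 0
    · simp only [hei, if_true]
      exact (hintF i).abs
    · simp only [if_neg hei]
      exact (hintF i).const_mul _
  have step1 : ∀ i, (if a i - b i = 0 then |f a i - f b i|
        else Real.sign (a i - b i) * (f a i - f b i))
      ≤ ∫ s in (0:ℝ)..1, (if a i - b i = 0 then |fderiv ℝ f (γ s) v i|
        else Real.sign (a i - b i) * fderiv ℝ f (γ s) v i) := by
    intro i
    by_cases hei : a i - b i = 0
    · simp only [hei, if_true]
      rw [hFTC i]
      exact intervalIntegral.abs_integral_le_integral_abs zero_le_one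
    · simp only [if_neg hei]
      rw [hFTC i, ← intervalIntegral.integral_const_mul]
  refine (Finset.sum_le_sum fun i _ => step1 i).trans ?_
  rw [← intervalIntegral.integral_finset_sum (fun i _ => hχint i)]
  have hpt : ∀ s ∈ Set.Icc (0:ℝ) 1,
      (∑ i, (if a i - b i = 0 then |fderiv ℝ f (γ s) v i|
        else Real.sign (a i - b i) * fderiv ℝ f (γ s) v i)) ≤ 0 := by
    intro s hs
    have hmem := hγD s hs
    have hrw : ∀ i, fderiv ℝ f (γ s) v i
        = ∑ j, (a j - b j) * fderiv ℝ f (γ s) (Pi.single j 1) i := by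
      intro i
      rw [clm_apply_eq_sum]
      exact Finset.sum_congr rfl fun j _ => by rw [hv]; rfl
    calc (∑ i, (if a i - b i = 0 then |fderiv ℝ f (γ s) v i|
          else Real.sign (a i - b i) * fderiv ℝ f (γ s) v i))
        = ∑ i, (if a i - b i = 0 then |∑ j, (a j - b j) * fderiv ℝ f (γ s) (Pi.single j 1) i|
          else Real.sign (a i - b i) * ∑ j, (a j - b j) * fderiv ℝ f (γ s) (Pi.single j 1) i) := by
          exact Finset.sum_congr rfl fun i _ => by rw [hrw i]
      _ ≤ 0 := key_alg (fun i j => fderiv ℝ f (γ s) (Pi.single j 1) i) (fun i => a i - b i)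
          (fun i j hij => hMetzler _ hmem i j hij) (fun j => hcol _ hmem j)
  calc (∫ s in (0:ℝ)..1, ∑ i, (if a i - b i = 0 then |fderiv ℝ f (γ s) v i|
        else Real.sign (a i - b i) * fderiv ℝ f (γ s) v i))
      ≤ ∫ s in (0:ℝ)..1, (0:ℝ) := by
        have heq : (fun s => ∑ i, (if a i - b i = 0 then |fderiv ℝ f (γ s) v i|
            else Real.sign (a i - b i) * fderiv ℝ f (γ s) v i))
            = ∑ i, (fun s => if a i - b i = 0 then |fderiv ℝ f (γ s) v i|
            else Real.sign (a i - b i) * fderiv ℝ f (γ s) v i) := by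
          funext s; rw [Finset.sum_apply]
        have hint : IntervalIntegrable (fun s => ∑ i, (if a i - b i = 0 then |fderiv ℝ f (γ s) v i|
            else Real.sign (a i - b i) * fderiv ℝ f (γ s) v i)) MeasureTheory.volume 0 1 := by
          rw [heq]
          exact IntervalIntegrable.sum Finset.univ (fun i _ => hχint i)
        exact intervalIntegral.integral_mono_on zero_le_one hint intervalIntegrable_const hpt
    _ = 0 := by simp

/-- If `f` is continuously differentiable on an open convex set `D` with
compartmental transposed Jacobian everywhere on `D`, then the `l1`-distance between any two
solutions of the monotone dynamical flow network `ẋ = u(t) + f(x)` staying in `D` is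
non-increasing on `[0,∞)`. -/
theorem monotone_flow_network_l1_nonexpansive {n : ℕ}
    (D : Set (Fin n → ℝ)) (hDopen : IsOpen D) (hDconv : Convex ℝ D)
    (f : (Fin n → ℝ) → (Fin n → ℝ))
    (hf : ContDiffOn ℝ 1 f D)
    (hMetzler : ∀ x ∈ D, ∀ i j, i ≠ j → 0 ≤ fderiv ℝ f x (Pi.single j 1) i)
    (hcol : ∀ x ∈ D, ∀ j, ∑ i, fderiv ℝ f x (Pi.single j 1) i ≤ 0)
    (u x y : ℝ → Fin n → ℝ)
    (hxD : ∀ t ≥ (0 : ℝ), x t ∈ D) (hyD : ∀ t ≥ (0 : ℝ), y t ∈ D)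
    (hx : ∀ t ≥ (0 : ℝ), HasDerivAt x (u t + f (x t)) t)
    (hy : ∀ t ≥ (0 : ℝ), HasDerivAt y (u t + f (y t)) t) :
    AntitoneOn (fun t => ∑ i, |x t i - y t i|) (Set.Ici 0) := by
  intro a haI b hbI hab
  simp only
  have ha0 : (0:ℝ) ≤ a := haI
  -- component derivatives
  have hcomp : ∀ t, 0 ≤ t → ∀ i,
      HasDerivAt (fun s => x s i - y s i) (f (x t) i - f (y t) i) t := by
    intro t ht i
    have h1 := hasDerivAt_pi.1 (hx t ht) i
    have h2 := hasDerivAt_pi.1 (hy t ht) i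
    have := h1.fun_sub h2
    simpa [Pi.add_apply] using this
  set L : ℝ → ℝ := fun t => ∑ i, (if x t i - y t i = 0 then |f (x t) i - f (y t) i|
    else Real.sign (x t i - y t i) * (f (x t) i - f (y t) i)) with hL
  have hgderiv : ∀ t ∈ Set.Ico a b,
      HasDerivWithinAt (fun s => ∑ i, |x s i - y s i|) (L t) (Set.Ici t) t := by
    intro t ht
    have ht0 : (0:ℝ) ≤ t := le_trans ha0 ht.1
    exact HasDerivWithinAt.fun_sum fun i _ => abs_right_deriv (hcomp t ht0 i)
  have hL0 : ∀ t ∈ Set.Ico a b, L t ≤ 0 := by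
    intro t ht
    have ht0 : (0:ℝ) ≤ t := le_trans ha0 ht.1
    exact key_ineq_s8 D hDopen hDconv f hf hMetzler hcol (x t) (y t) (hxD t ht0) (hyD t ht0)
  have hgcont : ContinuousOn (fun s => ∑ i, |x s i - y s i|) (Set.Icc a b) := by
    intro t ht
    have ht0 : (0:ℝ) ≤ t := le_trans ha0 ht.1
    have : ContinuousAt (fun s => ∑ i, |x s i - y s i|) t :=
      tendsto_finset_sum _ fun i _ => (hcomp t ht0 i).continuousAt.abs
    exact this.continuousWithinAt
  have key := image_le_of_deriv_right_le_deriv_boundary hgcont hgderiv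
    (le_refl ((fun s => ∑ i, |x s i - y s i|) a)) continuousOn_const
    (fun s _ => (hasDerivWithinAt_const s (Set.Ici s) _))
    hL0
  exact key ⟨hab, le_rfl⟩
end

section
/- Let D ⊆ ℝⁿ be open and convex, let f : D → ℝⁿ be continuously differentiable such that for every x ∈ D the transpose of the Jacobian of f at x is a compartmental matrix (∂f_i/∂x_j(x) ≥ 0 for all i ≠ j and Σ_{i=1}^n ∂f_i/∂x_j(x) ≤ 0 for all j), let u ∈ ℝⁿ be constant, and let x* ∈ D be an equilibrium, i.e., u + f(x*) = 0. Then every differentiable solution x : [0,∞) → D of ẋ(t) = u + f(x(t)) satisfies Σ_{i=1}^n |x_i(t) − x*_i| ≤ Σ_{i=1}^n |x_i(0) − x*_i| for all t ≥ 0; in particular, the equilibrium x* is Lyapunov stable. -/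
open Matrix Set Filter Topology

private lemma sign_mul_eq_abs (v : ℝ) : Real.sign v * v = |v| := by
  rcases lt_trichotomy v 0 with h | h | h
  · rw [Real.sign_of_neg h, abs_of_neg h]; ring
  · simp [h]
  · rw [Real.sign_of_pos h, abs_of_pos h]; ring

private lemma abs_sign_le_one (v : ℝ) : |Real.sign v| ≤ 1 := by
  rcases lt_trichotomy v 0 with h | h | h
  · rw [Real.sign_of_neg h]; norm_num
  · simp [h, Real.sign_zero]
  · rw [Real.sign_of_pos h]; norm_num

/-- Key pointwise algebraic lemma: if the matrix of `L` (transposed Jacobian) is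
compartmental, then for any `v` and any sign-like vector `ε` we have
`∑ i, ε i * (L v) i ≤ 0`. -/
private lemma key_sum_nonpos {n : ℕ} (L : (Fin n → ℝ) →L[ℝ] (Fin n → ℝ))
    (hM : ∀ i j, i ≠ j → 0 ≤ L (Pi.single j 1) i)
    (hc : ∀ j, ∑ i, L (Pi.single j 1) i ≤ 0)
    (v ε : Fin n → ℝ) (hεv : ∀ i, ε i * v i = |v i|) (hε1 : ∀ i, |ε i| ≤ 1) :
    ∑ i, ε i * L v i ≤ 0 := by
  have hv : v = ∑ j, Pi.single j (v j) := by
    ext k; simp [Finset.sum_apply, Pi.single_apply]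
  have hLv : ∀ i, L v i = ∑ j, v j * L (Pi.single j 1) i := by
    intro i
    conv_lhs => rw [hv]
    rw [map_sum]
    rw [Finset.sum_apply]
    refine Finset.sum_congr rfl fun j _ => ?_
    have hsingle : (Pi.single j (v j) : Fin n → ℝ) = v j • (Pi.single j (1:ℝ) : Fin n → ℝ) := by
      funext k
      by_cases hk : k = j <;> simp [Pi.single_apply, hk]
    rw [hsingle, _root_.map_smul]
    simp [smul_eq_mul]
  calc ∑ i, ε i * L v i = ∑ j, ∑ i, ε i * (v j * L (Pi.single j 1) i) := by
        rw [Finset.sum_comm]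
        refine Finset.sum_congr rfl fun i _ => ?_
        rw [hLv i, Finset.mul_sum]
    _ ≤ 0 := by
        refine Finset.sum_nonpos fun j _ => ?_
        have hterm : ∀ i, ε i * (v j * L (Pi.single j 1) i) ≤ |v j| * L (Pi.single j 1) i := by
          intro i
          rcases eq_or_ne i j with rfl | hij
          · rw [← mul_assoc, hεv i]
          · have h1 : ε i * v j ≤ |v j| := by
              calc ε i * v j ≤ |ε i * v j| := le_abs_self _
                _ = |ε i| * |v j| := abs_mul _ _
                _ ≤ 1 * |v j| := by
                    exact mul_le_mul_of_nonneg_right (hε1 i) (abs_nonneg _)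
                _ = |v j| := one_mul _
            calc ε i * (v j * L (Pi.single j 1) i) = (ε i * v j) * L (Pi.single j 1) i := by ring
              _ ≤ |v j| * L (Pi.single j 1) i :=
                  mul_le_mul_of_nonneg_right h1 (hM i j hij)
        calc ∑ i, ε i * (v j * L (Pi.single j 1) i)
            ≤ ∑ i, |v j| * L (Pi.single j 1) i := Finset.sum_le_sum fun i _ => hterm i
          _ = |v j| * ∑ i, L (Pi.single j 1) i := by rw [Finset.mul_sum]
          _ ≤ 0 := mul_nonpos_of_nonneg_of_nonpos (abs_nonneg _) (hc j)

/-- Mean-value version along a segment: for `a b ∈ D`,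
`∑ i, ε i * (f b i - f a i) ≤ 0` for any sign-like vector for `b - a`. -/
private lemma seg_sum_nonpos {n : ℕ} {D : Set (Fin n → ℝ)} (hDopen : IsOpen D)
    (hDconv : Convex ℝ D) {f : (Fin n → ℝ) → (Fin n → ℝ)}
    (hf : ContDiffOn ℝ 1 f D)
    (hMetzler : ∀ x ∈ D, ∀ i j, i ≠ j → 0 ≤ fderiv ℝ f x (Pi.single j 1) i)
    (hcol : ∀ x ∈ D, ∀ j, ∑ i, fderiv ℝ f x (Pi.single j 1) i ≤ 0)
    {a b : Fin n → ℝ} (ha : a ∈ D) (hb : b ∈ D) (ε : Fin n → ℝ)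
    (hεv : ∀ i, ε i * (b i - a i) = |b i - a i|) (hε1 : ∀ i, |ε i| ≤ 1) :
    ∑ i, ε i * (f b i - f a i) ≤ 0 := by
  set v : Fin n → ℝ := b - a with hvdef
  set γ : ℝ → (Fin n → ℝ) := fun s => a + s • v with hγdef
  have hmem : ∀ s ∈ Icc (0:ℝ) 1, γ s ∈ D := by
    intro s hs
    have := hDconv ha hb (by linarith [hs.2] : (0:ℝ) ≤ 1 - s) hs.1 (by ring)
    convert this using 1
    simp only [hγdef, hvdef]
    funext k
    simp [Pi.sub_apply, Pi.smul_apply, smul_eq_mul]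
    ring
  have hdiff : ∀ y ∈ D, DifferentiableAt ℝ f y := fun y hy =>
    (hf.contDiffAt (hDopen.mem_nhds hy)).differentiableAt one_ne_zero
  have hγ : ∀ s : ℝ, HasDerivAt γ v s := by
    intro s
    have h1 : HasDerivAt (fun s : ℝ => s • v) ((1:ℝ) • v) s :=
      (hasDerivAt_id s).smul_const v
    simpa [hγdef] using h1.const_add a
  have hcomp : ∀ s ∈ Icc (0:ℝ) 1,
      HasDerivAt (fun s => f (γ s)) (fderiv ℝ f (γ s) v) s := by
    intro s hs
    exact ((hdiff _ (hmem s hs)).hasFDerivAt).comp_hasDerivAt s (hγ s)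
  have hcompi : ∀ i, ∀ s ∈ Icc (0:ℝ) 1,
      HasDerivAt (fun s => f (γ s) i) (fderiv ℝ f (γ s) v i) s := by
    intro i s hs
    have := (ContinuousLinearMap.proj (R := ℝ) (φ := fun _ : Fin n => ℝ)
      i).hasFDerivAt.comp_hasDerivAt s (hcomp s hs)
    exact this
  -- continuity of the integrand
  have hfderiv_cont : ContinuousOn (fderiv ℝ f) D :=
    hf.continuousOn_fderiv_of_isOpen hDopen le_rfl
  have hγcont : ContinuousOn γ (Icc 0 1) := by
    intro s _; exact (hγ s).continuousAt.continuousWithinAt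
  have hcont1 : ContinuousOn (fun s => fderiv ℝ f (γ s)) (Icc (0:ℝ) 1) :=
    hfderiv_cont.comp hγcont (fun s hs => hmem s hs)
  have hcont2 : ∀ i, ContinuousOn (fun s => fderiv ℝ f (γ s) v i) (Icc (0:ℝ) 1) := by
    intro i
    have h2 : ContinuousOn (fun s => fderiv ℝ f (γ s) v) (Icc (0:ℝ) 1) :=
      hcont1.clm_apply continuousOn_const
    exact (continuous_apply i).comp_continuousOn h2
  have hint : ∀ i, IntervalIntegrable (fun s => fderiv ℝ f (γ s) v i)
      MeasureTheory.volume 0 1 := by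
    intro i
    apply ContinuousOn.intervalIntegrable
    rw [uIcc_of_le (by norm_num : (0:ℝ) ≤ 1)]
    exact hcont2 i
  have hFTC : ∀ i, ∫ s in (0:ℝ)..1, fderiv ℝ f (γ s) v i = f b i - f a i := by
    intro i
    have := intervalIntegral.integral_eq_sub_of_hasDerivAt
      (f := fun s => f (γ s) i) (f' := fun s => fderiv ℝ f (γ s) v i)
      (fun s hs => hcompi i s (by rwa [uIcc_of_le (by norm_num : (0:ℝ) ≤ 1)] at hs))
      (hint i)
    have hγ0 : γ 0 = a := by simp [hγdef]
    have hγ1 : γ 1 = b := by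
      funext k
      simp only [hγdef, hvdef, Pi.add_apply, Pi.smul_apply, Pi.sub_apply, smul_eq_mul, one_mul]
      ring
    rw [this]
    simp only [hγ0, hγ1]
  have key : ∀ s ∈ Icc (0:ℝ) 1, ∑ i, ε i * fderiv ℝ f (γ s) v i ≤ 0 := by
    intro s hs
    exact key_sum_nonpos (fderiv ℝ f (γ s)) (hMetzler _ (hmem s hs))
      (hcol _ (hmem s hs)) v ε (by simpa [hvdef] using hεv) hε1
  calc ∑ i, ε i * (f b i - f a i)
      = ∑ i, ∫ s in (0:ℝ)..1, ε i * fderiv ℝ f (γ s) v i := by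
        refine Finset.sum_congr rfl fun i _ => ?_
        rw [intervalIntegral.integral_const_mul, hFTC i]
    _ = ∫ s in (0:ℝ)..1, ∑ i, ε i * fderiv ℝ f (γ s) v i := by
        rw [intervalIntegral.integral_finset_sum]
        intro i _
        exact (hint i).const_mul (ε i)
    _ ≤ 0 := by
        have hneg : (0:ℝ) ≤ ∫ s in (0:ℝ)..1, -(∑ i, ε i * fderiv ℝ f (γ s) v i) :=
          intervalIntegral.integral_nonneg (by norm_num)
            (fun s hs => neg_nonneg.2 (key s hs))
        rw [intervalIntegral.integral_neg] at hneg
        linarith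

/-- If `f` is continuously differentiable on an open convex set `D` with
compartmental transposed Jacobian everywhere on `D`, `u` is a constant inflow and `x* ∈ D` is an
equilibrium (`u + f(x*) = 0`), then every solution of `ẋ = u + f(x)` staying in `D` satisfies
`Σ_i |x_i(t) − x*_i| ≤ Σ_i |x_i(0) − x*_i|` for all `t ≥ 0`; in particular `x*` is Lyapunov
stable (in the `l1`-norm). -/
theorem monotone_flow_network_equilibrium_stable {n : ℕ}
    (D : Set (Fin n → ℝ)) (hDopen : IsOpen D) (hDconv : Convex ℝ D)
    (f : (Fin n → ℝ) → (Fin n → ℝ))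
    (hf : ContDiffOn ℝ 1 f D)
    (hMetzler : ∀ x ∈ D, ∀ i j, i ≠ j → 0 ≤ fderiv ℝ f x (Pi.single j 1) i)
    (hcol : ∀ x ∈ D, ∀ j, ∑ i, fderiv ℝ f x (Pi.single j 1) i ≤ 0)
    (u : Fin n → ℝ) (xstar : Fin n → ℝ) (hxstarD : xstar ∈ D)
    (heq : u + f xstar = 0) :
    (∀ x : ℝ → Fin n → ℝ, (∀ t ≥ (0 : ℝ), x t ∈ D) →
      (∀ t ≥ (0 : ℝ), HasDerivAt x (u + f (x t)) t) →
      ∀ t ≥ (0 : ℝ), ∑ i, |x t i - xstar i| ≤ ∑ i, |x 0 i - xstar i|) ∧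
    (∀ ε > (0 : ℝ), ∃ δ > (0 : ℝ), ∀ x : ℝ → Fin n → ℝ, (∀ t ≥ (0 : ℝ), x t ∈ D) →
      (∀ t ≥ (0 : ℝ), HasDerivAt x (u + f (x t)) t) →
      ∑ i, |x 0 i - xstar i| < δ → ∀ t ≥ (0 : ℝ), ∑ i, |x t i - xstar i| < ε) := by
  have hu : u = -f xstar := by
    funext k
    have hk : u k + f xstar k = 0 := congrFun heq k
    simp only [Pi.neg_apply]
    linarith
  have main : ∀ x : ℝ → Fin n → ℝ, (∀ t ≥ (0 : ℝ), x t ∈ D) →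
      (∀ t ≥ (0 : ℝ), HasDerivAt x (u + f (x t)) t) →
      ∀ t ≥ (0 : ℝ), ∑ i, |x t i - xstar i| ≤ ∑ i, |x 0 i - xstar i| := by
    intro x hxD hx' T hT
    set V : ℝ → ℝ := fun z => ∑ i, |x z i - xstar i| with hVdef
    rcases eq_or_lt_of_le hT with rfl | hT
    · exact le_rfl
    -- continuity of V on [0, T]
    have hVcont : ContinuousOn V (Icc 0 T) := by
      apply continuousOn_finset_sum
      intro i _
      apply ContinuousOn.abs
      apply ContinuousOn.sub _ continuousOn_const
      intro z hz
      exact ((continuous_apply i).continuousAt.comp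
        (hx' z hz.1).continuousAt).continuousWithinAt
    -- the slope bound
    have bound : ∀ s ∈ Ico (0:ℝ) T, ∀ r : ℝ, (0:ℝ) < r →
        ∃ᶠ z in 𝓝[>] s, slope V s z < r := by
      intro s hs r hr
      set w : Fin n → ℝ := u + f (x s) with hwdef
      have hw : w = f (x s) - f xstar := by
        rw [hwdef, hu]; funext k; simp; ring
      set v : Fin n → ℝ := fun i => x s i - xstar i with hvdef
      set ε : Fin n → ℝ := fun i => if v i ≠ 0 then Real.sign (v i) else Real.sign (w i)
        with hεdef
      have hεv : ∀ i, ε i * v i = |v i| := by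
        intro i
        by_cases h : v i = 0
        · simp [hεdef, h]
        · simp only [hεdef, h, if_pos, ne_eq, not_false_eq_true, if_true]
          exact sign_mul_eq_abs (v i)
      have hε1 : ∀ i, |ε i| ≤ 1 := by
        intro i
        by_cases h : v i = 0 <;> simp [hεdef, h, abs_sign_le_one]
      have hS : ∑ i, ε i * w i ≤ 0 := by
        have := seg_sum_nonpos hDopen hDconv hf hMetzler hcol hxstarD (hxD s hs.1)
          ε (by intro i; simpa [hvdef] using hεv i) hε1
        calc ∑ i, ε i * w i = ∑ i, ε i * (f (x s) i - f xstar i) := by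
              refine Finset.sum_congr rfl fun i _ => ?_
              rw [hw]; simp
          _ ≤ 0 := this
      -- derivative of coordinates
      have hyi : ∀ i, HasDerivAt (fun z => x z i - xstar i) (w i) s := by
        intro i
        have h0 := (ContinuousLinearMap.proj (R := ℝ) (φ := fun _ : Fin n => ℝ)
          i).hasFDerivAt.comp_hasDerivAt s (hx' s hs.1)
        simpa [hwdef] using h0.sub_const (xstar i)
      -- slope of each |y_i| tends to ε i * w i along 𝓝[>] s
      have hterm : ∀ i, Tendsto (fun z => slope (fun z => |x z i - xstar i|) s z)
          (𝓝[>] s) (𝓝 (ε i * w i)) := by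
        intro i
        have hslope : Tendsto (slope (fun z => x z i - xstar i) s) (𝓝[≠] s)
            (𝓝 (w i)) := hasDerivAt_iff_tendsto_slope.1 (hyi i)
        have hslope' : Tendsto (slope (fun z => x z i - xstar i) s) (𝓝[>] s)
            (𝓝 (w i)) := hslope.mono_left (nhdsWithin_mono s fun z hz => ne_of_gt hz)
        by_cases h : v i = 0
        · -- limit is |w i| = ε i * w i
          have heps : ε i * w i = |w i| := by
            simp only [hεdef, h, ne_eq, not_true_eq_false, if_false]
            exact sign_mul_eq_abs (w i)
          rw [heps]
          have habs : Tendsto (fun z => |slope (fun z => x z i - xstar i) s z|)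
              (𝓝[>] s) (𝓝 |w i|) := hslope'.abs
          refine habs.congr' ?_
          filter_upwards [self_mem_nhdsWithin] with z hz
          have hzs : (0:ℝ) < z - s := sub_pos.2 hz
          have hys : x s i - xstar i = 0 := h
          simp only [slope_def_field]
          rw [hys, sub_zero, abs_zero, sub_zero, abs_div, abs_of_pos hzs]
        · -- limit is sign(v i) * w i
          have heps : ε i = Real.sign (v i) := by simp [hεdef, h]
          have hcont : ContinuousAt (fun z => x z i - xstar i) s :=
            (hyi i).continuousAt
          rcases lt_or_gt_of_ne h with hneg | hpos
          · -- v i < 0 : |y| = -y near s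
            have hneg' : x s i - xstar i < 0 := hneg
            have hev : ∀ᶠ z in 𝓝 s, x z i - xstar i < 0 :=
              hcont.tendsto.eventually_lt_const hneg'
            have heq2 : (fun z => slope (fun z => |x z i - xstar i|) s z) =ᶠ[𝓝[>] s]
                (fun z => -slope (fun z => x z i - xstar i) s z) := by
              filter_upwards [nhdsWithin_le_nhds hev] with z hz
              simp only [slope_def_field]
              rw [abs_of_neg hz, abs_of_neg hneg']
              ring
            have : Tendsto (fun z => -slope (fun z => x z i - xstar i) s z)
                (𝓝[>] s) (𝓝 (-w i)) := hslope'.neg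
            have heq3 : ε i * w i = -w i := by
              rw [heps, Real.sign_of_neg hneg]; ring
            rw [heq3]
            exact this.congr' heq2.symm
          · have hpos' : 0 < x s i - xstar i := hpos
            have hev : ∀ᶠ z in 𝓝 s, 0 < x z i - xstar i :=
              hcont.tendsto.eventually_const_lt hpos'
            have heq2 : (fun z => slope (fun z => |x z i - xstar i|) s z) =ᶠ[𝓝[>] s]
                (fun z => slope (fun z => x z i - xstar i) s z) := by
              filter_upwards [nhdsWithin_le_nhds hev] with z hz
              simp only [slope_def_field]
              rw [abs_of_pos hz, abs_of_pos hpos']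
            have heq3 : ε i * w i = w i := by
              rw [heps, Real.sign_of_pos hpos]; ring
            rw [heq3]
            exact hslope'.congr' heq2.symm
      -- slope of V is the sum of slopes
      have hsum : Tendsto (fun z => slope V s z) (𝓝[>] s) (𝓝 (∑ i, ε i * w i)) := by
        have := tendsto_finset_sum Finset.univ (fun i _ => hterm i)
        refine this.congr fun z => ?_
        simp only [slope_def_field, hVdef]
        rw [← Finset.sum_div, Finset.sum_sub_distrib]
      have hlt : ∀ᶠ z in 𝓝[>] s, slope V s z < r :=
        hsum.eventually (gt_mem_nhds (lt_of_le_of_lt hS hr))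
      exact hlt.frequently
    -- apply the fencing lemma with constant boundary
    have happ := image_le_of_liminf_slope_right_le_deriv_boundary
      (f := V) (a := 0) (b := T) hVcont (B := fun _ => V 0) (B' := fun _ => 0)
      le_rfl continuousOn_const (fun z _ => hasDerivWithinAt_const z _ (V 0))
      bound
    exact happ ⟨le_of_lt hT, le_rfl⟩
  refine ⟨main, ?_⟩
  intro ε hε
  refine ⟨ε, hε, ?_⟩
  intro x hxD hx' h0 t ht
  exact lt_of_le_of_lt (main x hxD hx' t ht) h0
end

section
/- Let D ⊆ ℝⁿ be open and convex and let f : D → ℝⁿ be continuously differentiable with a Metzler Jacobian on D, i.e., ∂f_i/∂x_j(x) ≥ 0 for all i ≠ j and all x ∈ D. Let u, ũ : [0,∞) → ℝⁿ be continuous with u(t) ≤ ũ(t) entrywise for all t, and let x, x̃ : [0,∞) → D be differentiable with ẋ(t) = u(t) + f(x(t)) and ẋ̃(t) = ũ(t) + f(x̃(t)). If x(0) ≤ x̃(0) entrywise, then x(t) ≤ x̃(t) entrywise for all t ≥ 0. -/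
open Matrix

open Set

lemma hasDerivAt_posPartSq (r : ℝ) :
    HasDerivAt (fun s : ℝ => (max s 0) ^ 2) (2 * max r 0) r := by
  rcases lt_trichotomy r 0 with h | h | h
  · have this' : HasDerivAt (fun _ : ℝ => (0:ℝ)) 0 r := hasDerivAt_const _ _
    have heq : (fun s : ℝ => (max s 0) ^ 2) =ᶠ[nhds r] (fun _ : ℝ => (0:ℝ)) := by
      filter_upwards [eventually_lt_nhds h] with s hs
      simp [max_eq_right hs.le]
    rw [max_eq_right h.le, mul_zero]
    exact this'.congr_of_eventuallyEq heq
  · subst h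
    rw [max_self, mul_zero]
    rw [hasDerivAt_iff_isLittleO]
    apply Asymptotics.isLittleO_iff.2
    intro c hc
    have hev : ∀ᶠ s in nhds (0:ℝ), |s - 0| < c := eventually_abs_sub_lt (0:ℝ) hc
    filter_upwards [hev] with s hs
    simp only [sub_zero, max_self, smul_zero, sub_zero] at *
    have h1 : |max s 0| ≤ |s| := by
      rcases le_total s 0 with h | h <;> simp [max_eq_right, max_eq_left, h, abs_of_nonpos, abs_of_nonneg]
    calc ‖(max s 0) ^ 2 - 0 ^ 2‖ = |max s 0| ^ 2 := by norm_num [Real.norm_eq_abs, abs_pow]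
      _ ≤ |s| * |s| := by rw [sq]; exact mul_le_mul h1 h1 (abs_nonneg _) (abs_nonneg _)
      _ ≤ c * ‖s‖ := by rw [Real.norm_eq_abs]; exact mul_le_mul_of_nonneg_right hs.le (abs_nonneg _)
  · have hd : HasDerivAt (fun s : ℝ => s ^ 2) (2 * r) r := by simpa using (hasDerivAt_pow 2 r)
    have heq : (fun s : ℝ => (max s 0) ^ 2) =ᶠ[nhds r] (fun s : ℝ => s ^ 2) := by
      filter_upwards [eventually_gt_nhds h] with s hs
      simp [max_eq_left hs.le]
    rw [max_eq_left h.le]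
    exact hd.congr_of_eventuallyEq heq

lemma mvt_aux {φ φ' : ℝ → ℝ} {B : ℝ}
    (hφ : ∀ s ∈ Icc (0:ℝ) 1, HasDerivAt φ (φ' s) s)
    (hB : ∀ s ∈ Icc (0:ℝ) 1, φ' s ≤ B) : φ 1 - φ 0 ≤ B := by
  set ψ : ℝ → ℝ := fun s => φ s - s * B with hψ
  have hd : ∀ s ∈ Icc (0:ℝ) 1, HasDerivAt ψ (φ' s - B) s := by
    intro s hs
    have := (hφ s hs).sub ((hasDerivAt_id s).mul_const B)
    simp only [id, one_mul] at this
    exact this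
  have hanti : AntitoneOn ψ (Icc 0 1) := by
    apply antitoneOn_of_deriv_nonpos (convex_Icc 0 1)
    · exact fun s hs => (hd s hs).continuousAt.continuousWithinAt
    · intro s hs
      rw [interior_Icc] at hs
      exact (hd s (Ioo_subset_Icc_self hs)).differentiableAt.differentiableWithinAt
    · intro s hs
      rw [interior_Icc] at hs
      rw [(hd s (Ioo_subset_Icc_self hs)).deriv]
      linarith [hB s (Ioo_subset_Icc_self hs)]
  have := hanti (left_mem_Icc.2 zero_le_one) (right_mem_Icc.2 zero_le_one) zero_le_one
  simp only [hψ, one_mul, zero_mul] at this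
  linarith

lemma max_mul_self' (r : ℝ) : max r 0 * r = (max r 0) ^ 2 := by
  rcases le_total r 0 with h | h <;> simp [max_eq_right, max_eq_left, h, sq]

/-- Kamke-type order preservation. If `f` is continuously differentiable on an
open convex set `D` with Metzler Jacobian on `D`, `u(t) ≤ ũ(t)` are continuous inputs on
`[0,∞)`, and `x, x̃` are solutions of `ẋ = u(t) + f(x)`, `ẋ̃ = ũ(t) + f(x̃)` staying in `D`
with `x(0) ≤ x̃(0)` entrywise, then `x(t) ≤ x̃(t)` entrywise for all `t ≥ 0`. -/
theorem cooperative_system_order_preservation {n : ℕ}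
    (D : Set (Fin n → ℝ)) (hDopen : IsOpen D) (hDconv : Convex ℝ D)
    (f : (Fin n → ℝ) → (Fin n → ℝ))
    (hf : ContDiffOn ℝ 1 f D)
    (hMetzler : ∀ x ∈ D, ∀ i j, i ≠ j → 0 ≤ fderiv ℝ f x (Pi.single j 1) i)
    (u v : ℝ → Fin n → ℝ)
    (hucont : ContinuousOn u (Set.Ici 0)) (hvcont : ContinuousOn v (Set.Ici 0))
    (huv : ∀ t ≥ (0 : ℝ), ∀ i, u t i ≤ v t i)
    (x y : ℝ → Fin n → ℝ)
    (hxD : ∀ t ≥ (0 : ℝ), x t ∈ D) (hyD : ∀ t ≥ (0 : ℝ), y t ∈ D)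
    (hx : ∀ t ≥ (0 : ℝ), HasDerivAt x (u t + f (x t)) t)
    (hy : ∀ t ≥ (0 : ℝ), HasDerivAt y (v t + f (y t)) t)
    (h0 : ∀ i, x 0 i ≤ y 0 i) :
    ∀ t ≥ (0 : ℝ), ∀ i, x t i ≤ y t i := by
  intro T hT i0
  -- continuity of solutions
  have hxc : ContinuousOn x (Set.Icc 0 T) := fun t ht =>
    (hx t ht.1).continuousAt.continuousWithinAt
  have hyc : ContinuousOn y (Set.Icc 0 T) := fun t ht =>
    (hy t ht.1).continuousAt.continuousWithinAt
  -- the compact set of segment points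
  set γ : ℝ × ℝ → (Fin n → ℝ) := fun p => y p.1 + p.2 • (x p.1 - y p.1) with hγdef
  set K : Set (Fin n → ℝ) := γ '' ((Set.Icc 0 T) ×ˢ (Set.Icc (0:ℝ) 1)) with hKdef
  have hγc : ContinuousOn γ ((Set.Icc 0 T) ×ˢ (Set.Icc (0:ℝ) 1)) := by
    apply ContinuousOn.add
    · exact hyc.comp continuousOn_fst (fun p hp => hp.1)
    · exact continuousOn_snd.smul
        ((hxc.comp continuousOn_fst fun p hp => hp.1).sub
          (hyc.comp continuousOn_fst fun p hp => hp.1))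
  have hKcomp : IsCompact K :=
    (isCompact_Icc.prod isCompact_Icc).image_of_continuousOn hγc
  have hKD : K ⊆ D := by
    rintro _ ⟨⟨t, s⟩, ⟨ht, hs⟩, rfl⟩
    have h1 : (1 - s) • y t + s • x t ∈ D :=
      hDconv (hyD t ht.1) (hxD t ht.1) (by linarith [hs.2]) hs.1 (by ring)
    have h2 : γ (t, s) = (1 - s) • y t + s • x t := by
      funext k
      simp [hγdef, sub_smul, smul_sub]
      ring
    rw [h2]; exact h1
  -- bound on the Jacobian entries on K
  have hfd : ContinuousOn (fderiv ℝ f) D :=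
    hf.continuousOn_fderiv_of_isOpen hDopen le_rfl
  obtain ⟨M₀, hM₀⟩ := hKcomp.exists_bound_of_continuousOn (hfd.mono hKD)
  set M := max M₀ 0 with hMdef
  have hMnn : 0 ≤ M := le_max_right _ _
  have hentry : ∀ z ∈ K, ∀ i j, |fderiv ℝ f z (Pi.single j 1) i| ≤ M := by
    intro z hz i j
    have h1 : ‖fderiv ℝ f z (Pi.single j 1)‖ ≤ ‖fderiv ℝ f z‖ * ‖(Pi.single j 1 : Fin n → ℝ)‖ :=
      (fderiv ℝ f z).le_opNorm _
    have h2 : ‖(Pi.single j 1 : Fin n → ℝ)‖ ≤ 1 := by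
      apply (pi_norm_le_iff_of_nonneg zero_le_one).2
      intro k
      rcases eq_or_ne k j with rfl | hkj
      · simp
      · simp [Pi.single_apply, hkj]
    have h3 : |fderiv ℝ f z (Pi.single j 1) i| ≤ ‖fderiv ℝ f z (Pi.single j 1)‖ := by
      simpa [Real.norm_eq_abs] using norm_le_pi_norm (fderiv ℝ f z (Pi.single j 1)) i
    have h4 : ‖fderiv ℝ f z‖ ≤ M₀ := hM₀ z hz
    have h5 : (0:ℝ) ≤ ‖fderiv ℝ f z‖ := norm_nonneg _
    have h6 : M₀ ≤ M := le_max_left _ _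
    nlinarith
  -- expansion of the differential in coordinates
  have hexp : ∀ z ∈ D, ∀ w : Fin n → ℝ, ∀ i,
      fderiv ℝ f z w i = ∑ j, w j * fderiv ℝ f z (Pi.single j 1) i := by
    intro z hz w i
    have hw : w = ∑ j, w j • (Pi.single j 1 : Fin n → ℝ) := by
      funext k
      simp [Finset.sum_apply, Pi.single_apply]
    conv_lhs => rw [hw]
    rw [map_sum]
    simp [Finset.sum_apply, Pi.smul_apply, smul_eq_mul]
  -- derivative of the difference components
  have hwderiv : ∀ t ∈ Set.Icc (0:ℝ) T, ∀ i, HasDerivAt (fun τ => x τ i - y τ i)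
      ((u t i + f (x t) i) - (v t i + f (y t) i)) t := by
    intro t ht i
    exact ((hasDerivAt_pi.1 (hx t ht.1)) i).sub ((hasDerivAt_pi.1 (hy t ht.1)) i)
  -- derivative of g
  have hgderiv : ∀ t ∈ Set.Icc (0:ℝ) T,
      HasDerivAt (fun τ => ∑ i, (max (x τ i - y τ i) 0) ^ 2)
        (∑ i, 2 * max (x t i - y t i) 0 * ((u t i + f (x t) i) - (v t i + f (y t) i))) t := by
    intro t ht
    apply HasDerivAt.fun_sum
    intro i _
    exact (hasDerivAt_posPartSq _).comp t (hwderiv t ht i)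
  set C : ℝ := 2 * M * (2 * (n:ℝ) + 1) with hCdef
  have hCnn : 0 ≤ C := by positivity
  -- the key differential inequality
  have hbound : ∀ t ∈ Set.Icc (0:ℝ) T,
      (∑ i, 2 * max (x t i - y t i) 0 * ((u t i + f (x t) i) - (v t i + f (y t) i)))
        ≤ C * ∑ i, (max (x t i - y t i) 0) ^ 2 := by
    intro t ht
    have hWnn : ∀ i, (0:ℝ) ≤ max (x t i - y t i) 0 := fun i => le_max_right _ _
    have key : ∀ i, 2 * max (x t i - y t i) 0 * ((u t i + f (x t) i) - (v t i + f (y t) i))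
        ≤ 2 * (M * (max (x t i - y t i) 0) ^ 2
            + M * ∑ j, ((max (x t i - y t i) 0) ^ 2 + (max (x t j - y t j) 0) ^ 2)) := by
      intro i
      have step1 : 2 * max (x t i - y t i) 0 * ((u t i + f (x t) i) - (v t i + f (y t) i))
          ≤ 2 * (max (x t i - y t i) 0 * (f (x t) i - f (y t) i)) := by
        have huvi := huv t ht.1 i
        nlinarith [hWnn i]
      have hzK : ∀ s ∈ Set.Icc (0:ℝ) 1, y t + s • (x t - y t) ∈ K := by
        intro s hs
        exact ⟨(t, s), ⟨ht, hs⟩, rfl⟩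
      have hzD : ∀ s ∈ Set.Icc (0:ℝ) 1, y t + s • (x t - y t) ∈ D := fun s hs => hKD (hzK s hs)
      have hφd : ∀ s ∈ Set.Icc (0:ℝ) 1,
          HasDerivAt (fun s : ℝ => max (x t i - y t i) 0 * f (y t + s • (x t - y t)) i)
            (max (x t i - y t i) 0 * (fderiv ℝ f (y t + s • (x t - y t)) (x t - y t) i)) s := by
        intro s hs
        have hline : HasDerivAt (fun s : ℝ => y t + s • (x t - y t)) (x t - y t) s := by
          simpa using ((hasDerivAt_id s).smul_const (x t - y t)).const_add (y t)
        have hfz : HasFDerivAt f (fderiv ℝ f (y t + s • (x t - y t))) (y t + s • (x t - y t)) :=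
          ((hf.differentiableOn one_ne_zero).differentiableAt
            (hDopen.mem_nhds (hzD s hs))).hasFDerivAt
        have hcomp := hfz.comp_hasDerivAt s hline
        exact HasDerivAt.const_mul (max (x t i - y t i) 0) ((hasDerivAt_pi.1 hcomp) i)
      have hφ'le : ∀ s ∈ Set.Icc (0:ℝ) 1,
          max (x t i - y t i) 0 * (fderiv ℝ f (y t + s • (x t - y t)) (x t - y t) i)
            ≤ M * (max (x t i - y t i) 0) ^ 2
              + M * ∑ j, ((max (x t i - y t i) 0) ^ 2 + (max (x t j - y t j) 0) ^ 2) := by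
        intro s hs
        rw [hexp _ (hzD s hs) _ i, Finset.mul_sum]
        have hterm : ∀ j : Fin n,
            max (x t i - y t i) 0 * ((x t - y t) j * fderiv ℝ f (y t + s • (x t - y t)) (Pi.single j 1) i)
              ≤ (if j = i then M * (max (x t i - y t i) 0) ^ 2 else 0)
                + M * ((max (x t i - y t i) 0) ^ 2 + (max (x t j - y t j) 0) ^ 2) := by
          intro j
          have haM := hentry _ (hzK s hs) i j
          rcases eq_or_ne j i with rfl | hji
          · have h1 : max (x t j - y t j) 0 * (x t j - y t j) = (max (x t j - y t j) 0) ^ 2 :=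
              max_mul_self' _
            have h2 : (x t - y t) j = x t j - y t j := rfl
            have h4 : (if j = j then M * (max (x t j - y t j) 0) ^ 2 else 0)
                = M * (max (x t j - y t j) 0) ^ 2 := by simp
            rw [h2, h4]
            set a := fderiv ℝ f (y t + s • (x t - y t)) (Pi.single j 1) j
            have e0 : max (x t j - y t j) 0 * ((x t j - y t j) * a)
                = a * (max (x t j - y t j) 0) ^ 2 := by rw [← h1]; ring
            have e1 : a * (max (x t j - y t j) 0) ^ 2 ≤ M * (max (x t j - y t j) 0) ^ 2 :=
              mul_le_mul_of_nonneg_right (abs_le.1 haM).2 (sq_nonneg _)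
            have e2 : 0 ≤ M * ((max (x t j - y t j) 0) ^ 2 + (max (x t j - y t j) 0) ^ 2) := by
              positivity
            linarith
          · simp only [if_neg hji]
            have ha0 : 0 ≤ fderiv ℝ f (y t + s • (x t - y t)) (Pi.single j 1) i :=
              hMetzler _ (hzD s hs) i j (Ne.symm hji)
            have haM' : fderiv ℝ f (y t + s • (x t - y t)) (Pi.single j 1) i ≤ M :=
              le_trans (le_abs_self _) haM
            have h2 : (x t - y t) j = x t j - y t j := rfl
            rw [h2]
            have h3 : x t j - y t j ≤ max (x t j - y t j) 0 := le_max_left _ _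
            set a := fderiv ℝ f (y t + s • (x t - y t)) (Pi.single j 1) i
            set Wi := max (x t i - y t i) 0
            set Wj := max (x t j - y t j) 0
            have e1 : Wi * (x t j - y t j) ≤ Wi * Wj := mul_le_mul_of_nonneg_left h3 (hWnn i)
            have e2 : a * (Wi * (x t j - y t j)) ≤ a * (Wi * Wj) :=
              mul_le_mul_of_nonneg_left e1 ha0
            have e3 : a * (Wi * Wj) ≤ M * (Wi * Wj) :=
              mul_le_mul_of_nonneg_right haM' (mul_nonneg (hWnn i) (hWnn j))
            have e4 : M * (Wi * Wj) ≤ M * (Wi ^ 2 + Wj ^ 2) :=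
              mul_le_mul_of_nonneg_left (by nlinarith [sq_nonneg (Wi - Wj)]) hMnn
            nlinarith
        calc (∑ j, max (x t i - y t i) 0 *
                ((x t - y t) j * fderiv ℝ f (y t + s • (x t - y t)) (Pi.single j 1) i))
            ≤ ∑ j, ((if j = i then M * (max (x t i - y t i) 0) ^ 2 else 0)
                + M * ((max (x t i - y t i) 0) ^ 2 + (max (x t j - y t j) 0) ^ 2)) :=
              Finset.sum_le_sum fun j _ => hterm j
          _ = M * (max (x t i - y t i) 0) ^ 2
              + M * ∑ j, ((max (x t i - y t i) 0) ^ 2 + (max (x t j - y t j) 0) ^ 2) := by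
              rw [Finset.sum_add_distrib, Finset.sum_ite_eq' Finset.univ i, Finset.mul_sum]
              simp
      have step2 : max (x t i - y t i) 0 * (f (x t) i - f (y t) i)
          ≤ M * (max (x t i - y t i) 0) ^ 2
            + M * ∑ j, ((max (x t i - y t i) 0) ^ 2 + (max (x t j - y t j) 0) ^ 2) := by
        have hmvt := mvt_aux hφd hφ'le
        have h1 : y t + (1:ℝ) • (x t - y t) = x t := by
          funext k; simp
        have h0' : y t + (0:ℝ) • (x t - y t) = y t := by
          funext k; simp
        rw [h1, h0'] at hmvt
        linarith [hmvt, mul_sub (max (x t i - y t i) 0) (f (x t) i) (f (y t) i)]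
      calc 2 * max (x t i - y t i) 0 * ((u t i + f (x t) i) - (v t i + f (y t) i))
          ≤ 2 * (max (x t i - y t i) 0 * (f (x t) i - f (y t) i)) := step1
        _ ≤ 2 * (M * (max (x t i - y t i) 0) ^ 2
              + M * ∑ j, ((max (x t i - y t i) 0) ^ 2 + (max (x t j - y t j) 0) ^ 2)) := by
            linarith [step2]
    calc (∑ i, 2 * max (x t i - y t i) 0 * ((u t i + f (x t) i) - (v t i + f (y t) i)))
        ≤ ∑ i, 2 * (M * (max (x t i - y t i) 0) ^ 2
            + M * ∑ j, ((max (x t i - y t i) 0) ^ 2 + (max (x t j - y t j) 0) ^ 2)) :=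
          Finset.sum_le_sum fun i _ => key i
      _ = C * ∑ i, (max (x t i - y t i) 0) ^ 2 := by
          simp only [Finset.sum_add_distrib, mul_add, Finset.mul_sum, Finset.sum_const,
            Finset.card_univ, Fintype.card_fin, nsmul_eq_mul, hCdef]
          rw [← Finset.sum_add_distrib, ← Finset.sum_add_distrib]
          apply Finset.sum_congr rfl
          intros
          ring
  -- Gronwall-type argument
  have hhd : ∀ t ∈ Set.Icc (0:ℝ) T,
      HasDerivAt (fun τ => (∑ i, (max (x τ i - y τ i) 0) ^ 2) * Real.exp (-C * τ))
        (((∑ i, 2 * max (x t i - y t i) 0 * ((u t i + f (x t) i) - (v t i + f (y t) i)))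
          - C * ∑ i, (max (x t i - y t i) 0) ^ 2) * Real.exp (-C * t)) t := by
    intro t ht
    have he : HasDerivAt (fun τ : ℝ => Real.exp (-C * τ)) (-C * Real.exp (-C * t)) t := by
      have hl : HasDerivAt (fun τ : ℝ => -C * τ) (-C) t := by
        simpa using (hasDerivAt_id t).const_mul (-C)
      have := (Real.hasDerivAt_exp (-C * t)).comp t hl
      simpa [Function.comp_def, mul_comm] using this
    have := (hgderiv t ht).mul he
    exact this.congr_deriv (by ring)
  have hanti : AntitoneOn (fun τ => (∑ i, (max (x τ i - y τ i) 0) ^ 2) * Real.exp (-C * τ))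
      (Set.Icc 0 T) := by
    apply antitoneOn_of_deriv_nonpos (convex_Icc 0 T)
    · exact fun t ht => (hhd t ht).continuousAt.continuousWithinAt
    · intro t ht
      rw [interior_Icc] at ht
      exact (hhd t (Ioo_subset_Icc_self ht)).differentiableAt.differentiableWithinAt
    · intro t ht
      rw [interior_Icc] at ht
      rw [(hhd t (Ioo_subset_Icc_self ht)).deriv]
      have h1 := hbound t (Ioo_subset_Icc_self ht)
      have h2 := (Real.exp_pos (-C * t)).le
      exact mul_nonpos_of_nonpos_of_nonneg (by linarith) h2
  have hg0 : (∑ i, (max (x 0 i - y 0 i) 0) ^ 2) = 0 := by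
    apply Finset.sum_eq_zero
    intro i _
    have := h0 i
    have : max (x 0 i - y 0 i) 0 = 0 := max_eq_right (by linarith)
    rw [this]; ring
  have hhT : (∑ i, (max (x T i - y T i) 0) ^ 2) * Real.exp (-C * T) ≤ 0 := by
    have := hanti (left_mem_Icc.2 hT) (right_mem_Icc.2 hT) hT
    simpa [hg0] using this
  have hgT : (∑ i, (max (x T i - y T i) 0) ^ 2) ≤ 0 := by
    by_contra hcon
    push_neg at hcon
    nlinarith [Real.exp_pos (-C * T)]
  have hterm : (max (x T i0 - y T i0) 0) ^ 2 ≤ 0 := by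
    have h1 : (max (x T i0 - y T i0) 0) ^ 2 ≤ ∑ i, (max (x T i - y T i) 0) ^ 2 :=
      Finset.single_le_sum (f := fun i => (max (x T i - y T i) 0) ^ 2)
        (fun i _ => sq_nonneg _) (Finset.mem_univ i0)
    linarith
  have hmax0 : max (x T i0 - y T i0) 0 = 0 := by
    have := sq_nonneg (max (x T i0 - y T i0) 0)
    have := pow_eq_zero_iff (n := 2) (by norm_num) |>.1 (le_antisymm hterm this)
    exact this
  have : x T i0 - y T i0 ≤ 0 := by
    have := le_max_left (x T i0 - y T i0) 0
    rw [hmax0] at this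
    linarith
  linarith
end

section
/- Let f : ℝⁿ → ℝⁿ be continuously differentiable on an open set containing the nonnegative orthant ℝⁿ₊, with a Metzler Jacobian there, i.e., ∂f_i/∂x_j(x) ≥ 0 for all i ≠ j. Let u ∈ ℝⁿ₊ be constant, and let x : [0,∞) → ℝⁿ be a differentiable solution of ẋ(t) = u + f(x(t)) with x(0) = 0 and x(t) ∈ ℝⁿ₊ for all t ≥ 0. Then x is entrywise monotonically non-decreasing in time: 0 ≤ s ≤ t implies x(s) ≤ x(t) entrywise. -/
open Matrix Filter Set Topology

private lemma entry_decomp {n : ℕ} (L : (Fin n → ℝ) →L[ℝ] (Fin n → ℝ)) (y : Fin n → ℝ)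
    (i : Fin n) : L y i = ∑ j, y j * L (Pi.single j 1) i := by
  have hy : y = ∑ j, y j • (Pi.single j 1 : Fin n → ℝ) := by
    funext k
    simp [Pi.single_apply, Finset.sum_apply]
  calc L y i = L (∑ j, y j • (Pi.single j 1 : Fin n → ℝ)) i := by rw [← hy]
    _ = (∑ j, y j • L (Pi.single j 1)) i := by rw [map_sum]; simp
    _ = ∑ j, y j * L (Pi.single j 1) i := by simp [Finset.sum_apply]

private lemma deriv_nonneg_of_right (g : ℝ → ℝ) (d a : ℝ) (hg : HasDerivAt g d a)
    (h0 : g a = 0) (hnn : ∀ t, a ≤ t → 0 ≤ g t) : 0 ≤ d := by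
  have hs := hasDerivAt_iff_tendsto_slope.1 hg
  have hs' : Tendsto (slope g a) (𝓝[>] a) (𝓝 d) :=
    hs.mono_left (nhdsWithin_mono a (fun t ht => ne_of_gt ht))
  refine ge_of_tendsto hs' ?_
  filter_upwards [self_mem_nhdsWithin] with t ht
  rw [slope_def_field]
  apply div_nonneg
  · rw [h0, sub_zero]; exact hnn t (le_of_lt ht)
  · have hat : a < t := ht
    linarith

private lemma eventually_lt_left_of_deriv_pos (g : ℝ → ℝ) (d a : ℝ) (hg : HasDerivAt g d a)
    (hd : 0 < d) : ∀ᶠ s in 𝓝[<] a, g s < g a := by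
  have hs := hasDerivAt_iff_tendsto_slope.1 hg
  have hs' : Tendsto (slope g a) (𝓝[<] a) (𝓝 d) :=
    hs.mono_left (nhdsWithin_mono a (fun t ht => ne_of_lt ht))
  have hev := hs'.eventually (eventually_gt_nhds hd)
  filter_upwards [hev, self_mem_nhdsWithin] with s hslope hsa
  rw [slope_def_field] at hslope
  rcases div_pos_iff.mp hslope with ⟨h1, h2⟩ | ⟨h1, h2⟩
  · exfalso; have : s - a < 0 := sub_neg.mpr hsa; linarith
  · linarith

set_option maxHeartbeats 1000000 in
/-- If `f` is continuously differentiable, with Metzler Jacobian, on an open set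
`U` containing the nonnegative orthant, `u ≥ 0` is a constant inflow, and `x` is a solution of
`ẋ = u + f(x)` with `x(0) = 0` that stays in the orthant, then `x` is entrywise monotonically
non-decreasing in time. -/
theorem monotone_flow_trajectory_from_zero_nondecreasing {n : ℕ}
    (U : Set (Fin n → ℝ)) (hUopen : IsOpen U)
    (hUsub : {x : Fin n → ℝ | ∀ i, 0 ≤ x i} ⊆ U)
    (f : (Fin n → ℝ) → (Fin n → ℝ))
    (hf : ContDiffOn ℝ 1 f U)
    (hMetzler : ∀ x ∈ U, ∀ i j, i ≠ j → 0 ≤ fderiv ℝ f x (Pi.single j 1) i)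
    (u : Fin n → ℝ) (hu : ∀ i, 0 ≤ u i)
    (x : ℝ → Fin n → ℝ)
    (hode : ∀ t ≥ (0 : ℝ), HasDerivAt x (u + f (x t)) t)
    (hx0 : x 0 = 0)
    (hxnn : ∀ t ≥ (0 : ℝ), ∀ i, 0 ≤ x t i) :
    ∀ s t : ℝ, 0 ≤ s → s ≤ t → ∀ i, x s i ≤ x t i := by
  set v : ℝ → Fin n → ℝ := fun t => u + f (x t) with hv_def
  have hxU : ∀ t, 0 ≤ t → x t ∈ U := fun t ht => hUsub (hxnn t ht)
  have hfA : ∀ y ∈ U, HasFDerivAt f (fderiv ℝ f y) y := fun y hy =>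
    ((hf.contDiffAt (hUopen.mem_nhds hy)).differentiableAt one_ne_zero).hasFDerivAt
  have hvderiv : ∀ t, 0 ≤ t → HasDerivAt v (fderiv ℝ f (x t) (v t)) t := by
    intro t ht
    have h1 : HasDerivAt (fun s => f (x s)) (fderiv ℝ f (x t) (v t)) t :=
      (hfA (x t) (hxU t ht)).comp_hasDerivAt t (hode t ht)
    simpa [hv_def] using h1.const_add u
  have hv0 : ∀ i, 0 ≤ v 0 i := by
    intro i
    have hgd : HasDerivAt (fun s => x s i) (v 0 i) 0 := (hasDerivAt_pi.1 (hode 0 le_rfl)) i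
    exact deriv_nonneg_of_right _ _ _ hgd (by simp [hx0]) (fun t ht => hxnn t ht i)
  -- main claim: the derivative stays entrywise nonnegative
  have hvnn : ∀ T, 0 ≤ T → ∀ i, 0 ≤ v T i := by
    intro T hT i
    rcases eq_or_lt_of_le hT with h | hTpos
    · rw [← h]; exact hv0 i
    have hxcont : ContinuousOn x (Icc 0 T) := fun t ht =>
      ((hode t ht.1).continuousAt).continuousWithinAt
    have hAcont : ContinuousOn (fun t => fderiv ℝ f (x t)) (Icc 0 T) :=
      (hf.continuousOn_fderiv_of_isOpen hUopen le_rfl).comp hxcont (fun t ht => hxU t ht.1)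
    obtain ⟨M, hM⟩ := (isCompact_Icc).exists_bound_of_continuousOn hAcont
    have hM0 : 0 ≤ M := le_trans (norm_nonneg _) (hM 0 (left_mem_Icc.2 hT))
    set K : ℝ := n * M + 1 with hK_def
    have hentry : ∀ t ∈ Icc (0:ℝ) T, ∀ p q : Fin n,
        |fderiv ℝ f (x t) (Pi.single q 1) p| ≤ M := by
      intro t ht p q
      have hnrm : ‖(Pi.single q 1 : Fin n → ℝ)‖ ≤ 1 := by
        apply (pi_norm_le_iff_of_nonneg (by norm_num)).2
        intro k
        rcases eq_or_ne k q with rfl | hk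
        · simp
        · simp [Pi.single_apply, hk]
      calc |fderiv ℝ f (x t) (Pi.single q 1) p|
          = ‖fderiv ℝ f (x t) (Pi.single q 1) p‖ := (Real.norm_eq_abs _).symm
        _ ≤ ‖fderiv ℝ f (x t) (Pi.single q 1)‖ := norm_le_pi_norm _ p
        _ ≤ ‖fderiv ℝ f (x t)‖ * ‖(Pi.single q 1 : Fin n → ℝ)‖ :=
            (fderiv ℝ f (x t)).le_opNorm _
        _ ≤ M * 1 := mul_le_mul (hM t ht) hnrm (norm_nonneg _) hM0
        _ = M := mul_one M
    have key : ∀ ε > (0:ℝ), ∀ t ∈ Icc (0:ℝ) T, ∀ j, 0 < v t j + ε * Real.exp (K * t) := by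
      intro ε hε
      by_contra hcon
      push_neg at hcon
      obtain ⟨t₀, ht₀, j₀, hj₀⟩ := hcon
      set w : ℝ → Fin n → ℝ := fun t => fun j => v t j + ε * Real.exp (K * t) with hw_def
      set S : Set ℝ := (Icc 0 T) ∩ {t | ∃ j, w t j ≤ 0} with hS_def
      have hSne : S.Nonempty := ⟨t₀, ht₀, j₀, hj₀⟩
      have hwcont : ∀ j, ContinuousOn (fun t => w t j) (Icc 0 T) := by
        intro j
        apply ContinuousOn.add
        · intro t ht
          exact ((hasDerivAt_pi.1 (hvderiv t ht.1)) j).continuousAt.continuousWithinAt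
        · exact Continuous.continuousOn (by continuity)
      have hSclosed : IsClosed S := by
        have hEq : S = ⋃ j, ((Icc 0 T) ∩ (fun t => w t j) ⁻¹' (Iic 0)) := by
          ext t
          simp only [hS_def, Set.mem_inter_iff, Set.mem_setOf_eq, Set.mem_iUnion,
            Set.mem_preimage, Set.mem_Iic]
          tauto
        rw [hEq]
        exact isClosed_iUnion_of_finite fun j =>
          (hwcont j).preimage_isClosed_of_isClosed isClosed_Icc isClosed_Iic
      have hSbdd : BddBelow S := ⟨0, fun s hs => hs.1.1⟩
      set c := sInf S with hc_def
      have hcS : c ∈ S := hSclosed.csInf_mem hSne hSbdd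
      obtain ⟨hcIcc, j, hj⟩ := hcS
      have hc0 : 0 < c := by
        rcases lt_or_eq_of_le hcIcc.1 with h | h
        · exact h
        · exfalso
          have h0 := hv0 j
          rw [← h] at hj
          simp only [hw_def, mul_zero, Real.exp_zero, mul_one] at hj
          linarith
      have hbefore : ∀ s, s ∈ Ico (0:ℝ) c → ∀ k, 0 < w s k := by
        intro s hs k
        by_contra hk
        push_neg at hk
        have hsS : s ∈ S := ⟨⟨hs.1, le_trans hs.2.le hcIcc.2⟩, k, hk⟩
        exact absurd (csInf_le hSbdd hsS) (not_le.2 hs.2)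
      have hwc_nn : ∀ k, 0 ≤ w c k := by
        intro k
        have hne : (𝓝[Ico 0 c] c).NeBot := by
          apply mem_closure_iff_nhdsWithin_neBot.1
          rw [closure_Ico hc0.ne]
          exact right_mem_Icc.2 hc0.le
        have hsub : Ico (0:ℝ) c ⊆ Icc 0 T := fun s hs =>
          ⟨hs.1, le_trans hs.2.le hcIcc.2⟩
        have htend : Tendsto (fun s => w s k) (𝓝[Ico 0 c] c) (𝓝 (w c k)) :=
          ((hwcont k) c hcIcc).mono hsub
        refine ge_of_tendsto htend ?_
        filter_upwards [self_mem_nhdsWithin] with s hs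
        exact (hbefore s hs k).le
      have hwcj : w c j = 0 := le_antisymm hj (hwc_nn j)
      -- derivative of w_j at c
      have h2 : HasDerivAt (fun t : ℝ => ε * Real.exp (K * t)) (ε * (K * Real.exp (K * c))) c := by
        have h3 : HasDerivAt (fun t : ℝ => K * t) (K * 1) c := (hasDerivAt_id c).const_mul K
        have h4 := (Real.hasDerivAt_exp (K * c)).comp c h3
        have h5 := h4.const_mul ε
        rw [show ε * (Real.exp (K * c) * (K * 1)) = ε * (K * Real.exp (K * c)) by ring] at h5
        exact h5
      have hwderiv : HasDerivAt (fun t => w t j)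
          (fderiv ℝ f (x c) (v c) j + ε * (K * Real.exp (K * c))) c := by
        have h1 : HasDerivAt (fun t => v t j) (fderiv ℝ f (x c) (v c) j) c :=
          (hasDerivAt_pi.1 (hvderiv c hc0.le)) j
        exact h1.add h2
      -- positivity of that derivative
      set A := fderiv ℝ f (x c) with hA_def
      have hAvj : A (v c) j = ∑ k, v c k * A (Pi.single k 1) j := entry_decomp A (v c) j
      have hMetz : ∀ k, k ≠ j → 0 ≤ A (Pi.single k 1) j := fun k hk =>
        hMetzler (x c) (hxU c hc0.le) j k (Ne.symm hk)
      have hsum1 : 0 ≤ ∑ k, w c k * A (Pi.single k 1) j := by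
        apply Finset.sum_nonneg
        intro k _
        rcases eq_or_ne k j with rfl | hk
        · rw [hwcj, zero_mul]
        · exact mul_nonneg (hwc_nn k) (hMetz k hk)
      have hsum2 : ∑ k, A (Pi.single k 1) j ≤ n * M := by
        calc ∑ k, A (Pi.single k 1) j ≤ ∑ _k : Fin n, M :=
              Finset.sum_le_sum fun k _ => (abs_le.1 (hentry c hcIcc j k)).2
          _ = n * M := by simp [Finset.sum_const, Finset.card_univ, nsmul_eq_mul]
      have hvw : ∀ k, v c k = w c k - ε * Real.exp (K * c) := fun k => by
        simp [hw_def]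
      have hexp : (0:ℝ) < ε * Real.exp (K * c) := by positivity
      have hAv_ge : -(ε * Real.exp (K * c) * (n * M)) ≤ A (v c) j := by
        rw [hAvj]
        have hsplit : ∑ k, v c k * A (Pi.single k 1) j
            = (∑ k, w c k * A (Pi.single k 1) j)
              - ε * Real.exp (K * c) * ∑ k, A (Pi.single k 1) j := by
          rw [Finset.mul_sum, ← Finset.sum_sub_distrib]
          apply Finset.sum_congr rfl
          intro k _
          rw [hvw k]; ring
        rw [hsplit]
        have h2' : ε * Real.exp (K * c) * (∑ k, A (Pi.single k 1) j)
            ≤ ε * Real.exp (K * c) * (n * M) :=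
          mul_le_mul_of_nonneg_left hsum2 hexp.le
        linarith
      have hdpos : 0 < A (v c) j + ε * (K * Real.exp (K * c)) := by
        have hKey : ε * (K * Real.exp (K * c))
            = ε * Real.exp (K * c) * (n * M) + ε * Real.exp (K * c) := by
          rw [hK_def]; ring
        linarith
      have hev := eventually_lt_left_of_deriv_pos _ _ _ hwderiv hdpos
      have hev2 : ∀ᶠ s in 𝓝[<] c, s ∈ Ico (0:ℝ) c := by
        have hmem : Ioo (0:ℝ) c ∈ 𝓝[<] c :=
          Ioo_mem_nhdsLT_of_mem ⟨hc0, le_refl c⟩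
        filter_upwards [hmem] with s hs
        exact ⟨hs.1.le, hs.2⟩
      obtain ⟨s, hs1, hs2⟩ := (hev.and hev2).exists
      have := hbefore s hs2 j
      rw [hwcj] at hs1
      linarith
    -- let ε → 0
    by_contra hneg
    push_neg at hneg
    have hexpT : (0:ℝ) < Real.exp (K * T) := Real.exp_pos _
    set ε : ℝ := (-v T i) / (2 * Real.exp (K * T)) with hε_def
    have hεpos : 0 < ε := by
      apply div_pos (by linarith) (by linarith)
    have hkey := key ε hεpos T (right_mem_Icc.2 hT) i
    have : ε * Real.exp (K * T) = -v T i / 2 := by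
      rw [hε_def]
      field_simp
    rw [this] at hkey
    linarith
  -- conclude monotonicity
  intro s t hs hst i
  have hmono : MonotoneOn (fun r => x r i) (Icc s t) := by
    apply monotoneOn_of_deriv_nonneg (convex_Icc s t)
    · intro r hr
      exact ((hasDerivAt_pi.1 (hode r (le_trans hs hr.1))) i).continuousAt.continuousWithinAt
    · intro r hr
      rw [interior_Icc] at hr
      exact ((hasDerivAt_pi.1 (hode r (le_trans hs hr.1.le))) i).differentiableAt.differentiableWithinAt
    · intro r hr
      rw [interior_Icc] at hr
      have hr0 : 0 ≤ r := le_trans hs hr.1.le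
      have hd := (hasDerivAt_pi.1 (hode r hr0)) i
      rw [hd.deriv]
      exact hvnn r hr0 i
  exact hmono (left_mem_Icc.2 hst) (right_mem_Icc.2 hst) hst
end

section
/- Let f : ℝⁿ → ℝⁿ be continuously differentiable on an open set containing the nonnegative orthant ℝⁿ₊, with a Metzler Jacobian there, i.e., ∂f_i/∂x_j(x) ≥ 0 for all i ≠ j. Let u ∈ ℝⁿ₊ be constant. Let x, x̃ : [0,∞) → ℝⁿ₊ be differentiable solutions of ẋ = u + f(x), where x(0) = 0 and x̃(0) ∈ ℝⁿ₊ is arbitrary. Then x̃(t) ≥ x(t) entrywise for all t ≥ 0; in particular, if the solution started at 0 is unbounded in time, then every solution remaining in ℝⁿ₊ is unbounded in time. -/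
/-- At a first zero from the right of a nonnegative function, the derivative is nonpositive. -/
lemma deriv_nonpos_at_first_zero {g : ℝ → ℝ} {d t₀ : ℝ} (hd : HasDerivAt g d t₀)
    (ht₀ : 0 < t₀) (hg0 : g t₀ = 0) (hge : ∀ s ∈ Set.Ico (0:ℝ) t₀, 0 ≤ g s) : d ≤ 0 := by
  have h := hasDerivAt_iff_tendsto_slope.1 hd
  have h' : Filter.Tendsto (slope g t₀) (nhdsWithin t₀ (Set.Iio t₀)) (nhds d) :=
    h.mono_left (nhdsWithin_mono _ fun s hs => ne_of_lt hs)
  refine le_of_tendsto h' ?_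
  filter_upwards [Ioo_mem_nhdsLT_of_mem (Set.mem_Ioc.2 ⟨ht₀, le_refl t₀⟩)] with s hs
  rw [slope_def_field, hg0, sub_zero]
  have hgs : 0 ≤ g s := hge s ⟨hs.1.le, hs.2⟩
  exact div_nonpos_of_nonneg_of_nonpos hgs (by linarith [hs.2])

/-- A left-limit nonnegativity lemma. -/
lemma nonneg_at_of_nonneg_left {g : ℝ → ℝ} {t₀ : ℝ} (hc : ContinuousAt g t₀)
    (ht₀ : 0 < t₀) (hge : ∀ s ∈ Set.Ico (0:ℝ) t₀, 0 ≤ g s) : 0 ≤ g t₀ := by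
  have h' : Filter.Tendsto g (nhdsWithin t₀ (Set.Iio t₀)) (nhds (g t₀)) :=
    hc.continuousWithinAt.tendsto
  refine le_of_tendsto_of_tendsto tendsto_const_nhds h' ?_
  filter_upwards [Ioo_mem_nhdsLT_of_mem (Set.mem_Ioc.2 ⟨ht₀, le_refl t₀⟩)] with s hs
  exact hge s ⟨hs.1.le, hs.2⟩

lemma clm_apply_eq_sum_single {n : ℕ} (L : (Fin n → ℝ) →L[ℝ] (Fin n → ℝ)) (v : Fin n → ℝ)
    (i : Fin n) : L v i = ∑ j, v j * L (Pi.single j 1) i := by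
  have hv : v = ∑ j, v j • (Pi.single j 1 : Fin n → ℝ) := by
    have : ∀ j, v j • (Pi.single j 1 : Fin n → ℝ) = Pi.single j (v j) := by
      intro j
      rw [← Pi.single_smul, smul_eq_mul, mul_one]
    simp_rw [this]
    exact (Finset.univ_sum_single v).symm
  conv_lhs => rw [hv]
  rw [map_sum]
  rw [Finset.sum_apply]
  congr 1
  ext j
  rw [map_smul]
  simp [smul_eq_mul]

lemma clm_entry_abs_le {n : ℕ} (L : (Fin n → ℝ) →L[ℝ] (Fin n → ℝ)) (j i : Fin n) :
    |L (Pi.single j 1) i| ≤ ‖L‖ := by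
  have h1 : ‖(Pi.single j 1 : Fin n → ℝ)‖ ≤ 1 := by
    rw [pi_norm_le_iff_of_nonneg zero_le_one]
    intro k
    rcases eq_or_ne k j with h | h
    · subst h; simp
    · simp [Pi.single_apply, h]
  calc |L (Pi.single j 1) i| = ‖(L (Pi.single j 1)) i‖ := (Real.norm_eq_abs _).symm
    _ ≤ ‖L (Pi.single j 1)‖ := norm_le_pi_norm _ i
    _ ≤ ‖L‖ * ‖(Pi.single j 1 : Fin n → ℝ)‖ := L.le_opNorm _
    _ ≤ ‖L‖ * 1 := mul_le_mul_of_nonneg_left h1 (norm_nonneg L)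
    _ = ‖L‖ := mul_one _

lemma clm_dir_lower_bound {n : ℕ} (L : (Fin n → ℝ) →L[ℝ] (Fin n → ℝ)) (v : Fin n → ℝ)
    (i : Fin n) (C m : ℝ) (hC : ‖L‖ ≤ C) (hm : 0 ≤ m)
    (hoff : ∀ j, j ≠ i → 0 ≤ L (Pi.single j 1) i)
    (hv : ∀ j, -m ≤ v j) (hvi : v i = -m) :
    -(n * C * m) ≤ L v i := by
  rw [clm_apply_eq_sum_single]
  have hterm : ∀ j ∈ Finset.univ, -(C * m) ≤ v j * L (Pi.single j 1) i := by
    intro j _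
    have habs : |L (Pi.single j 1) i| ≤ C := (clm_entry_abs_le L j i).trans hC
    rw [abs_le] at habs
    rcases eq_or_ne j i with h | h
    · rw [h] at habs ⊢
      rw [hvi]
      nlinarith [mul_nonneg hm (sub_nonneg.2 habs.2)]
    · have h0 : 0 ≤ L (Pi.single j 1) i := hoff j h
      nlinarith [mul_nonneg hm (sub_nonneg.2 habs.2), mul_nonneg (sub_nonneg.2 (hv j)) h0, mul_nonneg hm (sub_nonneg.2 habs.2)]
  calc -(↑n * C * m) = ∑ _j : Fin n, -(C * m) := by
        rw [Finset.sum_const, Finset.card_univ, Fintype.card_fin, nsmul_eq_mul]; ring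
    _ ≤ ∑ j, v j * L (Pi.single j 1) i := Finset.sum_le_sum hterm


open Matrix

set_option maxHeartbeats 1000000 in
/-- If `f` is continuously differentiable, with Metzler Jacobian, on an open set
`U` containing the nonnegative orthant, `u ≥ 0` is a constant inflow, and `x, x̃` are solutions
of `ẋ = u + f(x)` staying in the orthant with `x(0) = 0` and `x̃(0) ≥ 0` arbitrary, then
`x̃(t) ≥ x(t)` entrywise for all `t ≥ 0`; in particular, if the solution started at `0` is
unbounded in time, then so is `x̃`. -/
theorem monotone_flow_zero_solution_dominated {n : ℕ}
    (U : Set (Fin n → ℝ)) (hUopen : IsOpen U)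
    (hUsub : {x : Fin n → ℝ | ∀ i, 0 ≤ x i} ⊆ U)
    (f : (Fin n → ℝ) → (Fin n → ℝ))
    (hf : ContDiffOn ℝ 1 f U)
    (hMetzler : ∀ x ∈ U, ∀ i j, i ≠ j → 0 ≤ fderiv ℝ f x (Pi.single j 1) i)
    (u : Fin n → ℝ) (hu : ∀ i, 0 ≤ u i)
    (x y : ℝ → Fin n → ℝ)
    (hxode : ∀ t ≥ (0 : ℝ), HasDerivAt x (u + f (x t)) t)
    (hyode : ∀ t ≥ (0 : ℝ), HasDerivAt y (u + f (y t)) t)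
    (hx0 : x 0 = 0)
    (hxnn : ∀ t ≥ (0 : ℝ), ∀ i, 0 ≤ x t i)
    (hynn : ∀ t ≥ (0 : ℝ), ∀ i, 0 ≤ y t i) :
    (∀ t ≥ (0 : ℝ), ∀ i, x t i ≤ y t i) ∧
    ((¬ ∃ M : ℝ, ∀ t ≥ (0 : ℝ), ‖x t‖ ≤ M) → ¬ ∃ M : ℝ, ∀ t ≥ (0 : ℝ), ‖y t‖ ≤ M) := by
  have main : ∀ t ≥ (0:ℝ), ∀ i, x t i ≤ y t i := by
    intro T hT i0
    rcases eq_or_lt_of_le hT with h0 | hTpos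
    · subst h0
      have hx00 : x 0 i0 = 0 := by rw [hx0]; rfl
      linarith [hynn 0 le_rfl i0]
    -- continuity of x, y on [0, T]
    have hxc : ContinuousOn x (Set.Icc 0 T) := fun t ht =>
      ((hxode t ht.1).continuousAt).continuousWithinAt
    have hyc : ContinuousOn y (Set.Icc 0 T) := fun t ht =>
      ((hyode t ht.1).continuousAt).continuousWithinAt
    -- compact set of segments
    set Kc : Set (Fin n → ℝ) :=
      (fun p : ℝ × ℝ => (1 - p.2) • x p.1 + p.2 • y p.1) '' (Set.Icc 0 T ×ˢ Set.Icc 0 1)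
      with hKcdef
    have hKcomp : IsCompact Kc := by
      apply (isCompact_Icc.prod isCompact_Icc).image_of_continuousOn
      apply ContinuousOn.add
      · exact (continuousOn_const.sub continuous_snd.continuousOn).smul
          (hxc.comp continuous_fst.continuousOn (fun p hp => hp.1))
      · exact continuous_snd.continuousOn.smul
          (hyc.comp continuous_fst.continuousOn (fun p hp => hp.1))
    have hKorth : ∀ ξ ∈ Kc, ∀ i, 0 ≤ ξ i := by
      rintro ξ ⟨⟨t, s⟩, ⟨ht, hs⟩, rfl⟩ i
      have hx' := hxnn t ht.1 i
      have hy' := hynn t ht.1 i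
      have hs0 : (0:ℝ) ≤ s := hs.1
      have hs1 : s ≤ 1 := hs.2
      have : (0:ℝ) ≤ (1 - s) * x t i + s * y t i := by nlinarith
      simpa using this
    have hKU : Kc ⊆ U := fun ξ hξ => hUsub (hKorth ξ hξ)
    obtain ⟨C0, hC0⟩ := hKcomp.exists_bound_of_continuousOn
      ((hf.continuousOn_fderiv_of_isOpen hUopen le_rfl).mono hKU)
    set C : ℝ := max C0 0 with hCdef
    have hC : ∀ ξ ∈ Kc, ‖fderiv ℝ f ξ‖ ≤ C := fun ξ hξ => (hC0 ξ hξ).trans (le_max_left _ _)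
    have hCnn : 0 ≤ C := le_max_right _ _
    set K : ℝ := n * C + 1 with hKdef
    -- the ε-perturbed comparison on [0, T]
    have keyε : ∀ ε > (0:ℝ), ∀ t ∈ Set.Icc (0:ℝ) T, ∀ i,
        0 < y t i - x t i + ε * Real.exp (K * t) := by
      intro ε hε
      by_contra hcon
      push_neg at hcon
      obtain ⟨t1, ht1, i1, hi1⟩ := hcon
      set φ : Fin n → ℝ → ℝ := fun j t => y t j - x t j + ε * Real.exp (K * t) with hφdef
      have hφcont : ∀ j, ContinuousOn (φ j) (Set.Icc 0 T) := by
        intro j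
        apply ContinuousOn.add
        · exact ((continuous_apply j).comp_continuousOn hyc).sub
            ((continuous_apply j).comp_continuousOn hxc)
        · exact Continuous.continuousOn
            (continuous_const.mul (Real.continuous_exp.comp (continuous_const.mul continuous_id)))
      have hφderiv : ∀ t ≥ (0:ℝ), ∀ j, HasDerivAt (φ j)
          ((u + f (y t)) j - (u + f (x t)) j + ε * (Real.exp (K * t) * K)) t := by
        intro t ht j
        have hyj : HasDerivAt (fun s => y s j) ((u + f (y t)) j) t :=
          (hasDerivAt_pi.1 (hyode t ht)) j
        have hxj : HasDerivAt (fun s => x s j) ((u + f (x t)) j) t :=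
          (hasDerivAt_pi.1 (hxode t ht)) j
        have hlin : HasDerivAt (fun s : ℝ => K * s) K t := by
          simpa using (hasDerivAt_id t).const_mul K
        have hexp : HasDerivAt (fun s : ℝ => Real.exp (K * s)) (Real.exp (K * t) * K) t :=
          (Real.hasDerivAt_exp (K * t)).comp t hlin
        exact (hyj.sub hxj).add (hexp.const_mul ε)
      set S : Set ℝ := {t ∈ Set.Icc (0:ℝ) T | ∃ j, φ j t ≤ 0} with hSdef
      have hSne : S.Nonempty := ⟨t1, ht1, i1, by simpa [hφdef] using hi1⟩
      have hSclosed : IsClosed S := by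
        have hrw : S = ⋃ j, (Set.Icc (0:ℝ) T ∩ (φ j) ⁻¹' Set.Iic 0) := by
          rw [hSdef]
          ext t
          simp only [Set.mem_setOf_eq, Set.mem_iUnion, Set.mem_inter_iff, Set.mem_preimage,
            Set.mem_Iic]
          tauto
        rw [hrw]
        exact isClosed_iUnion_of_finite fun j =>
          (hφcont j).preimage_isClosed_of_isClosed isClosed_Icc isClosed_Iic
      have hSbdd : BddBelow S := ⟨0, fun t ht => ht.1.1⟩
      set t₀ : ℝ := sInf S with ht₀def
      have ht₀S : t₀ ∈ S := hSclosed.csInf_mem hSne hSbdd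
      obtain ⟨ht₀Icc, j0, hj0⟩ := ht₀S
      have ht₀pos : 0 < t₀ := by
        rcases lt_or_eq_of_le ht₀Icc.1 with h | h
        · exact h
        · exfalso
          have hx00 : x 0 j0 = 0 := by rw [hx0]; rfl
          have h1 : 0 ≤ y 0 j0 := hynn 0 le_rfl j0
          have h2 : φ j0 t₀ = y 0 j0 - x 0 j0 + ε * Real.exp (K * 0) := by rw [← h, hφdef]
          rw [h2, hx00] at hj0
          simp at hj0
          nlinarith
      have hbefore : ∀ s ∈ Set.Ico (0:ℝ) t₀, ∀ j, 0 < φ j s := by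
        intro s hs j
        by_contra hle
        push_neg at hle
        have hsS : s ∈ S := ⟨⟨hs.1, hs.2.le.trans ht₀Icc.2⟩, j, hle⟩
        exact absurd (csInf_le hSbdd hsS) (not_le.2 hs.2)
      have hφt₀nn : ∀ j, 0 ≤ φ j t₀ := fun j =>
        nonneg_at_of_nonneg_left ((hφderiv t₀ ht₀Icc.1 j).continuousAt) ht₀pos
          (fun s hs => (hbefore s hs j).le)
      have hφj0 : φ j0 t₀ = 0 := le_antisymm hj0 (hφt₀nn j0)
      have hD : (u + f (y t₀)) j0 - (u + f (x t₀)) j0 + ε * (Real.exp (K * t₀) * K) ≤ 0 :=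
        deriv_nonpos_at_first_zero (hφderiv t₀ ht₀Icc.1 j0) ht₀pos hφj0
          (fun s hs => (hbefore s hs j0).le)
      -- mean value estimate along the segment from x t₀ to y t₀
      set a : Fin n → ℝ := x t₀ with hadef
      set b : Fin n → ℝ := y t₀ with hbdef
      set m : ℝ := ε * Real.exp (K * t₀) with hmdef
      have hmpos : 0 < m := mul_pos hε (Real.exp_pos _)
      have hba : ∀ j, -m ≤ b j - a j := by
        intro j
        have := hφt₀nn j
        simp only [hφdef] at this
        simp only [hadef, hbdef, hmdef]
        linarith [this]
      have hbai : b j0 - a j0 = -m := by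
        have := hφj0
        simp only [hφdef] at this
        simp only [hadef, hbdef, hmdef]
        linarith [this]
      set p : ℝ → Fin n → ℝ := fun s => a + s • (b - a) with hpdef
      have hpK : ∀ s ∈ Set.Icc (0:ℝ) 1, p s ∈ Kc := by
        intro s hs
        rw [hKcdef]
        refine ⟨(t₀, s), ⟨ht₀Icc, hs⟩, ?_⟩
        show (1 - s) • x t₀ + s • y t₀ = p s
        rw [hpdef]
        simp only [hadef, hbdef]
        rw [sub_smul, one_smul, smul_sub]
        abel
      have hpU : ∀ s ∈ Set.Icc (0:ℝ) 1, p s ∈ U := fun s hs => hKU (hpK s hs)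
      have hpd : ∀ s : ℝ, HasDerivAt p (b - a) s := by
        intro s
        have h1 : HasDerivAt (fun s : ℝ => s • (b - a)) ((1:ℝ) • (b - a)) s :=
          (hasDerivAt_id s).smul_const (b - a)
        have h2 := h1.const_add a
        rw [one_smul] at h2
        exact h2
      have hpc : Continuous p := by
        rw [hpdef]
        exact continuous_const.add (continuous_id.smul continuous_const)
      have hg : ∀ s ∈ Set.Icc (0:ℝ) 1, HasDerivAt (fun s => f (p s) j0)
          ((fderiv ℝ f (p s)) (b - a) j0) s := by
        intro s hs
        have hdiff : DifferentiableAt ℝ f (p s) :=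
          (hf.differentiableOn one_ne_zero).differentiableAt (hUopen.mem_nhds (hpU s hs))
        have hcomp := hdiff.hasFDerivAt.comp_hasDerivAt s (hpd s)
        exact (hasDerivAt_pi.1 hcomp) j0
      have hgb : ∀ s ∈ Set.Icc (0:ℝ) 1, 0 ≤ (fderiv ℝ f (p s)) (b - a) j0 + n * C * m := by
        intro s hs
        have hL := clm_dir_lower_bound (fderiv ℝ f (p s)) (b - a) j0 C m
          (hC _ (hpK s hs)) hmpos.le
          (fun j hj => hMetzler (p s) (hpU s hs) j0 j (Ne.symm hj))
          (fun j => by simpa using hba j)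
          (by simpa using hbai)
        linarith
      have hmono : MonotoneOn (fun s => f (p s) j0 + (↑n * C * m) * s) (Set.Icc (0:ℝ) 1) := by
        apply monotoneOn_of_hasDerivWithinAt_nonneg (convex_Icc (0:ℝ) 1)
          (f' := fun s => (fderiv ℝ f (p s)) (b - a) j0 + ↑n * C * m)
        · apply ContinuousOn.add
          · have hfp : ContinuousOn (fun s => f (p s)) (Set.Icc (0:ℝ) 1) :=
              hf.continuousOn.comp hpc.continuousOn (fun s hs => hpU s hs)
            exact (continuous_apply j0).comp_continuousOn hfp
          · exact Continuous.continuousOn (continuous_const.mul continuous_id)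
        · intro s hs
          have hs' : s ∈ Set.Icc (0:ℝ) 1 := interior_subset hs
          have hlin : HasDerivAt (fun s : ℝ => (↑n * C * m) * s) (↑n * C * m) s := by
            simpa using (hasDerivAt_id s).const_mul (↑n * C * m)
          exact ((hg s hs').add hlin).hasDerivWithinAt
        · intro s hs
          exact hgb s (interior_subset hs)
      have hp0 : p 0 = a := by rw [hpdef]; simp
      have hp1 : p 1 = b := by rw [hpdef]; simp
      have h01 := hmono (Set.mem_Icc.2 ⟨le_rfl, zero_le_one⟩)
        (Set.mem_Icc.2 ⟨zero_le_one, le_rfl⟩) zero_le_one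
      simp only [hp0, hp1, mul_zero, mul_one, add_zero] at h01
      -- h01 : f a j0 ≤ f b j0 + n * C * m
      have hDj : f b j0 - f a j0 + ε * (Real.exp (K * t₀) * K) ≤ 0 := by
        have : (u + f (y t₀)) j0 - (u + f (x t₀)) j0 = f b j0 - f a j0 := by
          simp [hadef, hbdef]
        linarith [hD, this.ge, this.le]
      have hKm : ε * (Real.exp (K * t₀) * K) = K * m := by rw [hmdef]; ring
      rw [hKm, hKdef] at hDj
      nlinarith [hDj, h01, hmpos]
    -- let ε → 0
    by_contra hlt
    push_neg at hlt
    have hdpos : 0 < x T i0 - y T i0 := sub_pos.2 hlt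
    set c : ℝ := Real.exp (K * T) with hcdef
    have hcpos : 0 < c := Real.exp_pos _
    set d : ℝ := x T i0 - y T i0 with hddef
    have hkey := keyε (d / (2 * c)) (by positivity) T ⟨hT, le_refl T⟩ i0
    have hdc : d / (2 * c) * c = d / 2 := by field_simp
    rw [hcdef] at hdc
    nlinarith [hkey, hdc, hdpos]
  refine ⟨main, ?_⟩
  intro hux ⟨M, hM⟩
  apply hux
  refine ⟨M, fun t ht => ?_⟩
  have hM0 : 0 ≤ M := le_trans (norm_nonneg _) (hM 0 le_rfl)
  rw [pi_norm_le_iff_of_nonneg hM0]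
  intro i
  have h1 : 0 ≤ x t i := hxnn t ht i
  have h2 : x t i ≤ y t i := main t ht i
  have h3 : ‖y t i‖ ≤ ‖y t‖ := norm_le_pi_norm _ i
  have h4 : ‖y t‖ ≤ M := hM t ht
  rw [Real.norm_eq_abs, abs_of_nonneg h1]
  rw [Real.norm_eq_abs] at h3
  calc x t i ≤ y t i := h2
    _ ≤ |y t i| := le_abs_self _
    _ ≤ M := h3.trans h4
end

section
/- Let f : ℝⁿ → ℝⁿ be continuously differentiable, let u ∈ ℝⁿ be constant, and let x* satisfy u + f(x*) = 0. Suppose the transpose of the Jacobian of f at x*, M = (∇f(x*))ᵀ, is a compartmental matrix (M_{ij} ≥ 0 for i ≠ j and Σ_j M_{ij} ≤ 0 for all i) and is outflow-connected: in the digraph with an edge (i,j) whenever i ≠ j and M_{ij} > 0, every node either has strictly negative row sum of M or has a directed path to a node with strictly negative row sum of M. Then x* is a locally asymptotically stable equilibrium of ẋ = u + f(x): there exists δ > 0 such that every solution with ‖x(0) − x*‖ < δ is defined for all t ≥ 0 and converges to x* as t → ∞. -/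
set_option maxHeartbeats 1000000

open Matrix Filter Set Topology Finset

def reachN {n : ℕ} (M : Matrix (Fin n) (Fin n) ℝ) : ℕ → Fin n → Prop
  | 0, i => ∑ j, M i j < 0
  | k+1, i => reachN M k i ∨ ∃ j, (i ≠ j ∧ 0 < M i j) ∧ reachN M k j

lemma exists_xi {n : ℕ} (hn : 0 < n) (M : Matrix (Fin n) (Fin n) ℝ)
    (hMetzler : ∀ i j, i ≠ j → 0 ≤ M i j)
    (hrow : ∀ i, ∑ j, M i j ≤ 0)
    (hout : ∀ i : Fin n, ∃ j : Fin n,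
      Relation.ReflTransGen (fun a b => a ≠ b ∧ 0 < M a b) i j ∧ ∑ k, M j k < 0) :
    ∃ ξ : Fin n → ℝ, (∀ i, 0 < ξ i) ∧ (∀ i, ∑ j, M i j * ξ j < 0) := by
  classical
  have hne : Nonempty (Fin n) := ⟨⟨0, hn⟩⟩
  -- reachability with length
  have hreach : ∀ i, ∃ k, reachN M k i := by
    intro i
    obtain ⟨j, hpath, hj⟩ := hout i
    induction hpath using Relation.ReflTransGen.head_induction_on with
    | refl => exact ⟨0, hj⟩
    | head hab _ ih =>
        obtain ⟨k, hk⟩ := ih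
        exact ⟨k + 1, Or.inr ⟨_, hab, hk⟩⟩
  obtain ⟨d, hd0, hstep⟩ : ∃ d : Fin n → ℕ, (∀ i, d i = 0 → ∑ j, M i j < 0) ∧
      (∀ i m, d i = m + 1 → ∃ j, i ≠ j ∧ 0 < M i j ∧ d j ≤ m) := by
    refine ⟨fun i => Nat.find (hreach i), fun i h => ?_, fun i m hm => ?_⟩
    · have := Nat.find_spec (hreach i)
      rw [show Nat.find (hreach i) = 0 from h] at this
      exact this
    · have hspec := Nat.find_spec (hreach i)
      rw [show Nat.find (hreach i) = m + 1 from hm] at hspec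
      rcases hspec with h | ⟨j, hij, hj⟩
      · have hle : Nat.find (hreach i) ≤ m := Nat.find_le h
        have hmm : Nat.find (hreach i) = m + 1 := hm
        omega
      · exact ⟨j, hij.1, hij.2, Nat.find_le hj⟩
  -- constants
  set r : Fin n → ℝ := fun i => -∑ j, M i j with hrdef
  have hrnn : ∀ i, 0 ≤ r i := fun i => by simpa [hrdef] using hrow i
  set Sr : Finset (Fin n) := Finset.univ.filter (fun i => 0 < r i) with hSrdef
  have hSrne : Sr.Nonempty := by
    obtain ⟨j, _, hj⟩ := hout (Classical.arbitrary (Fin n))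
    exact ⟨j, by simp [hSrdef, hrdef]; linarith⟩
  set ρ : ℝ := Sr.inf' hSrne r with hρdef
  have hρpos : 0 < ρ := by
    rw [hρdef, Finset.lt_inf'_iff]
    intro i hi
    exact (Finset.mem_filter.mp hi).2
  have hρle : ∀ i, 0 < r i → ρ ≤ r i := fun i hi =>
    Finset.inf'_le _ (Finset.mem_filter.mpr ⟨Finset.mem_univ i, hi⟩)
  set K : ℝ := Finset.univ.sup' Finset.univ_nonempty
      (fun i => ∑ j ∈ Finset.univ.erase i, M i j) with hKdef
  have hKle : ∀ i, ∑ j ∈ Finset.univ.erase i, M i j ≤ K := fun i => by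
    rw [hKdef]; exact Finset.le_sup' (fun i => ∑ j ∈ Finset.univ.erase i, M i j) (Finset.mem_univ i)
  have hKnn : 0 ≤ K := by
    refine le_trans ?_ (hKle (Classical.arbitrary (Fin n)))
    exact Finset.sum_nonneg fun j hj => hMetzler _ _ (Finset.ne_of_mem_erase hj).symm
  set Sp : Finset (Fin n × Fin n) :=
    (Finset.univ ×ˢ Finset.univ).filter (fun p => p.1 ≠ p.2 ∧ 0 < M p.1 p.2) with hSpdef
  set m0 : ℝ := if h : Sp.Nonempty then Sp.inf' h (fun p => M p.1 p.2) else 1 with hm0def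
  have hm0pos : 0 < m0 := by
    rw [hm0def]
    split_ifs with h
    · rw [Finset.lt_inf'_iff]
      intro p hp
      exact (Finset.mem_filter.mp hp).2.2
    · norm_num
  have hm0le : ∀ a b, a ≠ b → 0 < M a b → m0 ≤ M a b := by
    intro a b hab hpos
    have hmem : (a, b) ∈ Sp := Finset.mem_filter.mpr ⟨by simp, hab, hpos⟩
    rw [hm0def]
    split_ifs with h
    · exact Finset.inf'_le _ hmem
    · exact absurd ⟨_, hmem⟩ h
  set μ : ℝ := min ρ m0 with hμdef
  have hμpos : 0 < μ := lt_min hρpos hm0pos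
  set ε : ℝ := μ / (2 * (μ + K + 1)) with hεdef
  have hden : 0 < 2 * (μ + K + 1) := by nlinarith
  have hεpos : 0 < ε := div_pos hμpos hden
  have hεhalf : ε ≤ 1 / 2 := by
    rw [hεdef, div_le_div_iff₀ hden (by norm_num)]
    nlinarith
  have hε1 : ε < 1 := by linarith
  have hkey : ε * K < μ * (1 - ε) := by
    have h1 : ε * K < μ / 2 := by
      rw [hεdef, div_mul_eq_mul_div, div_lt_div_iff₀ hden (by norm_num)]
      nlinarith
    nlinarith
  have hμρ : μ ≤ ρ := min_le_left _ _
  have hμm0 : μ ≤ m0 := min_le_right _ _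
  clear hεdef hεhalf hden hμdef hm0def hKdef hρdef hSpdef hSrdef
  clear_value ε μ m0 K ρ
  refine ⟨fun i => 1 - ε ^ (d i + 1), fun i => ?_, fun i => ?_⟩
  · have : ε ^ (d i + 1) ≤ ε ^ 1 :=
      pow_le_pow_of_le_one hεpos.le hε1.le (by omega)
    simp only [pow_one] at this
    show (0:ℝ) < 1 - ε ^ (d i + 1)
    linarith
  · -- main inequality
    set Se : ℝ := ∑ j ∈ Finset.univ.erase i, M i j with hSedef
    have hSenn : 0 ≤ Se :=
      Finset.sum_nonneg fun j hj => hMetzler _ _ (Finset.ne_of_mem_erase hj).symm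
    have hMii : M i i = -r i - Se := by
      have := Finset.add_sum_erase Finset.univ (fun j => M i j) (Finset.mem_univ i)
      simp only [hrdef, hSedef]
      linarith [this]
    set P : ℝ := ∑ j ∈ Finset.univ.erase i, M i j * ε ^ (d j + 1) with hPdef
    set T : ℝ := r i * (1 - ε ^ (d i + 1)) +
      (∑ j ∈ Finset.univ.erase i, M i j * (ε ^ (d j + 1) - ε ^ (d i + 1))) with hTdef
    have hsum : ∑ j, M i j * (1 - ε ^ (d j + 1)) = -T := by
      have h1 : ∑ j, M i j * (1 - ε ^ (d j + 1)) =
          M i i * (1 - ε ^ (d i + 1)) +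
          ∑ j ∈ Finset.univ.erase i, M i j * (1 - ε ^ (d j + 1)) :=
        (Finset.add_sum_erase Finset.univ _ (Finset.mem_univ i)).symm
      have h2 : ∑ j ∈ Finset.univ.erase i, M i j * (1 - ε ^ (d j + 1)) = Se - P := by
        rw [hSedef, hPdef, ← Finset.sum_sub_distrib]
        exact Finset.sum_congr rfl fun j _ => by ring
      have h3 : ∑ j ∈ Finset.univ.erase i, M i j * (ε ^ (d j + 1) - ε ^ (d i + 1)) =
          P - Se * ε ^ (d i + 1) := by
        rw [hPdef, hSedef, Finset.sum_mul, ← Finset.sum_sub_distrib]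
        exact Finset.sum_congr rfl fun j _ => by ring
      rw [h1, h2, hMii, hTdef, h3]
      ring
    rw [hsum, neg_lt, neg_zero]
    -- show 0 < T
    rcases Nat.eq_zero_or_pos (d i) with hdi | hdi
    · -- distance 0 : strict outflow
      have hri : 0 < r i := by
        have := hd0 i hdi
        simp only [hrdef]; linarith
      have hrρ : ρ ≤ r i := hρle i hri
      have hbound : ∀ j ∈ Finset.univ.erase i,
          -(M i j * ε ^ (d i + 1)) ≤ M i j * (ε ^ (d j + 1) - ε ^ (d i + 1)) := by
        intro j hj
        have hMij : 0 ≤ M i j := hMetzler _ _ (Finset.ne_of_mem_erase hj).symm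
        nlinarith [pow_nonneg hεpos.le (d j + 1)]
      have hS : -(Se * ε ^ (d i + 1)) ≤
          ∑ j ∈ Finset.univ.erase i, M i j * (ε ^ (d j + 1) - ε ^ (d i + 1)) := by
        rw [hSedef, Finset.sum_mul, ← Finset.sum_neg_distrib]
        exact Finset.sum_le_sum hbound
      have hεdi : ε ^ (d i + 1) = ε := by rw [hdi, pow_one]
      rw [hεdi] at hS
      rw [hTdef, hεdi]
      have hSK : Se ≤ K := hKle i
      have e1 : Se * ε ≤ K * ε := mul_le_mul_of_nonneg_right hSK hεpos.le
      have e2 : μ * (1 - ε) ≤ ρ * (1 - ε) := mul_le_mul_of_nonneg_right hμρ (by linarith)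
      have e3 : ρ * (1 - ε) ≤ r i * (1 - ε) := mul_le_mul_of_nonneg_right hrρ (by linarith)
      have e4 : ε * K = K * ε := mul_comm _ _
      linarith [hkey, hS, e1, e2, e3, e4]
    · -- distance ≥ 1 : use a neighbor closer to outflow
      obtain ⟨m, hdi'⟩ : ∃ m, d i = m + 1 := ⟨d i - 1, (Nat.succ_pred_eq_of_pos hdi).symm⟩
      obtain ⟨j0, hij, hMpos, hdj⟩ := hstep i m hdi'
      have hjmem : j0 ∈ Finset.univ.erase i :=
        Finset.mem_erase.mpr ⟨Ne.symm hij, Finset.mem_univ _⟩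
      have hsplit : ∑ j ∈ Finset.univ.erase i, M i j * (ε ^ (d j + 1) - ε ^ (d i + 1)) =
          M i j0 * (ε ^ (d j0 + 1) - ε ^ (d i + 1)) +
          ∑ j ∈ (Finset.univ.erase i).erase j0,
            M i j * (ε ^ (d j + 1) - ε ^ (d i + 1)) :=
        (Finset.add_sum_erase _ _ hjmem).symm
      -- the good term
      have hgood : m0 * (ε ^ (m + 1) * (1 - ε)) ≤
          M i j0 * (ε ^ (d j0 + 1) - ε ^ (d i + 1)) := by
        have h1 : ε ^ (m + 1) ≤ ε ^ (d j0 + 1) :=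
          pow_le_pow_of_le_one hεpos.le hε1.le (by omega)
        have h2 : ε ^ (d i + 1) = ε ^ (m + 1) * ε := by rw [hdi']; ring
        have h3 : ε ^ (m + 1) * (1 - ε) ≤ ε ^ (d j0 + 1) - ε ^ (d i + 1) := by
          rw [h2]; nlinarith
        have h4 : 0 ≤ ε ^ (m + 1) * (1 - ε) :=
          mul_nonneg (pow_nonneg hεpos.le _) (by linarith)
        exact mul_le_mul (hm0le _ _ hij hMpos) h3 h4 (le_of_lt hMpos)
      -- the rest
      have hrest : -(K * ε ^ (d i + 1)) ≤
          ∑ j ∈ (Finset.univ.erase i).erase j0,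
            M i j * (ε ^ (d j + 1) - ε ^ (d i + 1)) := by
        have hterm : ∀ j ∈ (Finset.univ.erase i).erase j0,
            -(M i j * ε ^ (d i + 1)) ≤ M i j * (ε ^ (d j + 1) - ε ^ (d i + 1)) := by
          intro j hj
          have hMij : 0 ≤ M i j :=
            hMetzler _ _ (Finset.ne_of_mem_erase (Finset.mem_of_mem_erase hj)).symm
          nlinarith [pow_nonneg hεpos.le (d j + 1)]
        have hsum2 : ∑ j ∈ (Finset.univ.erase i).erase j0, M i j ≤ K := by
          refine le_trans ?_ (hKle i)
          refine Finset.sum_le_sum_of_subset_of_nonneg (Finset.erase_subset _ _) ?_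
          intro j hj _
          exact hMetzler _ _ (Finset.ne_of_mem_erase hj).symm
        calc -(K * ε ^ (d i + 1))
            ≤ -((∑ j ∈ (Finset.univ.erase i).erase j0, M i j) * ε ^ (d i + 1)) := by
              have := pow_nonneg hεpos.le (d i + 1)
              nlinarith
          _ = ∑ j ∈ (Finset.univ.erase i).erase j0, -(M i j * ε ^ (d i + 1)) := by
              rw [Finset.sum_mul, Finset.sum_neg_distrib]
          _ ≤ _ := Finset.sum_le_sum hterm
      have hr0 : 0 ≤ r i * (1 - ε ^ (d i + 1)) := by
        have h5 : ε ^ (d i + 1) ≤ 1 := pow_le_one₀ hεpos.le hε1.le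
        have := hrnn i
        nlinarith
      have hεim : ε ^ (d i + 1) = ε ^ (m + 1) * ε := by rw [hdi']; ring
      have hfinal : 0 < m0 * (ε ^ (m + 1) * (1 - ε)) - K * ε ^ (d i + 1) := by
        rw [hεim]
        have hp : 0 < ε ^ (m + 1) := pow_pos hεpos _
        have h6 : ε * K < m0 * (1 - ε) := by
          have := mul_le_mul_of_nonneg_right hμm0 (by linarith : (0:ℝ) ≤ 1 - ε)
          linarith
        have h7 := mul_lt_mul_of_pos_left h6 hp
        ring_nf at h7 ⊢
        linarith
      rw [hTdef, hsplit]
      linarith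

lemma abs_slope_tendsto {g : ℝ → ℝ} {v t a : ℝ} (h : HasDerivAt g v t) :
    ∃ L : ℝ, Tendsto (fun z => (z - t)⁻¹ * (|g z - a| - |g t - a|)) (𝓝[>] t) (𝓝 L) ∧
      (g t = a → L = |v|) ∧ (a < g t → L = v) ∧ (g t < a → L = -v) := by
  have hne : 𝓝[>] t ≤ 𝓝[≠] t := nhdsWithin_mono t fun z hz => ne_of_gt hz
  rcases lt_trichotomy (g t) a with hlt | heqa | hgt
  · refine ⟨-v, ?_, ?_, ?_, fun _ => rfl⟩
    · have hev : (fun z => |g z - a|) =ᶠ[𝓝 t] fun z => a - g z := by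
        have : ∀ᶠ z in 𝓝 t, g z < a := (h.continuousAt.eventually_lt_const hlt)
        filter_upwards [this] with z hz
        rw [abs_of_neg (by linarith), neg_sub]
      have hd : HasDerivAt (fun z => |g z - a|) (-v) t := by
        have : HasDerivAt (fun z => a - g z) (-v) t := by simpa using h.const_sub a
        exact this.congr_of_eventuallyEq hev
      have := (hasDerivAt_iff_tendsto_slope.mp hd).mono_left hne
      refine this.congr fun z => ?_
      simp [slope_def_field, div_eq_inv_mul, abs_of_neg (show g t - a < 0 by linarith)]
    · intro h'; exact absurd h' (by linarith)
    · intro h'; linarith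
  · refine ⟨|v|, ?_, fun _ => rfl, ?_, ?_⟩
    · have hs := (hasDerivAt_iff_tendsto_slope.mp h).mono_left hne
      have habs : Tendsto (fun z => |slope g t z|) (𝓝[>] t) (𝓝 |v|) :=
        (continuous_abs.tendsto v).comp hs
      refine habs.congr' ?_
      filter_upwards [eventually_mem_nhdsWithin] with z (hz : z ∈ Ioi t)
      have hzt : (0:ℝ) < z - t := by simpa using sub_pos.mpr (Set.mem_Ioi.mp hz)
      rw [slope_def_field, abs_div, abs_of_pos hzt, heqa, sub_self, abs_zero, sub_zero,
        div_eq_inv_mul]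
    · intro h'; linarith
    · intro h'; linarith
  · refine ⟨v, ?_, ?_, fun _ => rfl, ?_⟩
    · have hev : (fun z => |g z - a|) =ᶠ[𝓝 t] fun z => g z - a := by
        have : ∀ᶠ z in 𝓝 t, a < g z := (h.continuousAt.eventually_const_lt hgt)
        filter_upwards [this] with z hz
        rw [abs_of_pos (by linarith)]
      have hd : HasDerivAt (fun z => |g z - a|) v t := by
        have : HasDerivAt (fun z => g z - a) v t := h.sub_const a
        exact this.congr_of_eventuallyEq hev
      have := (hasDerivAt_iff_tendsto_slope.mp hd).mono_left hne
      refine this.congr fun z => ?_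
      simp [slope_def_field, div_eq_inv_mul, abs_of_pos (show 0 < g t - a by linarith)]
    · intro h'; exact absurd h' (by linarith)
    · intro h'; linarith

/-- Let `x*` be an equilibrium of `ẋ = u + f(x)` with `f` continuously
differentiable. If `M = (∇f(x*))ᵀ` is a compartmental matrix which is outflow-connected, then
`x*` is locally asymptotically stable: there is `δ > 0` such that every solution starting within
distance `δ` of `x*` converges to `x*` as `t → ∞`. -/
theorem monotone_flow_network_local_asymptotic_stability {n : ℕ}
    (f : (Fin n → ℝ) → (Fin n → ℝ))
    (hf : ContDiff ℝ 1 f)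
    (u xstar : Fin n → ℝ)
    (heq : u + f xstar = 0)
    (M : Matrix (Fin n) (Fin n) ℝ)
    (hMdef : ∀ i j, M i j = fderiv ℝ f xstar (Pi.single i 1) j)
    (hMetzler : ∀ i j, i ≠ j → 0 ≤ M i j)
    (hrow : ∀ i, ∑ j, M i j ≤ 0)
    (hout : ∀ i : Fin n, ∃ j : Fin n,
      Relation.ReflTransGen (fun a b => a ≠ b ∧ 0 < M a b) i j ∧ ∑ k, M j k < 0) :
    ∃ δ > (0 : ℝ), ∀ x : ℝ → Fin n → ℝ,
      (∀ t ≥ (0 : ℝ), HasDerivAt x (u + f (x t)) t) →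
      ‖x 0 - xstar‖ < δ →
      Tendsto x atTop (nhds xstar) := by
  classical
  rcases Nat.eq_zero_or_pos n with hn0 | hn
  · subst hn0
    refine ⟨1, one_pos, fun x _ _ => ?_⟩
    have hxx : x = fun _ => xstar := funext fun t => funext fun i => i.elim0
    rw [hxx]
    exact tendsto_const_nhds
  -- nontrivial case
  have hne : Nonempty (Fin n) := ⟨⟨0, hn⟩⟩
  set A := fderiv ℝ f xstar with hAdef
  have hA : HasFDerivAt f A xstar := (hf.differentiable one_ne_zero xstar).hasFDerivAt
  have hAz : ∀ z : Fin n → ℝ, ∀ i, A z i = ∑ j, z j * M j i := by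
    intro z i
    have hz : (∑ j, z j • (Pi.single j 1 : Fin n → ℝ)) = z := by
      ext k
      simp [Pi.single_apply]
    have h1 : A z = ∑ j, z j • A (Pi.single j 1) := by
      conv_lhs => rw [← hz]
      rw [map_sum]
      exact Finset.sum_congr rfl fun j _ => A.map_smul _ _
    rw [h1, Finset.sum_apply]
    exact Finset.sum_congr rfl fun j _ => by
      rw [Pi.smul_apply, smul_eq_mul, hMdef j i]
  obtain ⟨ξ, hξpos, hξM⟩ := exists_xi hn M hMetzler hrow hout
  set Ξ : ℝ := ∑ i, ξ i with hΞdef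
  have hΞpos : 0 < Ξ := Finset.sum_pos (fun i _ => hξpos i) Finset.univ_nonempty
  set ξmin : ℝ := Finset.univ.inf' Finset.univ_nonempty ξ with hξmindef
  have hξminpos : 0 < ξmin := by
    rw [hξmindef, Finset.lt_inf'_iff]; exact fun i _ => hξpos i
  have hξminle : ∀ i, ξmin ≤ ξ i := fun i => by
    rw [hξmindef]; exact Finset.inf'_le _ (Finset.mem_univ i)
  clear hξmindef
  clear_value ξmin
  have hcex : ∃ c : ℝ, 0 < c ∧ ∀ j, ∑ i, M j i * ξ i ≤ -c * ξ j := by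
    refine ⟨Finset.univ.inf' Finset.univ_nonempty
      (fun j => -(∑ i, M j i * ξ i) / ξ j), ?_, ?_⟩
    · rw [Finset.lt_inf'_iff]
      intro j _
      exact div_pos (by linarith [hξM j]) (hξpos j)
    · intro j
      have h1 : Finset.univ.inf' Finset.univ_nonempty
          (fun j => -(∑ i, M j i * ξ i) / ξ j) ≤ -(∑ i, M j i * ξ i) / ξ j :=
        Finset.inf'_le _ (Finset.mem_univ j)
      rw [le_div_iff₀ (hξpos j)] at h1
      nlinarith [hξpos j]
  obtain ⟨c, hcpos, hcle⟩ := hcex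
  set η : ℝ := c * ξmin / (2 * Ξ) with hηdef
  have hηpos : 0 < η := by
    apply div_pos (by nlinarith) (by linarith)
  -- little-o bound on the remainder
  obtain ⟨ε', hε'pos, hball⟩ := Metric.eventually_nhds_iff.mp (hA.isLittleO.def hηpos)
  set δ₀ : ℝ := ε' / 2 with hδ₀def
  have hδ₀pos : 0 < δ₀ := by positivity
  have hrem : ∀ y : Fin n → ℝ, ‖y - xstar‖ ≤ δ₀ →
      ‖f y - f xstar - A (y - xstar)‖ ≤ η * ‖y - xstar‖ := by
    intro y hy
    have hd : dist y xstar < ε' := by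
      rw [dist_eq_norm]
      rw [hδ₀def] at hy
      linarith
    exact hball hd
  clear hδ₀def
  clear_value δ₀
  set δ : ℝ := ξmin * δ₀ / (Ξ + 1) with hδdef
  have hδpos : 0 < δ := by
    apply div_pos (by nlinarith) (by linarith)
  refine ⟨δ, hδpos, fun x hx hx0 => ?_⟩
  set V : (Fin n → ℝ) → ℝ := fun z => ∑ i, ξ i * |z i - xstar i| with hVdef
  have hg : ∀ t, V (x t) = ∑ i, ξ i * |x t i - xstar i| := fun t => rfl
  set g : ℝ → ℝ := fun t => V (x t) with hgdef
  have hVnonneg : ∀ z, 0 ≤ V z := fun z =>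
    Finset.sum_nonneg fun i _ => mul_nonneg (hξpos i).le (abs_nonneg _)
  have hVlb : ∀ z : Fin n → ℝ, ξmin * ‖z - xstar‖ ≤ V z := by
    intro z
    rw [mul_comm, ← le_div_iff₀ hξminpos,
      pi_norm_le_iff_of_nonneg (div_nonneg (hVnonneg z) hξminpos.le)]
    intro i
    rw [Pi.sub_apply, Real.norm_eq_abs, le_div_iff₀ hξminpos]
    calc |z i - xstar i| * ξmin ≤ ξ i * |z i - xstar i| := by
          nlinarith [hξminle i, abs_nonneg (z i - xstar i), hξminpos]
      _ ≤ V z := Finset.single_le_sum (f := fun k => ξ k * |z k - xstar k|)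
          (fun k _ => mul_nonneg (hξpos k).le (abs_nonneg _)) (Finset.mem_univ i)
  have hVub : ∀ z : Fin n → ℝ, V z ≤ Ξ * ‖z - xstar‖ := by
    intro z
    rw [hΞdef, Finset.sum_mul]
    refine Finset.sum_le_sum fun i _ => ?_
    have h1 : |z i - xstar i| ≤ ‖z - xstar‖ := by
      have := norm_le_pi_norm (z - xstar) i
      simpa [Real.norm_eq_abs] using this
    exact mul_le_mul_of_nonneg_left h1 (hξpos i).le
  have hVcont : Continuous V := by
    apply continuous_finset_sum
    intro i _
    exact continuous_const.mul (((continuous_apply i).sub continuous_const).abs)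
  have hxcont : ContinuousOn x (Set.Ici 0) := fun t ht =>
    (hx t ht).continuousAt.continuousWithinAt
  have hgcont : ContinuousOn g (Set.Ici 0) := hVcont.comp_continuousOn hxcont
  -- the slope estimate
  have hslope : ∀ t : ℝ, 0 ≤ t → ∃ L : ℝ,
      Tendsto (fun z => (z - t)⁻¹ * (g z - g t)) (𝓝[>] t) (𝓝 L) ∧
      (‖x t - xstar‖ ≤ δ₀ → L ≤ -(c/2) * g t) := by
    intro t ht
    set v : Fin n → ℝ := u + f (x t) with hvdef
    have hxt : HasDerivAt x v t := hx t ht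
    have hcomp : ∀ i, HasDerivAt (fun s => x s i) (v i) t := by
      intro i
      have h1 := (ContinuousLinearMap.proj (R := ℝ) (φ := fun _ : Fin n => ℝ)
        i).hasFDerivAt.comp_hasDerivAt t hxt
      exact h1
    have hLi := fun i => abs_slope_tendsto (a := xstar i) (hcomp i)
    choose L hLt hL0 hLp hLm using hLi
    refine ⟨∑ i, ξ i * L i, ?_, ?_⟩
    · have htend : Tendsto (fun z => ∑ i, ξ i *
          ((z - t)⁻¹ * (|x z i - xstar i| - |x t i - xstar i|))) (𝓝[>] t)
          (𝓝 (∑ i, ξ i * L i)) :=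
        tendsto_finset_sum _ fun i _ => (hLt i).const_mul _
      refine htend.congr fun z => ?_
      rw [hgdef]
      simp only [hg]
      rw [← Finset.sum_sub_distrib, Finset.mul_sum]
      exact Finset.sum_congr rfl fun i _ => by ring
    · intro hnear
      set w : Fin n → ℝ := fun j => x t j - xstar j with hwdef
      have hwj : ∀ j, w j = x t j - xstar j := fun j => rfl
      set rv : Fin n → ℝ := f (x t) - f xstar - A (x t - xstar) with hrvdef
      have hu : u = -f xstar := eq_neg_of_add_eq_zero_left heq
      have hvi : ∀ i, v i = (∑ j, w j * M j i) + rv i := by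
        intro i
        have hrvi : rv i = f (x t) i - f xstar i - ∑ j, w j * M j i := by
          rw [hrvdef]
          simp only [Pi.sub_apply]
          rw [hAz]
          simp only [Pi.sub_apply]
          rfl
        have hvi' : v i = -f xstar i + f (x t) i := by
          rw [hvdef, Pi.add_apply, hu, Pi.neg_apply]
        rw [hrvi, hvi']
        ring
      have hLbound : ∀ i, L i ≤ (∑ j, M j i * |w j|) + |rv i| := by
        intro i
        have habs : ∀ j, j ≠ i → w j * M j i ≤ M j i * |w j| ∧
            -(w j * M j i) ≤ M j i * |w j| := by
          intro j hji
          have hM := hMetzler j i hji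
          constructor
          · nlinarith [le_abs_self (w j)]
          · nlinarith [neg_abs_le (w j)]
        rcases lt_trichotomy (x t i) (xstar i) with hlt | heq0 | hgt
        · rw [hLm i hlt, hvi i]
          have hsum : ∑ j, -(w j * M j i) ≤ ∑ j, M j i * |w j| := by
            refine Finset.sum_le_sum fun j _ => ?_
            rcases eq_or_ne j i with rfl | hji
            · have hwi : w j < 0 := by rw [hwj]; linarith
              rw [abs_of_neg hwi]; nlinarith
            · exact (habs j hji).2
          have hns : -((∑ j, w j * M j i) + rv i) =
              (∑ j, -(w j * M j i)) + -(rv i) := by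
            rw [Finset.sum_neg_distrib]; ring
          rw [hns]
          have := neg_abs_le (rv i)
          linarith
        · rw [hL0 i heq0, hvi i]
          have h1 : |(∑ j, w j * M j i) + rv i| ≤ |∑ j, w j * M j i| + |rv i| :=
            abs_add_le _ _
          have h2 : |∑ j, w j * M j i| ≤ ∑ j, |w j * M j i| :=
            Finset.abs_sum_le_sum_abs _ _
          have h3 : ∑ j, |w j * M j i| ≤ ∑ j, M j i * |w j| := by
            refine Finset.sum_le_sum fun j _ => ?_
            rcases eq_or_ne j i with rfl | hji
            · have hwi : w j = 0 := by rw [hwj]; linarith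
              simp [hwi]
            · rw [abs_mul, abs_of_nonneg (hMetzler j i hji), mul_comm]
          linarith
        · rw [hLp i hgt, hvi i]
          have hsum : ∑ j, w j * M j i ≤ ∑ j, M j i * |w j| := by
            refine Finset.sum_le_sum fun j _ => ?_
            rcases eq_or_ne j i with rfl | hji
            · have hwi : 0 < w j := by rw [hwj]; linarith
              rw [abs_of_pos hwi]; nlinarith
            · exact (habs j hji).1
          have := le_abs_self (rv i)
          linarith
      -- sum up
      have hstep1 : ∑ i, ξ i * L i ≤
          (∑ i, ∑ j, ξ i * (M j i * |w j|)) + ∑ i, ξ i * |rv i| := by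
        rw [← Finset.sum_add_distrib]
        refine Finset.sum_le_sum fun i _ => ?_
        rw [← Finset.mul_sum, ← mul_add]
        exact mul_le_mul_of_nonneg_left (hLbound i) (hξpos i).le
      have hstep2 : (∑ i, ∑ j, ξ i * (M j i * |w j|)) ≤ -c * g t := by
        rw [Finset.sum_comm]
        have h1 : ∀ j, ∑ i, ξ i * (M j i * |w j|) = (∑ i, M j i * ξ i) * |w j| := by
          intro j
          rw [Finset.sum_mul]
          exact Finset.sum_congr rfl fun i _ => by ring
        calc ∑ j, ∑ i, ξ i * (M j i * |w j|) = ∑ j, (∑ i, M j i * ξ i) * |w j| :=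
              Finset.sum_congr rfl fun j _ => h1 j
          _ ≤ ∑ j, (-c * ξ j) * |w j| := Finset.sum_le_sum fun j _ =>
              mul_le_mul_of_nonneg_right (hcle j) (abs_nonneg _)
          _ = -c * g t := by
            rw [hgdef]
            simp only [hg]
            rw [Finset.mul_sum]
            exact Finset.sum_congr rfl fun j _ => by rw [hwj]; ring
      have hrv_norm : ‖rv‖ ≤ η * ‖x t - xstar‖ := by
        rw [hrvdef]; exact hrem (x t) hnear
      have hxt_norm : ‖x t - xstar‖ ≤ g t / ξmin := by
        rw [le_div_iff₀ hξminpos]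
        have h1 := hVlb (x t)
        rw [hgdef]
        linarith
      have hstep3 : ∑ i, ξ i * |rv i| ≤ Ξ * (η * (g t / ξmin)) := by
        calc ∑ i, ξ i * |rv i| ≤ ∑ i, ξ i * ‖rv‖ :=
              Finset.sum_le_sum fun i _ => mul_le_mul_of_nonneg_left
                (by simpa [Real.norm_eq_abs] using norm_le_pi_norm rv i) (hξpos i).le
          _ = Ξ * ‖rv‖ := by rw [← Finset.sum_mul, hΞdef]
          _ ≤ Ξ * (η * (g t / ξmin)) := by
              refine mul_le_mul_of_nonneg_left ?_ hΞpos.le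
              calc ‖rv‖ ≤ η * ‖x t - xstar‖ := hrv_norm
                _ ≤ η * (g t / ξmin) := mul_le_mul_of_nonneg_left hxt_norm hηpos.le
      have hstep4 : Ξ * (η * (g t / ξmin)) = (c/2) * g t := by
        rw [hηdef]
        field_simp
      have hgnn : 0 ≤ g t := hVnonneg (x t)
      rw [hstep4] at hstep3
      linarith
  -- Gronwall
  have hgron : ∀ b : ℝ, 0 ≤ b → (∀ s ∈ Set.Ico (0:ℝ) b, ‖x s - xstar‖ ≤ δ₀) →
      ∀ t ∈ Set.Icc (0:ℝ) b, g t ≤ g 0 * Real.exp (-(c/2) * t) := by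
    intro b hb hsmall t ht
    have hmain := le_gronwallBound_of_liminf_deriv_right_le
      (f := g) (f' := fun s => -(c/2) * g s) (δ := g 0) (K := -(c/2)) (ε := 0)
      (a := 0) (b := b)
      (hgcont.mono (fun s hs => hs.1))
      (fun s hs r hr => by
        obtain ⟨L, hLt, hLle⟩ := hslope s hs.1
        have hLr : L < r := lt_of_le_of_lt (hLle (hsmall s hs)) hr
        exact (hLt.eventually_lt_const hLr).frequently)
      le_rfl
      (fun s hs => by simp)
    have h2 := hmain t ht
    rwa [sub_zero, gronwallBound_ε0] at h2
  have hnormsmall : ∀ s, g s < ξmin * δ₀ → ‖x s - xstar‖ ≤ δ₀ := by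
    intro s hs
    have h1 := hVlb (x s)
    rw [hgdef] at hs
    nlinarith [hξminpos]
  have hg0 : g 0 < ξmin * δ₀ := by
    have h1 := hVub (x 0)
    have h2 : Ξ * ‖x 0 - xstar‖ < Ξ * δ := by
      exact mul_lt_mul_of_pos_left hx0 hΞpos
    show V (x 0) < ξmin * δ₀
    rw [hδdef] at h2
    have h3 : Ξ * (ξmin * δ₀ / (Ξ + 1)) < ξmin * δ₀ := by
      rw [div_eq_inv_mul, ← mul_assoc]
      have h4 : Ξ * (Ξ + 1)⁻¹ < 1 := by
        rw [mul_inv_lt_iff₀ (by linarith)]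
        linarith
      have h5 : (0:ℝ) < ξmin * δ₀ := by positivity
      nlinarith [mul_lt_mul_of_pos_right h4 h5]
    linarith
  have hsmall_all : ∀ t, 0 ≤ t → g t < ξmin * δ₀ := by
    by_contra hcon
    push_neg at hcon
    obtain ⟨t1, ht1, hget⟩ := hcon
    set B : Set ℝ := Set.Ici (0:ℝ) ∩ g ⁻¹' Set.Ici (ξmin * δ₀) with hBdef
    have hBne : B.Nonempty := ⟨t1, ht1, hget⟩
    have hBbdd : BddBelow B := ⟨0, fun s hs => hs.1⟩
    have hBclosed : IsClosed B :=
      hgcont.preimage_isClosed_of_isClosed isClosed_Ici isClosed_Ici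
    have ht₀B : sInf B ∈ B := hBclosed.csInf_mem hBne hBbdd
    have ht₀0 : 0 ≤ sInf B := ht₀B.1
    have hgt₀ : ξmin * δ₀ ≤ g (sInf B) := ht₀B.2
    have hlt : ∀ s ∈ Set.Ico (0:ℝ) (sInf B), ‖x s - xstar‖ ≤ δ₀ := by
      intro s hs
      refine hnormsmall s ?_
      by_contra h
      push_neg at h
      exact absurd (csInf_le hBbdd ⟨hs.1, h⟩) (not_le.mpr hs.2)
    have hfin := hgron (sInf B) ht₀0 hlt (sInf B) ⟨ht₀0, le_rfl⟩
    have hexp : Real.exp (-(c/2) * sInf B) ≤ 1 := by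
      rw [Real.exp_le_one_iff]
      nlinarith
    have hg0nn : 0 ≤ g 0 := hVnonneg (x 0)
    nlinarith
  have hdecay : ∀ t, 0 ≤ t → g t ≤ g 0 * Real.exp (-(c/2) * t) := fun t ht =>
    hgron t ht (fun s hs => hnormsmall s (hsmall_all s hs.1)) t ⟨ht, le_rfl⟩
  -- conclude convergence
  rw [tendsto_iff_norm_sub_tendsto_zero]
  have hub : ∀ t, 0 ≤ t → ‖x t - xstar‖ ≤ (g 0 / ξmin) * Real.exp (-(c/2) * t) := by
    intro t ht
    have h1 := hVlb (x t)
    have h2 := hdecay t ht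
    rw [hgdef] at h2
    rw [div_mul_eq_mul_div, le_div_iff₀ hξminpos]
    calc ‖x t - xstar‖ * ξmin = ξmin * ‖x t - xstar‖ := mul_comm _ _
      _ ≤ V (x t) := h1
      _ ≤ g 0 * Real.exp (-(c/2) * t) := h2
  have hlim : Tendsto (fun t => (g 0 / ξmin) * Real.exp (-(c/2) * t)) atTop (𝓝 0) := by
    have h1 : Tendsto (fun t : ℝ => -(c/2) * t) atTop atBot := by
      apply Tendsto.const_mul_atTop_of_neg (by linarith : -(c/2) < 0) tendsto_id
    have h2 : Tendsto (fun t : ℝ => Real.exp (-(c/2) * t)) atTop (𝓝 0) :=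
      Real.tendsto_exp_atBot.comp h1
    simpa using h2.const_mul (g 0 / ξmin)
  refine squeeze_zero' ?_ ?_ hlim
  · filter_upwards [eventually_ge_atTop (0:ℝ)] with t _
    exact norm_nonneg _
  · filter_upwards [eventually_ge_atTop (0:ℝ)] with t ht
    exact hub t ht
end
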